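/- arXiv:1810.00242 — 4 statements merged into one kernel-verified Lean document; each statement's English description precedes it below -/
import Mathlib

section
/- Let r > 0. Given pointed ℝ-trees (M₀,d₀,p₀), (M₁,d₁,p₁), (M₂,d₂,p₂), each of radius ≤ r, and basepoint-preserving isometric embeddings f₁ : M₀ → M₁ and f₂ : M₀ → M₂, there exist a complete pointed ℝ-tree (N,d,q) of radius ≤ r and basepoint-preserving isometric embeddings g₁ : M₁ → N and g₂ : M₂ → N such that g₁ ∘ f₁ = g₂ ∘ f₂. -/
open Set Metric

/-- A geodesic segment in a metric space: the image of an isometric embedding of a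
closed real interval `[0, ℓ]`, going from `a` to `b`. -/
def IsGeodesicSegmentFromTo {M : Type*} [MetricSpace M] (s : Set M) (a b : M) : Prop :=
  ∃ ℓ : ℝ, 0 ≤ ℓ ∧ ∃ γ : ℝ → M,
    (∀ u ∈ Set.Icc (0:ℝ) ℓ, ∀ v ∈ Set.Icc (0:ℝ) ℓ, dist (γ u) (γ v) = |u - v|) ∧
    γ 0 = a ∧ γ ℓ = b ∧ s = γ '' Set.Icc 0 ℓ

/-- An arc from `a` to `b`: the (injective, continuous) image of a closed real
interval `[0, ℓ]`; a single point when `a = b`. -/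
def IsArcFromTo {M : Type*} [MetricSpace M] (s : Set M) (a b : M) : Prop :=
  ∃ ℓ : ℝ, 0 ≤ ℓ ∧ ∃ γ : ℝ → M,
    ContinuousOn γ (Set.Icc 0 ℓ) ∧ Set.InjOn γ (Set.Icc 0 ℓ) ∧
    γ 0 = a ∧ γ ℓ = b ∧ s = γ '' Set.Icc 0 ℓ

/-- An ℝ-tree: a metric space in which any two points are joined by a unique arc,
and that arc is a geodesic segment. -/
def IsRTree (M : Type*) [MetricSpace M] : Prop :=
  ∀ a b : M, ∃ s : Set M,
    IsArcFromTo s a b ∧ IsGeodesicSegmentFromTo s a b ∧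
    ∀ t : Set M, IsArcFromTo t a b → t = s

/-- The geodesic segment `[a, b]` in an ℝ-tree: the unique arc from `a` to `b`. -/
noncomputable def seg {M : Type*} [MetricSpace M] (h : IsRTree M) (a b : M) : Set M :=
  (h a b).choose

universe u

/-- A distance-preserving map (isometric embedding) between metric spaces. -/
def IsIsometric {A B : Type*} [MetricSpace A] [MetricSpace B] (f : A → B) : Prop :=
  ∀ x y : A, dist (f x) (f y) = dist x y

/-- The pointed metric space `(A, p)` has radius at most `r`. -/
def RadiusLE (A : Type*) [MetricSpace A] (p : A) (r : ℝ) : Prop :=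
  ∀ x : A, dist p x ≤ r

/-- Metric completeness, as a plain predicate. -/
def IsCompleteMS (A : Type*) [MetricSpace A] : Prop :=
  CompleteSpace A

namespace S7
open Filter Topology

variable {X : Type*} [PseudoMetricSpace X]

/-- Four point condition (0-hyperbolicity). -/
def FourPt (X : Type*) [PseudoMetricSpace X] : Prop :=
  ∀ a b c d : X, dist a b + dist c d ≤ max (dist a c + dist b d) (dist a d + dist b c)

/-- Gromov product. -/
noncomputable def gr (p x y : X) : ℝ := (dist p x + dist p y - dist x y) / 2

theorem gr_nonneg (p x y : X) : 0 ≤ gr p x y := by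
  simp only [gr]
  linarith [dist_triangle x p y, dist_comm x p]

theorem gr_le_left (p x y : X) : gr p x y ≤ dist p x := by
  simp only [gr]
  linarith [dist_triangle p x y]

theorem gr_le_right (p x y : X) : gr p x y ≤ dist p y := by
  simp only [gr]
  linarith [dist_triangle p y x, dist_comm x y]

theorem gr_comm (p x y : X) : gr p x y = gr p y x := by
  simp only [gr]; rw [dist_comm x y]; ring

/-- `FourPt` gives the Gromov product inequality at any base point. -/
theorem FourPt.gromov (H : FourPt X) (p x y z : X) :
    min (gr p x z) (gr p y z) ≤ gr p x y := by
  have h := H x y p z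
  rcases le_max_iff.mp h with h' | h'
  · apply min_le_of_right_le
    simp only [gr]
    linarith [h', dist_comm x p, dist_comm y p, dist_comm y z]
  · apply min_le_of_left_le
    simp only [gr]
    linarith [h', dist_comm x p, dist_comm y p, dist_comm x z]

/-- Pure arithmetic lemma: base change for 0-hyperbolicity, 6 Gromov products. -/
theorem six_var {a b c d e f : ℝ}
    (h1 : min b d ≤ a) (h2 : min c e ≤ a)
    (h5 : min a e ≤ c)
    (h9 : min a c ≤ e)
    (h11 : min b c ≤ f) (h12 : min d e ≤ f) :
    min (b + e) (c + d) ≤ a + f := by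
  by_contra hcon
  push_neg at hcon
  rw [lt_min_iff] at hcon
  obtain ⟨hbe, hcd⟩ := hcon
  rcases min_le_iff.mp h1 with hba | hda
  · -- b ≤ a
    have hfe : f < e := by linarith
    have hdf : d ≤ f := by rcases min_le_iff.mp h12 with h | h <;> linarith
    have hac : a < c := by linarith
    have hea : e ≤ a := by rcases min_le_iff.mp h2 with h | h <;> linarith
    have hae : a ≤ e := by rcases min_le_iff.mp h9 with h | h <;> linarith
    have hfb : f < b := by linarith
    have hcf : c ≤ f := by rcases min_le_iff.mp h11 with h | h <;> linarith
    linarith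
  · -- d ≤ a
    have hfc : f < c := by linarith
    have hbf : b ≤ f := by rcases min_le_iff.mp h11 with h | h <;> linarith
    have hae : a < e := by linarith
    have hca : c ≤ a := by rcases min_le_iff.mp h2 with h | h <;> linarith
    have hac : a ≤ c := by rcases min_le_iff.mp h5 with h | h <;> linarith
    have hfd : f < d := by linarith
    have hef : e ≤ f := by rcases min_le_iff.mp h12 with h | h <;> linarith
    linarith

/-- Gromov inequality at a single base point implies the four point condition. -/
theorem fourPt_of_gromov_at (p : X)
    (H : ∀ x y z : X, min (gr p x z) (gr p y z) ≤ gr p x y) : FourPt X := by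
  intro x y z w
  -- products at p
  set a := gr p x y with ha
  set b := gr p x z with hb
  set c := gr p x w with hc
  set d := gr p y z with hd
  set e := gr p y w with he
  set f := gr p z w with hf
  have key : min (b + e) (c + d) ≤ a + f := by
    apply six_var
    · simpa [gr_comm] using H x y z
    · simpa [gr_comm] using H x y w
    · simpa [gr_comm] using H x w y
    · simpa [gr_comm] using H y w x
    · simpa [gr_comm] using H z w x
    · simpa [gr_comm] using H z w y
  -- translate back
  rcases min_le_iff.mp key with h | h
  · apply le_max_of_le_left
    simp only [ha, hb, he, hf, gr] at h
    linarith [h, dist_comm y p, dist_comm z p, dist_comm y w, dist_comm w y]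
  · apply le_max_of_le_right
    simp only [ha, hc, hd, hf, gr] at h
    linarith [h, dist_comm y p, dist_comm z p, dist_comm y z, dist_comm z y]

section Tree
variable {X : Type*} [MetricSpace X]

/-- A map that is isometric on `Icc 0 ℓ` is continuous there. -/
theorem isoOn_continuousOn {γ : ℝ → X} {ℓ : ℝ}
    (hiso : ∀ u ∈ Icc (0:ℝ) ℓ, ∀ v ∈ Icc (0:ℝ) ℓ, dist (γ u) (γ v) = |u - v|) :
    ContinuousOn γ (Icc 0 ℓ) := by
  apply LipschitzOnWith.continuousOn (K := 1)
  apply LipschitzOnWith.of_dist_le_mul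
  intro u hu v hv
  rw [hiso u hu v hv, Real.dist_eq]
  simp

theorem isoOn_injOn {γ : ℝ → X} {ℓ : ℝ}
    (hiso : ∀ u ∈ Icc (0:ℝ) ℓ, ∀ v ∈ Icc (0:ℝ) ℓ, dist (γ u) (γ v) = |u - v|) :
    InjOn γ (Icc 0 ℓ) := by
  intro u hu v hv huv
  have := hiso u hu v hv
  rw [huv, dist_self] at this
  have := abs_eq_zero.mp this.symm
  linarith

/-- Extraction of a geodesic parametrization from `IsRTree`, normalized so that
`ℓ = dist a b`, together with the uniqueness-of-arcs statement. -/
theorem tree_geo (h : IsRTree X) (a b : X) :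
    ∃ γ : ℝ → X,
      (∀ u ∈ Icc (0:ℝ) (dist a b), ∀ v ∈ Icc (0:ℝ) (dist a b), dist (γ u) (γ v) = |u - v|) ∧
      γ 0 = a ∧ γ (dist a b) = b ∧
      (∀ t : Set X, IsArcFromTo t a b → t = γ '' Icc 0 (dist a b)) := by
  obtain ⟨s, harc, ⟨ℓ, hℓ, γ, hiso, h0, hL, hs⟩, huniq⟩ := h a b
  have hd : ℓ = dist a b := by
    have h1 := hiso 0 ⟨le_refl 0, hℓ⟩ ℓ ⟨hℓ, le_refl ℓ⟩
    rw [h0, hL] at h1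
    have h2 : |0 - (ℓ:ℝ)| = ℓ := by rw [abs_sub_comm, sub_zero, abs_of_nonneg hℓ]
    rw [h1, h2]
  subst hd
  exact ⟨γ, hiso, h0, hL, fun t ht => (huniq t ht).trans hs⟩

/-- Gluing two "isometric" arcs which meet only at the common endpoint. -/
theorem arc_glue {γ₁ γ₂ : ℝ → X} {ℓ₁ ℓ₂ : ℝ} (h1 : 0 ≤ ℓ₁) (h2 : 0 ≤ ℓ₂)
    (hiso₁ : ∀ u ∈ Icc (0:ℝ) ℓ₁, ∀ v ∈ Icc (0:ℝ) ℓ₁, dist (γ₁ u) (γ₁ v) = |u - v|)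
    (hiso₂ : ∀ u ∈ Icc (0:ℝ) ℓ₂, ∀ v ∈ Icc (0:ℝ) ℓ₂, dist (γ₂ u) (γ₂ v) = |u - v|)
    (hmid : γ₁ ℓ₁ = γ₂ 0)
    (hdisj : ∀ s ∈ Icc (0:ℝ) ℓ₁, ∀ t ∈ Icc (0:ℝ) ℓ₂, γ₁ s = γ₂ t → s = ℓ₁ ∧ t = 0) :
    IsArcFromTo (γ₁ '' Icc 0 ℓ₁ ∪ γ₂ '' Icc 0 ℓ₂) (γ₁ 0) (γ₂ ℓ₂) := by
  set ℓ := ℓ₁ + ℓ₂ with hℓdef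
  set δ : ℝ → X := fun u => if u ≤ ℓ₁ then γ₁ u else γ₂ (u - ℓ₁) with hδ
  have hδ1 : ∀ u, u ≤ ℓ₁ → δ u = γ₁ u := fun u hu => if_pos hu
  have hδ2 : ∀ u, ℓ₁ < u → δ u = γ₂ (u - ℓ₁) := fun u hu => if_neg (not_le.mpr hu)
  have key : ∀ u ∈ Icc (0:ℝ) ℓ, ∀ v ∈ Icc (0:ℝ) ℓ, u ≤ v → dist (δ u) (δ v) ≤ v - u := by
    intro u hu v hv huv
    by_cases hvl : v ≤ ℓ₁
    · have hul : u ≤ ℓ₁ := le_trans huv hvl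
      rw [hδ1 u hul, hδ1 v hvl, hiso₁ u ⟨hu.1, hul⟩ v ⟨hv.1, hvl⟩, abs_sub_comm,
        abs_of_nonneg (by linarith)]
    · push_neg at hvl
      have hv2 : v - ℓ₁ ∈ Icc (0:ℝ) ℓ₂ := ⟨by linarith, by have := hv.2; simp only [hℓdef] at this; linarith⟩
      by_cases hul : u ≤ ℓ₁
      · rw [hδ1 u hul, hδ2 v hvl]
        calc dist (γ₁ u) (γ₂ (v - ℓ₁)) ≤ dist (γ₁ u) (γ₁ ℓ₁) + dist (γ₁ ℓ₁) (γ₂ (v - ℓ₁)) :=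
              dist_triangle _ _ _
        _ = (ℓ₁ - u) + (v - ℓ₁ - 0) := by
              rw [hiso₁ u ⟨hu.1, hul⟩ ℓ₁ ⟨h1, le_refl _⟩, hmid,
                hiso₂ 0 ⟨le_refl _, h2⟩ (v - ℓ₁) hv2, abs_sub_comm u ℓ₁,
                abs_of_nonneg (by linarith), abs_sub_comm, abs_of_nonneg (by linarith)]
        _ ≤ v - u := by linarith
      · push_neg at hul
        have hu2 : u - ℓ₁ ∈ Icc (0:ℝ) ℓ₂ := ⟨by linarith, by have := hu.2; simp only [hℓdef] at this; linarith⟩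
        rw [hδ2 u hul, hδ2 v hvl, hiso₂ _ hu2 _ hv2, abs_sub_comm, abs_of_nonneg (by linarith)]
        linarith
  have hcont : ContinuousOn δ (Icc 0 ℓ) := by
    apply LipschitzOnWith.continuousOn (K := 1)
    apply LipschitzOnWith.of_dist_le_mul
    intro u hu v hv
    rcases le_total u v with huv | huv
    · calc dist (δ u) (δ v) ≤ v - u := key u hu v hv huv
      _ ≤ 1 * dist u v := by rw [Real.dist_eq, one_mul, abs_sub_comm]; exact le_abs_self _
    · rw [dist_comm]
      calc dist (δ v) (δ u) ≤ u - v := key v hv u hu huv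
      _ ≤ 1 * dist u v := by rw [Real.dist_eq, one_mul]; exact le_abs_self _
  have hinj : InjOn δ (Icc 0 ℓ) := by
    intro u hu v hv huv
    by_cases hul : u ≤ ℓ₁ <;> by_cases hvl : v ≤ ℓ₁
    · rw [hδ1 u hul, hδ1 v hvl] at huv
      exact isoOn_injOn hiso₁ ⟨hu.1, hul⟩ ⟨hv.1, hvl⟩ huv
    · push_neg at hvl
      rw [hδ1 u hul, hδ2 v hvl] at huv
      have hv2 : v - ℓ₁ ∈ Icc (0:ℝ) ℓ₂ := ⟨by linarith, by have := hv.2; simp only [hℓdef] at this; linarith⟩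
      obtain ⟨_, h4⟩ := hdisj u ⟨hu.1, hul⟩ (v - ℓ₁) hv2 huv
      linarith
    · push_neg at hul
      rw [hδ2 u hul, hδ1 v hvl] at huv
      have hu2 : u - ℓ₁ ∈ Icc (0:ℝ) ℓ₂ := ⟨by linarith, by have := hu.2; simp only [hℓdef] at this; linarith⟩
      obtain ⟨_, h4⟩ := hdisj v ⟨hv.1, hvl⟩ (u - ℓ₁) hu2 huv.symm
      linarith
    · push_neg at hul hvl
      rw [hδ2 u hul, hδ2 v hvl] at huv
      have hu2 : u - ℓ₁ ∈ Icc (0:ℝ) ℓ₂ := ⟨by linarith, by have := hu.2; simp only [hℓdef] at this; linarith⟩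
      have hv2 : v - ℓ₁ ∈ Icc (0:ℝ) ℓ₂ := ⟨by linarith, by have := hv.2; simp only [hℓdef] at this; linarith⟩
      have := isoOn_injOn hiso₂ hu2 hv2 huv
      linarith
  have himg : γ₁ '' Icc 0 ℓ₁ ∪ γ₂ '' Icc 0 ℓ₂ = δ '' Icc 0 ℓ := by
    apply Subset.antisymm
    · rintro x (⟨u, hu, rfl⟩ | ⟨t, ht, rfl⟩)
      · exact ⟨u, ⟨hu.1, by simp only [hℓdef]; linarith [hu.2]⟩, hδ1 u hu.2⟩
      · by_cases ht0 : t ≤ 0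
        · have ht0' : t = 0 := le_antisymm ht0 ht.1
          refine ⟨ℓ₁, ⟨h1, by simp only [hℓdef]; linarith⟩, ?_⟩
          rw [hδ1 ℓ₁ (le_refl _), hmid, ht0']
        · push_neg at ht0
          refine ⟨ℓ₁ + t, ⟨by linarith, by simp only [hℓdef]; linarith [ht.2]⟩, ?_⟩
          rw [hδ2 (ℓ₁ + t) (by linarith)]
          congr 1; ring
    · rintro x ⟨u, hu, rfl⟩
      by_cases hul : u ≤ ℓ₁
      · exact Or.inl ⟨u, ⟨hu.1, hul⟩, (hδ1 u hul).symm⟩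
      · push_neg at hul
        refine Or.inr ⟨u - ℓ₁, ⟨by linarith, by have := hu.2; simp only [hℓdef] at this; linarith⟩,
          (hδ2 u hul).symm⟩
  refine ⟨ℓ, by simp only [hℓdef]; linarith, δ, hcont, hinj, ?_, ?_, himg.symm ▸ rfl⟩
  · exact hδ1 0 h1
  · by_cases hl : ℓ ≤ ℓ₁
    · have hl2 : ℓ₂ = 0 := by simp only [hℓdef] at hl; linarith [le_antisymm (by linarith) h2]
      rw [hδ1 ℓ (by simp only [hℓdef]; linarith), hℓdef, hl2, add_zero, hmid]
    · push_neg at hl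
      rw [hδ2 ℓ hl]
      congr 1; simp only [hℓdef]; ring


theorem isoOn_dist0 {γ : ℝ → X} {ℓ : ℝ} (hℓ : 0 ≤ ℓ)
    (hiso : ∀ u ∈ Icc (0:ℝ) ℓ, ∀ v ∈ Icc (0:ℝ) ℓ, dist (γ u) (γ v) = |u - v|)
    {u : ℝ} (hu : u ∈ Icc (0:ℝ) ℓ) : dist (γ 0) (γ u) = u := by
  rw [hiso 0 ⟨le_refl _, hℓ⟩ u hu, abs_sub_comm, sub_zero, abs_of_nonneg hu.1]

theorem isoOn_distL {γ : ℝ → X} {ℓ : ℝ} (hℓ : 0 ≤ ℓ)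
    (hiso : ∀ u ∈ Icc (0:ℝ) ℓ, ∀ v ∈ Icc (0:ℝ) ℓ, dist (γ u) (γ v) = |u - v|)
    {u : ℝ} (hu : u ∈ Icc (0:ℝ) ℓ) : dist (γ u) (γ ℓ) = ℓ - u := by
  rw [hiso u hu ℓ ⟨hℓ, le_refl _⟩, abs_sub_comm, abs_of_nonneg (by linarith [hu.2])]

/-- Any point between `a` and `b` lies on every arc from `a` to `b`. -/
theorem tree_between_mem (h : IsRTree X) {a b y : X} (hy : dist a y + dist y b = dist a b)
    {t : Set X} (ht : IsArcFromTo t a b) : y ∈ t := by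
  obtain ⟨γ₁, hiso₁, h10, h1L, _⟩ := tree_geo h a y
  obtain ⟨γ₂, hiso₂, h20, h2L, _⟩ := tree_geo h y b
  have hdisj : ∀ s ∈ Icc (0:ℝ) (dist a y), ∀ u ∈ Icc (0:ℝ) (dist y b),
      γ₁ s = γ₂ u → s = dist a y ∧ u = 0 := by
    intro s hs u hu heq
    have e1 : dist a (γ₁ s) = s := by rw [← h10]; exact isoOn_dist0 dist_nonneg hiso₁ hs
    have e2 : dist (γ₁ s) y = dist a y - s := by
      have := isoOn_distL dist_nonneg hiso₁ hs
      rwa [h1L] at this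
    have e3 : dist y (γ₂ u) = u := by rw [← h20]; exact isoOn_dist0 dist_nonneg hiso₂ hu
    have e4 : dist (γ₂ u) b = dist y b - u := by
      have := isoOn_distL dist_nonneg hiso₂ hu
      rwa [h2L] at this
    have e5 : dist a y - s = u := by rw [← e2, heq, dist_comm]; exact e3
    have e6 := dist_triangle a (γ₁ s) b
    rw [e1, heq, e4] at e6
    constructor
    · linarith [hs.2]
    · linarith [hs.2]
  have harcU := arc_glue dist_nonneg dist_nonneg hiso₁ hiso₂ (by rw [h1L, h20]) hdisj
  rw [h10, h2L] at harcU
  obtain ⟨sset, sarc, _, suniq⟩ := h a b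
  have h1 : t = sset := suniq t ht
  have h2 := suniq _ harcU
  rw [h1, ← h2]
  exact Or.inl ⟨dist a y, ⟨dist_nonneg, le_refl _⟩, h1L⟩

/-- A point between `a` and `b` lies on a given geodesic parametrization, at
parameter `dist a y`. -/
theorem between_on_geodesic (h : IsRTree X) {a b y : X} {γ : ℝ → X}
    (hiso : ∀ u ∈ Icc (0:ℝ) (dist a b), ∀ v ∈ Icc (0:ℝ) (dist a b), dist (γ u) (γ v) = |u - v|)
    (h0 : γ 0 = a) (hL : γ (dist a b) = b)
    (hy : dist a y + dist y b = dist a b) : y = γ (dist a y) := by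
  have harc : IsArcFromTo (γ '' Icc 0 (dist a b)) a b :=
    ⟨dist a b, dist_nonneg, γ, isoOn_continuousOn hiso, isoOn_injOn hiso, h0, hL, rfl⟩
  obtain ⟨u, hu, huy⟩ := tree_between_mem h hy harc
  have e1 : dist a y = u := by
    rw [← huy, ← h0]; exact isoOn_dist0 dist_nonneg hiso hu
  rw [e1, huy]

/-- Existence of medians in an ℝ-tree. -/
theorem tree_median (h : IsRTree X) (a b c : X) :
    ∃ m : X, dist a m + dist m b = dist a b ∧ dist a m + dist m c = dist a c ∧
      dist b m + dist m c = dist b c := by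
  obtain ⟨γ₁, hiso₁, h10, h1L, _⟩ := tree_geo h a b
  obtain ⟨γ₂, hiso₂, h20, h2L, _⟩ := tree_geo h a c
  set ℓ₁ := dist a b with hℓ₁
  set ℓ₂ := dist a c with hℓ₂
  set T : Set ℝ := {t | t ∈ Icc (0:ℝ) (min ℓ₁ ℓ₂) ∧ γ₁ t = γ₂ t} with hT
  have h0T : (0:ℝ) ∈ T := ⟨⟨le_refl _, le_min dist_nonneg dist_nonneg⟩, by rw [h10, h20]⟩
  have hbdd : BddAbove T := ⟨min ℓ₁ ℓ₂, fun t ht => ht.1.2⟩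
  have hclosed : IsClosed T := by
    have hTeq : T = Icc (0:ℝ) (min ℓ₁ ℓ₂) ∩ (fun t => dist (γ₁ t) (γ₂ t)) ⁻¹' {0} := by
      ext t
      simp only [hT, mem_setOf_eq, mem_inter_iff, mem_preimage, mem_singleton_iff]
      exact and_congr_right fun _ => (dist_eq_zero).symm
    rw [hTeq]
    refine ContinuousOn.preimage_isClosed_of_isClosed ?_ isClosed_Icc isClosed_singleton
    exact continuous_dist.comp_continuousOn
      (ContinuousOn.prodMk
        ((isoOn_continuousOn hiso₁).mono (Icc_subset_Icc le_rfl (min_le_left _ _)))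
        ((isoOn_continuousOn hiso₂).mono (Icc_subset_Icc le_rfl (min_le_right _ _))))
  set t0 := sSup T with ht0def
  have ht0T : t0 ∈ T := hclosed.csSup_mem ⟨0, h0T⟩ hbdd
  have ht01 : t0 ∈ Icc (0:ℝ) ℓ₁ := ⟨ht0T.1.1, le_trans ht0T.1.2 (min_le_left _ _)⟩
  have ht02 : t0 ∈ Icc (0:ℝ) ℓ₂ := ⟨ht0T.1.1, le_trans ht0T.1.2 (min_le_right _ _)⟩
  set m := γ₁ t0 with hmdef
  have hm2 : γ₂ t0 = m := ht0T.2.symm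
  have dam : dist a m = t0 := by rw [hmdef, ← h10]; exact isoOn_dist0 dist_nonneg hiso₁ ht01
  have dmb : dist m b = ℓ₁ - t0 := by rw [hmdef, ← h1L]; exact isoOn_distL dist_nonneg hiso₁ ht01
  have dmc : dist m c = ℓ₂ - t0 := by rw [← hm2, ← h2L]; exact isoOn_distL dist_nonneg hiso₂ ht02
  refine ⟨m, by rw [dam, dmb]; ring, by rw [dam, dmc]; ring, ?_⟩
  -- glue the reversed geodesic b → m with the geodesic m → c
  have hiso₁' : ∀ u ∈ Icc (0:ℝ) (ℓ₁ - t0), ∀ v ∈ Icc (0:ℝ) (ℓ₁ - t0),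
      dist (γ₁ (ℓ₁ - u)) (γ₁ (ℓ₁ - v)) = |u - v| := by
    intro u hu v hv
    rw [hiso₁ (ℓ₁ - u) ⟨by linarith [hu.2, ht01.1], by linarith [hu.1]⟩
      (ℓ₁ - v) ⟨by linarith [hv.2, ht01.1], by linarith [hv.1]⟩]
    rw [show ℓ₁ - u - (ℓ₁ - v) = v - u by ring, abs_sub_comm]
  have hiso₂' : ∀ u ∈ Icc (0:ℝ) (ℓ₂ - t0), ∀ v ∈ Icc (0:ℝ) (ℓ₂ - t0),
      dist (γ₂ (t0 + u)) (γ₂ (t0 + v)) = |u - v| := by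
    intro u hu v hv
    rw [hiso₂ (t0 + u) ⟨by linarith [hu.1, ht02.1], by linarith [hu.2]⟩
      (t0 + v) ⟨by linarith [hv.1, ht02.1], by linarith [hv.2]⟩]
    congr 1; ring
  have hdisj : ∀ s ∈ Icc (0:ℝ) (ℓ₁ - t0), ∀ u ∈ Icc (0:ℝ) (ℓ₂ - t0),
      γ₁ (ℓ₁ - s) = γ₂ (t0 + u) → s = ℓ₁ - t0 ∧ u = 0 := by
    intro s hs u hu heq
    have m1 : ℓ₁ - s ∈ Icc (0:ℝ) ℓ₁ := ⟨by linarith [hs.2, ht01.1], by linarith [hs.1]⟩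
    have m2 : t0 + u ∈ Icc (0:ℝ) ℓ₂ := ⟨by linarith [hu.1, ht02.1], by linarith [hu.2]⟩
    have e1 : dist a (γ₁ (ℓ₁ - s)) = ℓ₁ - s := by rw [← h10]; exact isoOn_dist0 dist_nonneg hiso₁ m1
    have e2 : dist a (γ₂ (t0 + u)) = t0 + u := by rw [← h20]; exact isoOn_dist0 dist_nonneg hiso₂ m2
    have e3 : ℓ₁ - s = t0 + u := by rw [← e1, heq, e2]
    have hTmem : (t0 + u) ∈ T := by
      refine ⟨⟨by linarith [hu.1, ht02.1], le_min (by linarith [hs.1]) (by linarith [hu.2])⟩, ?_⟩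
      rw [← e3] at heq ⊢
      exact heq
    have hle : t0 + u ≤ t0 := le_csSup hbdd hTmem
    constructor <;> linarith [hu.1, hs.1]
  have harc := arc_glue (by linarith [ht01.2] : (0:ℝ) ≤ ℓ₁ - t0)
    (by linarith [ht02.2] : (0:ℝ) ≤ ℓ₂ - t0) hiso₁' hiso₂'
    (by rw [show ℓ₁ - (ℓ₁ - t0) = t0 by ring, add_zero, hm2]) hdisj
  rw [show ℓ₁ - (0:ℝ) = ℓ₁ by ring] at harc
  rw [show t0 + (ℓ₂ - t0) = ℓ₂ by ring] at harc
  rw [h1L, h2L] at harc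
  obtain ⟨γ₃, hiso₃, h30, h3L, huniq₃⟩ := tree_geo h b c
  have himg := huniq₃ _ harc
  have hmU : m ∈ ((fun u => γ₁ (ℓ₁ - u)) '' Icc 0 (ℓ₁ - t0) ∪
      (fun u => γ₂ (t0 + u)) '' Icc 0 (ℓ₂ - t0)) := by
    refine Or.inl ⟨ℓ₁ - t0, ⟨by linarith [ht01.2], le_refl _⟩, ?_⟩
    simp only
    rw [show ℓ₁ - (ℓ₁ - t0) = t0 by ring]
  rw [himg] at hmU
  obtain ⟨u, hu, hum⟩ := hmU
  have e1 : dist b m = u := by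
    have := isoOn_dist0 dist_nonneg hiso₃ hu
    rw [h30, hum] at this
    exact this
  have e2 : dist m c = dist b c - u := by
    have := isoOn_distL dist_nonneg hiso₃ hu
    rw [h3L, hum] at this
    exact this
  rw [e1, e2]; ring

/-- Every ℝ-tree satisfies the four point condition. -/
theorem tree_fourPt (h : IsRTree X) : FourPt X := by
  have gromov : ∀ p x y z : X, min (gr p x z) (gr p y z) ≤ gr p x y := by
    intro p x y z
    obtain ⟨m₁, hm₁a, hm₁b, hm₁c⟩ := tree_median h x z p
    obtain ⟨m₂, hm₂a, hm₂b, hm₂c⟩ := tree_median h y z p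
    -- m₁ between p and z at distance gr p x z from p, similarly m₂
    have t₁ : dist p m₁ = gr p x z := by
      simp only [gr]
      linarith [hm₁a, hm₁b, hm₁c, dist_comm m₁ p, dist_comm x m₁, dist_comm z m₁,
        dist_comm p x, dist_comm p z, dist_comm x p, dist_comm z p]
    have t₂ : dist p m₂ = gr p y z := by
      simp only [gr]
      linarith [hm₂a, hm₂b, hm₂c, dist_comm m₂ p, dist_comm y m₂, dist_comm z m₂,
        dist_comm p y, dist_comm p z, dist_comm y p, dist_comm z p]
    have b₁ : dist p m₁ + dist m₁ z = dist p z := by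
      linarith [hm₁c, dist_comm m₁ p, dist_comm z m₁, dist_comm z p]
    have b₂ : dist p m₂ + dist m₂ z = dist p z := by
      linarith [hm₂c, dist_comm m₂ p, dist_comm z m₂, dist_comm z p]
    -- both lie on the geodesic from p to z
    obtain ⟨γ, hiso, h0, hL, _⟩ := tree_geo h p z
    have e₁ := between_on_geodesic h hiso h0 hL b₁
    have e₂ := between_on_geodesic h hiso h0 hL b₂
    have hd12 : dist m₁ m₂ = |dist p m₁ - dist p m₂| := by
      conv_lhs => rw [e₁, e₂]
      exact hiso _ ⟨dist_nonneg, by linarith [b₁, dist_nonneg (x := m₁) (y := z)]⟩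
        _ ⟨dist_nonneg, by linarith [b₂, dist_nonneg (x := m₂) (y := z)]⟩
    rcases le_total (dist p m₁) (dist p m₂) with hc | hc
    · -- min is attained at gr p x z
      have h1 : dist m₁ y ≤ dist m₁ m₂ + dist m₂ y := dist_triangle _ _ _
      have h2 : dist x y ≤ dist x m₁ + dist m₁ y := dist_triangle _ _ _
      rw [hd12, abs_of_nonpos (by linarith), neg_sub] at h1
      have goal1 : gr p x z ≤ gr p x y := by
        simp only [gr]
        linarith [h1, h2, hm₁b, hm₂b, t₁, dist_comm m₁ p, dist_comm m₂ p,
          dist_comm x p, dist_comm y p, dist_comm x m₁, dist_comm y m₂]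
      exact min_le_of_left_le goal1
    · have h1 : dist m₂ x ≤ dist m₂ m₁ + dist m₁ x := dist_triangle _ _ _
      have h2 : dist x y ≤ dist x m₂ + dist m₂ y := dist_triangle _ _ _
      rw [dist_comm m₂ m₁, hd12, abs_of_nonneg (by linarith)] at h1
      have goal1 : gr p y z ≤ gr p x y := by
        simp only [gr]
        linarith [h1, h2, hm₁b, hm₂b, t₂, dist_comm m₁ p, dist_comm m₂ p,
          dist_comm x p, dist_comm y p, dist_comm x m₁, dist_comm m₁ x,
          dist_comm x m₂, dist_comm m₂ x, dist_comm y m₂]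
      exact min_le_of_right_le goal1
  -- now convert pointwise
  intro x y p z
  have H := gromov p x y z
  rcases min_le_iff.mp H with h' | h'
  · simp only [gr] at h'
    apply le_max_of_le_right
    linarith [h', dist_comm x p, dist_comm y p, dist_comm x z, dist_comm y z]
  · simp only [gr] at h'
    apply le_max_of_le_left
    linarith [h', dist_comm x p, dist_comm y p, dist_comm x z, dist_comm y z]

end Tree

section PartA
variable {X : Type*} [MetricSpace X]

/-- In a 0-hyperbolic space, two points between `a` and `b` are at distance
the difference of their distances to `a`. -/
theorem btw_dist (hfp : FourPt X) {a b y y' : X}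
    (hy : dist a y + dist y b = dist a b) (hy' : dist a y' + dist y' b = dist a b) :
    dist y y' = |dist a y - dist a y'| := by
  have h4 := hfp y y' a b
  have t1 := dist_triangle a y y'
  have t2 := dist_triangle a y' y
  have hcomm1 := dist_comm y a
  have hcomm2 := dist_comm y' a
  have hcomm3 := dist_comm y' y
  rcases le_total (dist a y) (dist a y') with hc | hc
  · rw [abs_of_nonpos (by linarith), neg_sub]
    rcases le_max_iff.mp h4 with h' | h' <;> linarith
  · rw [abs_of_nonneg (by linarith)]
    rcases le_max_iff.mp h4 with h' | h' <;> linarith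

theorem btw_unique (hfp : FourPt X) {a b y y' : X}
    (hy : dist a y + dist y b = dist a b) (hy' : dist a y' + dist y' b = dist a b)
    (heq : dist a y = dist a y') : y = y' := by
  have := btw_dist hfp hy hy'
  rw [heq, sub_self, abs_zero] at this
  exact dist_eq_zero.mp this

/-- Points on a geodesic parametrization are between the endpoints. -/
theorem geo_btw {a b : X} {γ : ℝ → X}
    (hiso : ∀ u ∈ Icc (0:ℝ) (dist a b), ∀ v ∈ Icc (0:ℝ) (dist a b), dist (γ u) (γ v) = |u - v|)
    (h0 : γ 0 = a) (hL : γ (dist a b) = b) {t : ℝ} (ht : t ∈ Icc (0:ℝ) (dist a b)) :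
    dist a (γ t) = t ∧ dist (γ t) b = dist a b - t := by
  constructor
  · have := isoOn_dist0 dist_nonneg hiso ht
    rwa [h0] at this
  · have := isoOn_distL dist_nonneg hiso ht
    rwa [hL] at this

theorem btw_on_geo (hfp : FourPt X) {a b y : X} {γ : ℝ → X}
    (hiso : ∀ u ∈ Icc (0:ℝ) (dist a b), ∀ v ∈ Icc (0:ℝ) (dist a b), dist (γ u) (γ v) = |u - v|)
    (h0 : γ 0 = a) (hL : γ (dist a b) = b)
    (hy : dist a y + dist y b = dist a b) : y = γ (dist a y) := by
  have hmem : dist a y ∈ Icc (0:ℝ) (dist a b) :=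
    ⟨dist_nonneg, by linarith [dist_nonneg (x := y) (y := b)]⟩
  obtain ⟨e1, e2⟩ := geo_btw hiso h0 hL hmem
  exact btw_unique hfp hy (by rw [e1]; linarith) e1.symm

/-- The projection of `x` to the geodesic from `a` to `b` is between `x` and either endpoint. -/
theorem proj_btw (hfp : FourPt X) {a b x : X} {γ : ℝ → X}
    (hiso : ∀ u ∈ Icc (0:ℝ) (dist a b), ∀ v ∈ Icc (0:ℝ) (dist a b), dist (γ u) (γ v) = |u - v|)
    (h0 : γ 0 = a) (hL : γ (dist a b) = b) :
    dist x (γ (gr a x b)) = dist a x - gr a x b ∧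
    dist x (γ (gr a x b)) = dist x b - (dist a b - gr a x b) := by
  set t := gr a x b with htdef
  have htmem : t ∈ Icc (0:ℝ) (dist a b) := ⟨gr_nonneg a x b, gr_le_right a x b⟩
  obtain ⟨e1, e2⟩ := geo_btw hiso h0 hL htmem
  set m := γ t with hmdef
  have key : dist x m = dist a x - t := by
    have low := dist_triangle a m x
    have h4 := hfp x m a b
    have hid : dist a x - t = dist x b - (dist a b - t) := by
      simp only [htdef, gr]
      rw [dist_comm a x]
      ring
    have up : dist x m ≤ dist a x - t := by
      rcases le_max_iff.mp h4 with h' | h' <;>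
        [skip; skip] <;>
      · rw [dist_comm x a] at *
        linarith [dist_comm m a, dist_comm a m, e1, e2, hid, h']
    linarith [dist_comm a m, dist_comm m x]
  constructor
  · exact key
  · rw [key]
    simp only [htdef, gr]
    rw [dist_comm a x]
    ring

theorem gr_lipschitz (a b x y : X) : |gr a x b - gr a y b| ≤ dist x y := by
  have t1 := dist_triangle a y x
  have t2 := dist_triangle a x y
  have t3 := dist_triangle x y b
  have t4 := dist_triangle y x b
  rw [abs_le]
  constructor <;> simp only [gr] <;>
    [linarith [dist_comm y x]; linarith [dist_comm x y]]

/-- Locality of the projection. -/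
theorem gr_split {X : Type*} [PseudoMetricSpace X] (a b u : X) :
    gr a u b + gr b u a = dist a b := by
  simp only [gr]
  have c1 := dist_comm b u
  have c2 := dist_comm b a
  have c3 := dist_comm u a
  have c4 := dist_comm u b
  have c5 := dist_comm a u
  linarith

theorem proj_local (hfp : FourPt X) {a b x y : X} {γ : ℝ → X}
    (hiso : ∀ u ∈ Icc (0:ℝ) (dist a b), ∀ v ∈ Icc (0:ℝ) (dist a b), dist (γ u) (γ v) = |u - v|)
    (h0 : γ 0 = a) (hL : γ (dist a b) = b)
    (hxy : dist x y < dist x (γ (gr a x b))) : gr a y b = gr a x b := by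
  obtain ⟨e1, e2⟩ := proj_btw hfp hiso h0 hL (x := x) (γ := γ)
  rw [e1] at hxy
  have hxy2 : dist x y < dist b x - gr b x a := by
    have hs := gr_split a b x
    rw [e1] at e2
    linarith [dist_comm b x, dist_comm x b]
  have strict1 : gr a x b ≤ gr a y x := by
    simp only [gr] at hxy ⊢
    linarith [dist_triangle a y x, dist_comm y x, dist_comm x y]
  have strict2 : gr b x a ≤ gr b y x := by
    simp only [gr] at hxy2 ⊢
    linarith [dist_triangle b y x, dist_comm y x, dist_comm x y]
  have lower : gr a x b ≤ gr a y b :=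
    le_trans (le_min strict1 (gr_comm a b x).ge) (FourPt.gromov hfp a y b x)
  have lower2 : gr b x a ≤ gr b y a :=
    le_trans (le_min strict2 ((gr_comm b a x).ge))
      (FourPt.gromov hfp b y a x)
  have hs1 := gr_split a b x
  have hs2 := gr_split a b y
  linarith

/-- Any continuous path from `a` to `b` passes through every point between them. -/
theorem path_through (hfp : FourPt X)
    (hgeo : ∀ a b : X, ∃ γ : ℝ → X,
      (∀ u' ∈ Icc (0:ℝ) (dist a b), ∀ v' ∈ Icc (0:ℝ) (dist a b), dist (γ u') (γ v') = |u' - v'|) ∧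
      γ 0 = a ∧ γ (dist a b) = b)
    {a b m : X} {γ' : ℝ → X} {u v : ℝ} (huv : u ≤ v)
    (hcont : ContinuousOn γ' (Icc u v)) (hu : γ' u = a) (hv : γ' v = b)
    (hm : dist a m + dist m b = dist a b) : m ∈ γ' '' Icc u v := by
  by_cases hma : m = a
  · exact ⟨u, ⟨le_refl _, huv⟩, by rw [hu, hma]⟩
  by_cases hmb : m = b
  · exact ⟨v, ⟨huv, le_refl _⟩, by rw [hv, hmb]⟩
  by_contra hnot
  obtain ⟨γ, hiso, h0, hL⟩ := hgeo a b
  have htm0 : 0 < dist a m := dist_pos.mpr (Ne.symm hma)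
  have htmL : dist a m < dist a b := by
    have : 0 < dist m b := dist_pos.mpr hmb
    linarith
  have hγtm : γ (dist a m) = m := (btw_on_geo hfp hiso h0 hL hm).symm
  set F : X → ℝ := fun x => gr a x b with hFdef
  have hFcont : Continuous F := by
    rw [Metric.continuous_iff]
    intro x ε hε
    exact ⟨ε, hε, fun y hy =>
      lt_of_le_of_lt (by rw [Real.dist_eq]; exact gr_lipschitz a b y x) hy⟩
  set U1 : Set X := {x | F x < dist a m} with hU1def
  set U3 : Set X := {x | γ (F x) = m ∧ x ≠ m} with hU3def
  set V : Set X := {x | dist a m < F x} with hVdef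
  have hU1 : IsOpen U1 := isOpen_lt hFcont continuous_const
  have hV : IsOpen V := isOpen_lt continuous_const hFcont
  have hU3 : IsOpen U3 := by
    rw [Metric.isOpen_iff]
    rintro x ⟨hx1, hx2⟩
    refine ⟨dist x m, dist_pos.mpr hx2, ?_⟩
    intro y hy
    rw [mem_ball] at hy
    have hx1' : γ (gr a x b) = m := hx1
    have hyx : dist x y < dist x (γ (gr a x b)) := by
      rw [hx1', dist_comm x y]
      exact hy
    have hloc := proj_local hfp hiso h0 hL hyx
    constructor
    · show γ (gr a y b) = m
      rw [hloc]
      exact hx1'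
    · intro e
      rw [e, dist_comm m x] at hy
      exact lt_irrefl _ hy
  have hKsub : γ' '' Icc u v ⊆ (U1 ∪ U3) ∪ V := by
    rintro x ⟨w, hw, rfl⟩
    rcases lt_trichotomy (F (γ' w)) (dist a m) with hlt | heq | hgt
    · exact Or.inl (Or.inl hlt)
    · refine Or.inl (Or.inr ⟨?_, ?_⟩)
      · rw [heq]
        exact hγtm
      · intro e
        exact hnot ⟨w, hw, e⟩
    · exact Or.inr hgt
  have hU : IsOpen (U1 ∪ U3) := hU1.union hU3
  have hgra : gr a a b = 0 := by simp [gr]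
  have hgrb : gr a b b = dist a b := by
    simp only [gr, dist_self]
    rw [dist_comm a b]
    ring
  have hKa : a ∈ γ' '' Icc u v ∩ (U1 ∪ U3) := by
    refine ⟨⟨u, ⟨le_refl _, huv⟩, hu⟩, Or.inl ?_⟩
    show F a < dist a m
    show gr a a b < dist a m
    rw [hgra]
    exact htm0
  have hKb : b ∈ γ' '' Icc u v ∩ V := by
    refine ⟨⟨v, ⟨huv, le_refl _⟩, hv⟩, ?_⟩
    show dist a m < F b
    show dist a m < gr a b b
    rw [hgrb]
    exact htmL
  have hpre : IsPreconnected (γ' '' Icc u v) := (isPreconnected_Icc).image γ' hcont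
  obtain ⟨x, _, hxUV⟩ := hpre (U1 ∪ U3) V hU hV hKsub ⟨a, hKa⟩ ⟨b, hKb⟩
  obtain ⟨hxU, hxV⟩ := hxUV
  have hxV' : dist a m < F x := hxV
  rcases hxU with h1 | h3
  · have : F x < dist a m := h1
    linarith
  · obtain ⟨h3a, _⟩ := h3
    have hmem : F x ∈ Icc (0:ℝ) (dist a b) := ⟨gr_nonneg a x b, gr_le_right a x b⟩
    have := (geo_btw hiso h0 hL hmem).1
    rw [h3a] at this
    linarith

/-- A geodesic 0-hyperbolic metric space is an ℝ-tree. -/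
theorem isRTree_of (hfp : FourPt X)
    (hgeo : ∀ a b : X, ∃ γ : ℝ → X,
      (∀ u' ∈ Icc (0:ℝ) (dist a b), ∀ v' ∈ Icc (0:ℝ) (dist a b), dist (γ u') (γ v') = |u' - v'|) ∧
      γ 0 = a ∧ γ (dist a b) = b) : IsRTree X := by
  intro a b
  obtain ⟨γ, hiso, h0, hL⟩ := hgeo a b
  refine ⟨γ '' Icc 0 (dist a b),
    ⟨dist a b, dist_nonneg, γ, isoOn_continuousOn hiso, isoOn_injOn hiso, h0, hL, rfl⟩,
    ⟨dist a b, dist_nonneg, γ, hiso, h0, hL, rfl⟩, ?_⟩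
  rintro t ⟨ℓ', hℓ', γ', hcont', hinj', h0', hL', rfl⟩
  apply Subset.antisymm
  · rintro x ⟨w, hw, rfl⟩
    have hbtw : dist a (γ' w) + dist (γ' w) b = dist a b := by
      by_contra hnb
      obtain ⟨e1, e2⟩ := proj_btw hfp hiso h0 hL (x := γ' w) (γ := γ)
      have hmem : gr a (γ' w) b ∈ Icc (0:ℝ) (dist a b) :=
        ⟨gr_nonneg a (γ' w) b, gr_le_right a (γ' w) b⟩
      obtain ⟨f1, f2⟩ := geo_btw hiso h0 hL hmem
      have hmbtw : dist a (γ (gr a (γ' w) b)) + dist (γ (gr a (γ' w) b)) b = dist a b := by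
        rw [f1, f2]; ring
      have hxm : 0 < dist (γ' w) (γ (gr a (γ' w) b)) := by
        rcases eq_or_lt_of_le (dist_nonneg (x := γ' w) (y := γ (gr a (γ' w) b))) with he | hl
        · exfalso
          apply hnb
          have hxe : γ' w = γ (gr a (γ' w) b) := dist_eq_zero.mp he.symm
          rw [hxe]
          exact hmbtw
        · exact hl
      have hax : dist a (γ (gr a (γ' w) b)) + dist (γ (gr a (γ' w) b)) (γ' w) = dist a (γ' w) := by
        rw [f1, dist_comm (γ (gr a (γ' w) b)) (γ' w), e1]; ring
      have hxb : dist (γ' w) (γ (gr a (γ' w) b)) + dist (γ (gr a (γ' w) b)) b = dist (γ' w) b := by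
        rw [f2, e2, dist_comm (γ' w) b]; ring
      have p1 := path_through hfp hgeo hw.1
        (hcont'.mono (Icc_subset_Icc le_rfl hw.2)) h0' rfl hax
      have p2 := path_through hfp hgeo hw.2
        (hcont'.mono (Icc_subset_Icc hw.1 le_rfl)) rfl hL' hxb
      obtain ⟨s₁, hs₁, hs₁m⟩ := p1
      obtain ⟨s₂, hs₂, hs₂m⟩ := p2
      have hss : s₁ = s₂ := hinj' ⟨hs₁.1, le_trans hs₁.2 hw.2⟩
        ⟨le_trans hw.1 hs₂.1, hs₂.2⟩ (hs₁m.trans hs₂m.symm)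
      have hws : w = s₁ := le_antisymm (hss ▸ hs₂.1) hs₁.2
      rw [← hws] at hs₁m
      exact hnb (by rw [hs₁m]; exact hmbtw)
    have hmem := btw_on_geo hfp hiso h0 hL hbtw
    exact ⟨dist a (γ' w), ⟨dist_nonneg,
      by linarith [dist_nonneg (x := γ' w) (y := b)]⟩, hmem.symm⟩
  · rintro x ⟨s, hs, rfl⟩
    obtain ⟨f1, f2⟩ := geo_btw hiso h0 hL hs
    exact path_through hfp hgeo hℓ' hcont' h0' hL' (by rw [f1, f2]; ring)

end PartA



section Geod
variable {X : Type*} [MetricSpace X]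

theorem exact_midpoints (hfp : FourPt X) [CompleteSpace X]
    (hmid : ∀ a b : X, ∀ ε > (0:ℝ), ∃ m : X,
      dist a m ≤ dist a b / 2 + ε ∧ dist m b ≤ dist a b / 2 + ε)
    (a b : X) : ∃ m : X, dist a m = dist a b / 2 ∧ dist m b = dist a b / 2 := by
  have hseq : ∀ n : ℕ, ∃ m : X, dist a m ≤ dist a b / 2 + (1:ℝ)/(n+1) ∧
      dist m b ≤ dist a b / 2 + (1:ℝ)/(n+1) := fun n => hmid a b ((1:ℝ)/(n+1)) (by positivity)
  choose f hf1 hf2 using hseq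
  have hpair : ∀ i j : ℕ, dist (f i) (f j) ≤ (1:ℝ)/(i+1) + (1:ℝ)/(j+1) := by
    intro i j
    have h4 := hfp (f i) (f j) a b
    rcases le_max_iff.mp h4 with h | h <;>
      linarith [hf1 i, hf2 i, hf1 j, hf2 j, dist_comm (f i) a, dist_comm (f j) a,
        dist_comm a (f i), dist_comm a (f j)]
  have hcauchy : CauchySeq f := by
    rw [Metric.cauchySeq_iff']
    intro ε hε
    obtain ⟨N, hN⟩ := exists_nat_gt (2/ε)
    have hN0 : (0:ℝ) < N + 1 := by positivity
    refine ⟨N, fun n hn => ?_⟩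
    have h1 := hpair n N
    have h2 : (1:ℝ)/(n+1) ≤ (1:ℝ)/(N+1) := by
      apply div_le_div_of_nonneg_left (by norm_num) hN0
      linarith [(Nat.cast_le (α := ℝ)).mpr hn]
    have h3 : (1:ℝ)/(N+1) < ε/2 := by
      rw [div_lt_iff₀ hN0]
      have h2ε : 0 < 2/ε := by positivity
      have : (2:ℝ)/ε < N + 1 := by linarith
      calc (1:ℝ) = (2/ε) * (ε/2) := by field_simp
      _ < (N+1) * (ε/2) := by
          apply mul_lt_mul_of_pos_right this
          positivity
      _ = ε/2 * (N+1) := by ring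
    calc dist (f n) (f N) ≤ (1:ℝ)/(n+1) + (1:ℝ)/(N+1) := h1
    _ < ε := by linarith
  obtain ⟨m, hm⟩ := cauchySeq_tendsto_of_complete hcauchy
  have hd1 : Tendsto (fun n => dist a (f n)) atTop (nhds (dist a m)) :=
    tendsto_const_nhds.dist hm
  have hd2 : Tendsto (fun n => dist (f n) b) atTop (nhds (dist m b)) :=
    hm.dist tendsto_const_nhds
  have hrhs : Tendsto (fun n : ℕ => dist a b / 2 + (1:ℝ)/(n+1)) atTop
      (nhds (dist a b / 2)) := by
    have h2 := Tendsto.add (tendsto_const_nhds (x := dist a b / 2) (f := atTop (α := ℕ)))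
      tendsto_one_div_add_atTop_nhds_zero_nat
    simpa using h2
  have hub1 : dist a m ≤ dist a b / 2 := le_of_tendsto_of_tendsto' hd1 hrhs hf1
  have hub2 : dist m b ≤ dist a b / 2 := le_of_tendsto_of_tendsto' hd2 hrhs hf2
  have htot := dist_triangle a m b
  exact ⟨m, le_antisymm hub1 (by linarith), le_antisymm hub2 (by linarith)⟩

/-- In a complete 0-hyperbolic space with midpoints, geodesics exist. -/
theorem geo_of_midpoints (hfp : FourPt X)
    (hmid : ∀ a b : X, ∃ m : X, dist a m = dist a b / 2 ∧ dist m b = dist a b / 2)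
    (a b : X) (hScl : IsClosed {t : ℝ | ∃ y : X, dist a y = t ∧ dist y b = dist a b - t}) :
    ∃ γ : ℝ → X,
      (∀ u ∈ Icc (0:ℝ) (dist a b), ∀ v ∈ Icc (0:ℝ) (dist a b), dist (γ u) (γ v) = |u - v|) ∧
      γ 0 = a ∧ γ (dist a b) = b := by
  classical
  set L := dist a b with hLdef
  set S : Set ℝ := {t : ℝ | ∃ y : X, dist a y = t ∧ dist y b = L - t} with hSdef
  have h0S : (0:ℝ) ∈ S := ⟨a, dist_self a, by simp [hLdef]⟩
  have hLS : L ∈ S := ⟨b, rfl, by simp [dist_self]⟩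
  -- distance between witnesses
  have hwd : ∀ {s t : ℝ} {y y' : X}, dist a y = s → dist y b = L - s →
      dist a y' = t → dist y' b = L - t → dist y y' = |s - t| := by
    intro s t y y' h1 h2 h3 h4
    have := btw_dist hfp (a := a) (b := b) (y := y) (y' := y')
      (by rw [h1, h2]; ring) (by rw [h3, h4]; ring)
    rwa [h1, h3] at this
  -- midpoint closure (for s ≤ t)
  have hmidS : ∀ s ∈ S, ∀ t ∈ S, s ≤ t → (s + t)/2 ∈ S := by
    rintro s ⟨y, hy1, hy2⟩ t ⟨y', hy1', hy2'⟩ hst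
    obtain ⟨m, hm1, hm2⟩ := hmid y y'
    have hd : dist y y' = t - s := by
      rw [hwd hy1 hy2 hy1' hy2', abs_of_nonpos (by linarith), neg_sub]
    refine ⟨m, ?_, ?_⟩
    · have up := dist_triangle a y m
      have low := dist_triangle a y' m
      rw [hy1] at up
      rw [hy1'] at low
      rw [hd] at hm1 hm2
      have := dist_comm y' m
      have := dist_comm m y'
      linarith [dist_triangle a m y', dist_comm y' m]
    · have up := dist_triangle m y' b
      have low := dist_triangle y b m
      rw [hy2'] at up
      rw [hy2] at low
      rw [hd] at hm1 hm2
      linarith [dist_triangle y m b, dist_comm y m]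
  -- S contains the interval
  have hIcc : ∀ t ∈ Icc (0:ℝ) L, t ∈ S := by
    intro t ht
    by_contra htS
    have hne1 : (S ∩ Icc 0 t).Nonempty := ⟨0, h0S, le_refl _, ht.1⟩
    have hbdd1 : BddAbove (S ∩ Icc 0 t) := ⟨t, fun x hx => hx.2.2⟩
    have hne2 : (S ∩ Icc t L).Nonempty := ⟨L, hLS, ht.2, le_refl _⟩
    have hbdd2 : BddBelow (S ∩ Icc t L) := ⟨t, fun x hx => hx.2.1⟩
    have hu := (hScl.inter isClosed_Icc).csSup_mem hne1 hbdd1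
    have hv := (hScl.inter isClosed_Icc).csInf_mem hne2 hbdd2
    set u := sSup (S ∩ Icc 0 t) with hudef
    set v := sInf (S ∩ Icc t L) with hvdef
    have hut : u < t := lt_of_le_of_ne hu.2.2 (fun e => htS (e ▸ hu.1))
    have htv : t < v := lt_of_le_of_ne hv.2.1 (fun e => htS (e.symm ▸ hv.1))
    have hw : (u + v)/2 ∈ S := hmidS u hu.1 v hv.1 (by linarith)
    rcases le_total ((u+v)/2) t with hc | hc
    · have : (u+v)/2 ≤ u := le_csSup hbdd1 ⟨hw, by linarith [hu.2.1], hc⟩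
      linarith
    · have : v ≤ (u+v)/2 := csInf_le hbdd2 ⟨hw, hc, by linarith [hv.2.2]⟩
      linarith
  -- choose the parametrization
  have hch : ∀ t : ℝ, t ∈ Icc (0:ℝ) L → ∃ y : X, dist a y = t ∧ dist y b = L - t :=
    fun t ht => hIcc t ht
  set γ : ℝ → X := fun t => if h : ∃ y : X, dist a y = t ∧ dist y b = L - t then h.choose else a
    with hγdef
  have hγP : ∀ t ∈ Icc (0:ℝ) L, dist a (γ t) = t ∧ dist (γ t) b = L - t := by
    intro t ht
    have h := hch t ht
    simp only [hγdef, dif_pos h]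
    exact h.choose_spec
  refine ⟨γ, ?_, ?_, ?_⟩
  · intro u hu v hv
    obtain ⟨e1, e2⟩ := hγP u hu
    obtain ⟨e3, e4⟩ := hγP v hv
    exact hwd e1 e2 e3 e4
  · have := (hγP 0 ⟨le_refl _, dist_nonneg⟩).1
    rw [dist_eq_zero] at this
    exact this.symm
  · have := (hγP L ⟨dist_nonneg, le_refl _⟩).2
    rw [sub_self, dist_eq_zero] at this
    exact this

/-- The betweenness set is closed when the space is complete. -/
theorem btwS_closed (hfp : FourPt X) [CompleteSpace X] (a b : X) :
    IsClosed {t : ℝ | ∃ y : X, dist a y = t ∧ dist y b = dist a b - t} := by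
  set L := dist a b
  apply IsSeqClosed.isClosed
  intro x p hx hxp
  choose y hy1 hy2 using hx
  have hyc : CauchySeq y := by
    rw [Metric.cauchySeq_iff]
    intro ε hε
    obtain ⟨N, hN⟩ := Metric.cauchySeq_iff.mp hxp.cauchySeq ε hε
    refine ⟨N, fun i hi j hj => ?_⟩
    have hd : dist (y i) (y j) = |x i - x j| := by
      have := btw_dist hfp (a := a) (b := b) (y := y i) (y' := y j)
        (by rw [hy1 i, hy2 i]; ring) (by rw [hy1 j, hy2 j]; ring)
      rwa [hy1 i, hy1 j] at this
    rw [hd, ← Real.dist_eq]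
    exact hN i hi j hj
  obtain ⟨yl, hyl⟩ := cauchySeq_tendsto_of_complete hyc
  refine ⟨yl, ?_, ?_⟩
  · have h1 : Tendsto (fun n => dist a (y n)) atTop (nhds (dist a yl)) :=
      tendsto_const_nhds.dist hyl
    have h2 : Tendsto (fun n => dist a (y n)) atTop (nhds p) := by
      apply hxp.congr
      intro n
      exact (hy1 n).symm
    exact tendsto_nhds_unique h1 h2
  · have h1 : Tendsto (fun n => dist (y n) b) atTop (nhds (dist yl b)) :=
      hyl.dist tendsto_const_nhds
    have h2 : Tendsto (fun n => dist (y n) b) atTop (nhds (L - p)) := by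
      have := (tendsto_const_nhds (x := L) (f := Filter.atTop (α := ℕ))).sub hxp
      apply this.congr
      intro n
      rw [← hy2 n]
    exact tendsto_nhds_unique h1 h2

end Geod

section Glue
universe v
variable {M₀ M₁ M₂ : Type v} [MetricSpace M₀] [MetricSpace M₁] [MetricSpace M₂]

/-- Underlying type of the amalgam of `M₁` and `M₂` along `M₀`. -/
structure GlueT (f₁ : M₀ → M₁) (f₂ : M₀ → M₂) : Type v where
  toSum : M₁ ⊕ M₂

variable (f₁ : M₀ → M₁) (f₂ : M₀ → M₂)

def jl (x : M₁) : GlueT f₁ f₂ := ⟨Sum.inl x⟩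
def jr (y : M₂) : GlueT f₁ f₂ := ⟨Sum.inr y⟩

/-- Crossing distance. -/
noncomputable def Dg (x : M₁) (y : M₂) : ℝ := ⨅ z : M₀, (dist x (f₁ z) + dist (f₂ z) y)

noncomputable def gdist : GlueT f₁ f₂ → GlueT f₁ f₂ → ℝ
  | ⟨Sum.inl x⟩, ⟨Sum.inl y⟩ => dist x y
  | ⟨Sum.inl x⟩, ⟨Sum.inr y⟩ => Dg f₁ f₂ x y
  | ⟨Sum.inr x⟩, ⟨Sum.inl y⟩ => Dg f₁ f₂ y x
  | ⟨Sum.inr x⟩, ⟨Sum.inr y⟩ => dist x y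

theorem gdist_ll (x y : M₁) : gdist f₁ f₂ (jl f₁ f₂ x) (jl f₁ f₂ y) = dist x y := rfl
theorem gdist_lr (x : M₁) (y : M₂) : gdist f₁ f₂ (jl f₁ f₂ x) (jr f₁ f₂ y) = Dg f₁ f₂ x y := rfl
theorem gdist_rl (x : M₂) (y : M₁) : gdist f₁ f₂ (jr f₁ f₂ x) (jl f₁ f₂ y) = Dg f₁ f₂ y x := rfl
theorem gdist_rr (x y : M₂) : gdist f₁ f₂ (jr f₁ f₂ x) (jr f₁ f₂ y) = dist x y := rfl

variable [Nonempty M₀]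

theorem Dg_bdd (x : M₁) (y : M₂) :
    BddBelow (Set.range fun z : M₀ => dist x (f₁ z) + dist (f₂ z) y) := by
  refine ⟨0, ?_⟩
  rintro _ ⟨z, rfl⟩
  positivity

theorem Dg_le (x : M₁) (y : M₂) (z : M₀) : Dg f₁ f₂ x y ≤ dist x (f₁ z) + dist (f₂ z) y :=
  ciInf_le (Dg_bdd f₁ f₂ x y) z

theorem le_Dg {c : ℝ} (x : M₁) (y : M₂) (h : ∀ z : M₀, c ≤ dist x (f₁ z) + dist (f₂ z) y) :
    c ≤ Dg f₁ f₂ x y := le_ciInf h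

theorem exists_Dg_lt {c : ℝ} (x : M₁) (y : M₂) (h : Dg f₁ f₂ x y < c) :
    ∃ z : M₀, dist x (f₁ z) + dist (f₂ z) y < c := exists_lt_of_ciInf_lt h

theorem Dg_nonneg (x : M₁) (y : M₂) : 0 ≤ Dg f₁ f₂ x y :=
  le_Dg f₁ f₂ x y fun z => by positivity

variable (hf₁ : ∀ x y : M₀, dist (f₁ x) (f₁ y) = dist x y)
variable (hf₂ : ∀ x y : M₀, dist (f₂ x) (f₂ y) = dist x y)

/-- The glued pseudometric space. -/
noncomputable def gluePMS : PseudoMetricSpace (GlueT f₁ f₂) where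
  dist := gdist f₁ f₂
  dist_self := by rintro ⟨x | x⟩ <;> exact dist_self x
  dist_comm := by
    rintro ⟨x | x⟩ ⟨y | y⟩
    · exact dist_comm x y
    · rfl
    · rfl
    · exact dist_comm x y
  dist_triangle := by
    rintro ⟨a | a⟩ ⟨b | b⟩ ⟨c | c⟩
    · exact dist_triangle a b c
    · -- llr
      apply le_of_forall_pos_le_add
      intro ε hε
      obtain ⟨z, hz⟩ := exists_Dg_lt f₁ f₂ b c (lt_add_of_pos_right _ hε)
      calc Dg f₁ f₂ a c ≤ dist a (f₁ z) + dist (f₂ z) c := Dg_le f₁ f₂ a c z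
      _ ≤ dist a b + (dist b (f₁ z) + dist (f₂ z) c) := by
          linarith [dist_triangle a b (f₁ z)]
      _ ≤ dist a b + Dg f₁ f₂ b c + ε := by linarith
    · -- lrl
      apply le_of_forall_pos_le_add
      intro ε hε
      have hε2 : (0:ℝ) < ε/2 := by linarith
      obtain ⟨z, hz⟩ := exists_Dg_lt f₁ f₂ a b (lt_add_of_pos_right _ hε2)
      obtain ⟨z', hz'⟩ := exists_Dg_lt f₁ f₂ c b (lt_add_of_pos_right _ hε2)
      have hmid : dist (f₁ z) (f₁ z') ≤ dist (f₂ z) b + dist (f₂ z') b := by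
        rw [hf₁ z z', ← hf₂ z z']
        linarith [dist_triangle (f₂ z) b (f₂ z'), dist_comm b (f₂ z')]
      calc dist a c ≤ dist a (f₁ z) + dist (f₁ z) (f₁ z') + dist (f₁ z') c :=
            dist_triangle4 a (f₁ z) (f₁ z') c
      _ ≤ (dist a (f₁ z) + dist (f₂ z) b) + (dist c (f₁ z') + dist (f₂ z') b) := by
          linarith [dist_comm (f₁ z') c]
      _ ≤ Dg f₁ f₂ a b + Dg f₁ f₂ c b + ε := by linarith
    · -- lrr
      apply le_of_forall_pos_le_add
      intro ε hε
      obtain ⟨z, hz⟩ := exists_Dg_lt f₁ f₂ a b (lt_add_of_pos_right _ hε)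
      calc Dg f₁ f₂ a c ≤ dist a (f₁ z) + dist (f₂ z) c := Dg_le f₁ f₂ a c z
      _ ≤ dist a (f₁ z) + dist (f₂ z) b + dist b c := by
          linarith [dist_triangle (f₂ z) b c]
      _ ≤ Dg f₁ f₂ a b + dist b c + ε := by linarith
    · -- rll
      apply le_of_forall_pos_le_add
      intro ε hε
      obtain ⟨z, hz⟩ := exists_Dg_lt f₁ f₂ b a (lt_add_of_pos_right _ hε)
      calc Dg f₁ f₂ c a ≤ dist c (f₁ z) + dist (f₂ z) a := Dg_le f₁ f₂ c a z
      _ ≤ dist c b + dist b (f₁ z) + dist (f₂ z) a := by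
          linarith [dist_triangle c b (f₁ z)]
      _ ≤ Dg f₁ f₂ b a + dist b c + ε := by linarith [dist_comm c b]
    · -- rlr
      apply le_of_forall_pos_le_add
      intro ε hε
      have hε2 : (0:ℝ) < ε/2 := by linarith
      obtain ⟨z, hz⟩ := exists_Dg_lt f₁ f₂ b a (lt_add_of_pos_right _ hε2)
      obtain ⟨z', hz'⟩ := exists_Dg_lt f₁ f₂ b c (lt_add_of_pos_right _ hε2)
      have hmid : dist (f₂ z) (f₂ z') ≤ dist b (f₁ z) + dist b (f₁ z') := by
        rw [hf₂ z z', ← hf₁ z z']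
        linarith [dist_triangle (f₁ z) b (f₁ z'), dist_comm (f₁ z) b]
      calc dist a c ≤ dist a (f₂ z) + dist (f₂ z) (f₂ z') + dist (f₂ z') c :=
            dist_triangle4 a (f₂ z) (f₂ z') c
      _ ≤ (dist b (f₁ z) + dist (f₂ z) a) + (dist b (f₁ z') + dist (f₂ z') c) := by
          linarith [dist_comm a (f₂ z)]
      _ ≤ Dg f₁ f₂ b a + Dg f₁ f₂ b c + ε := by linarith
    · -- rrl
      apply le_of_forall_pos_le_add
      intro ε hε
      obtain ⟨z, hz⟩ := exists_Dg_lt f₁ f₂ c b (lt_add_of_pos_right _ hε)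
      calc Dg f₁ f₂ c a ≤ dist c (f₁ z) + dist (f₂ z) a := Dg_le f₁ f₂ c a z
      _ ≤ dist c (f₁ z) + dist (f₂ z) b + dist b a := by
          linarith [dist_triangle (f₂ z) b a]
      _ ≤ dist a b + Dg f₁ f₂ c b + ε := by linarith [dist_comm b a]
    · exact dist_triangle a b c

end Glue

section GlueHyp
universe v
variable {M₀ M₁ M₂ : Type v} [MetricSpace M₀] [MetricSpace M₁] [MetricSpace M₂]
variable (f₁ : M₀ → M₁) (f₂ : M₀ → M₂) (p₀ : M₀) (p₁ : M₁) (p₂ : M₂)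

theorem glue_fourPt [Nonempty M₀] (h₀ : IsRTree M₀) (hT₁ : FourPt M₁) (hT₂ : FourPt M₂)
    (hf₁ : ∀ x y : M₀, dist (f₁ x) (f₁ y) = dist x y)
    (hf₂ : ∀ x y : M₀, dist (f₂ x) (f₂ y) = dist x y)
    (hb₁ : f₁ p₀ = p₁) (hb₂ : f₂ p₀ = p₂) :
    @FourPt (GlueT f₁ f₂) (gluePMS f₁ f₂ hf₁ hf₂) := by
  letI := gluePMS f₁ f₂ hf₁ hf₂
  set P : GlueT f₁ f₂ := jl f₁ f₂ p₁ with hPdef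
  have hgr1 := FourPt.gromov hT₁
  have hgr2 := FourPt.gromov hT₂
  have hp₁z : ∀ z : M₀, dist p₁ (f₁ z) = dist p₀ z := fun z => by rw [← hb₁, hf₁]
  have hp₂z : ∀ z : M₀, dist p₂ (f₂ z) = dist p₀ z := fun z => by rw [← hb₂, hf₂]
  have hPr : ∀ y : M₂, dist P (jr f₁ f₂ y) = dist p₂ y := by
    intro y
    show Dg f₁ f₂ p₁ y = dist p₂ y
    apply le_antisymm
    · have h := Dg_le f₁ f₂ p₁ y p₀
      rw [hb₁, hb₂, dist_self] at h
      linarith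
    · apply le_Dg
      intro z
      have := dist_triangle p₂ (f₂ z) y
      rw [hp₂z z, ← hp₁z z] at this
      exact this
  have hgrA : ∀ (x : M₁) (y : M₂),
      gr P (jl f₁ f₂ x) (jr f₁ f₂ y) = (dist p₁ x + dist p₂ y - Dg f₁ f₂ x y)/2 := by
    intro x y
    simp only [gr]
    rw [hPr y]
    rfl
  have hgrLL : ∀ x y : M₁, gr P (jl f₁ f₂ x) (jl f₁ f₂ y) = gr p₁ x y := fun x y => rfl
  have hgrRR : ∀ x y : M₂, gr P (jr f₁ f₂ x) (jr f₁ f₂ y) = gr p₂ x y := by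
    intro x y
    simp only [gr]
    rw [hPr x, hPr y]
    rfl
  have hgrfz : ∀ (z z' : M₀), gr p₁ (f₁ z) (f₁ z') = gr p₂ (f₂ z) (f₂ z') := by
    intro z z'
    simp only [gr]
    rw [hp₁z, hp₁z, hp₂z, hp₂z, hf₁, hf₂]
  -- witness expansion
  have hSa : ∀ (x : M₁) (y : M₂) (z : M₀),
      gr p₁ x (f₁ z) + gr p₂ y (f₂ z) - dist p₀ z
        = (dist p₁ x + dist p₂ y - (dist x (f₁ z) + dist (f₂ z) y))/2 := by
    intro x y z
    simp only [gr]
    rw [hp₁z, hp₂z]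
    linarith [dist_comm y (f₂ z), dist_comm (f₂ z) y]
  -- the key geometric lemma
  have hLstar : ∀ (x : M₁) (y : M₂) (z₀ : M₀),
      min (gr p₁ x (f₁ z₀)) (gr p₂ y (f₂ z₀)) ≤ gr P (jl f₁ f₂ x) (jr f₁ f₂ y) := by
    intro x y z₀
    set h := min (gr p₁ x (f₁ z₀)) (gr p₂ y (f₂ z₀)) with hdef
    have h0 : 0 ≤ h := le_min (gr_nonneg _ _ _) (gr_nonneg _ _ _)
    have hle : h ≤ dist p₀ z₀ := by
      refine le_trans (min_le_left _ _) ?_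
      rw [← hp₁z z₀]
      exact gr_le_right p₁ x (f₁ z₀)
    obtain ⟨γ, hiso, hγ0, hγL, _⟩ := tree_geo h₀ p₀ z₀
    obtain ⟨e1, e2⟩ := geo_btw hiso hγ0 hγL (⟨h0, hle⟩ : h ∈ Icc 0 (dist p₀ z₀))
    have hc1 : gr p₁ (f₁ (γ h)) (f₁ z₀) = h := by
      simp only [gr]
      rw [hp₁z, hp₁z, hf₁]
      linarith [e1, e2, dist_comm z₀ (γ h), dist_comm (γ h) z₀]
    have hc2 : gr p₂ (f₂ (γ h)) (f₂ z₀) = h := by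
      rw [← hgrfz]
      exact hc1
    have hx : dist x (f₁ (γ h)) ≤ dist p₁ x - h := by
      have hg := hgr1 p₁ x (f₁ (γ h)) (f₁ z₀)
      have hmge : h ≤ gr p₁ x (f₁ (γ h)) :=
        le_trans (le_min (min_le_left _ _) hc1.ge) hg
      simp only [gr] at hmge
      rw [hp₁z] at hmge
      linarith [e1]
    have hy : dist (f₂ (γ h)) y ≤ dist p₂ y - h := by
      have hg := hgr2 p₂ y (f₂ (γ h)) (f₂ z₀)
      have hmge : h ≤ gr p₂ y (f₂ (γ h)) :=
        le_trans (le_min (min_le_right _ _) hc2.ge) hg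
      simp only [gr] at hmge
      rw [hp₂z] at hmge
      linarith [e1, dist_comm y (f₂ (γ h)), dist_comm (f₂ (γ h)) y]
    have hD := Dg_le f₁ f₂ x y (γ h)
    rw [hgrA]
    linarith
  -- the case lemmas
  have caseLR : ∀ (a : M₁) (b : M₂) (z : GlueT f₁ f₂),
      min (gr P (jl f₁ f₂ a) z) (gr P (jr f₁ f₂ b) z) ≤ gr P (jl f₁ f₂ a) (jr f₁ f₂ b) := by
    rintro a b ⟨c | c⟩
    · -- z = jl c
      apply le_of_forall_pos_le_add
      intro ε hε
      show min (gr P (jl f₁ f₂ a) (jl f₁ f₂ c)) (gr P (jr f₁ f₂ b) (jl f₁ f₂ c))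
        ≤ gr P (jl f₁ f₂ a) (jr f₁ f₂ b) + ε
      have hB : gr P (jr f₁ f₂ b) (jl f₁ f₂ c) = gr P (jl f₁ f₂ c) (jr f₁ f₂ b) := gr_comm _ _ _
      rw [hB, hgrA c b]
      obtain ⟨z, hz⟩ := exists_Dg_lt f₁ f₂ c b
        (lt_add_of_pos_right _ (by linarith : (0:ℝ) < 2*ε))
      have hBe : (dist p₁ c + dist p₂ b - Dg f₁ f₂ c b)/2 - ε
          ≤ gr p₁ c (f₁ z) + gr p₂ b (f₂ z) - dist p₀ z := by
        rw [hSa]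
        linarith
      have ha1 : gr p₁ c (f₁ z) ≤ dist p₀ z := by
        rw [← hp₁z z]; exact gr_le_right _ _ _
      have ha2 : gr p₂ b (f₂ z) ≤ dist p₀ z := by
        rw [← hp₂z z]; exact gr_le_right _ _ _
      have hstar := hLstar a b z
      have hga := hgr1 p₁ a (f₁ z) c
      -- min (gr p₁ a c) (gr p₁ (f₁ z) c) ≤ gr p₁ a (f₁ z)
      rcases min_le_iff.mp hga with hcase | hcase
      · -- gr p₁ a c ≤ gr p₁ a (f₁ z)
        have k1 : min (gr p₁ a c) ((dist p₁ c + dist p₂ b - Dg f₁ f₂ c b)/2) - ε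
            ≤ min (gr p₁ a (f₁ z)) (gr p₂ b (f₂ z)) := by
          apply le_min
          · calc _ ≤ gr p₁ a c - 0 := by
                  linarith [min_le_left (gr p₁ a c) ((dist p₁ c + dist p₂ b - Dg f₁ f₂ c b)/2), hε.le]
            _ ≤ gr p₁ a (f₁ z) := by linarith
          · calc _ ≤ (dist p₁ c + dist p₂ b - Dg f₁ f₂ c b)/2 - ε :=
                  by linarith [min_le_right (gr p₁ a c) ((dist p₁ c + dist p₂ b - Dg f₁ f₂ c b)/2)]
            _ ≤ gr p₂ b (f₂ z) := by linarith
        have := le_trans k1 hstar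
        rw [hgrLL]
        linarith
      · -- gr p₁ (f₁ z) c ≤ gr p₁ a (f₁ z)
        have hBa : (dist p₁ c + dist p₂ b - Dg f₁ f₂ c b)/2 - ε ≤ gr p₁ (f₁ z) c := by
          have := gr_comm p₁ c (f₁ z)
          linarith
        have k1 : min (gr p₁ a c) ((dist p₁ c + dist p₂ b - Dg f₁ f₂ c b)/2) - ε
            ≤ min (gr p₁ a (f₁ z)) (gr p₂ b (f₂ z)) := by
          apply le_min
          · calc _ ≤ (dist p₁ c + dist p₂ b - Dg f₁ f₂ c b)/2 - ε :=
                  by linarith [min_le_right (gr p₁ a c) ((dist p₁ c + dist p₂ b - Dg f₁ f₂ c b)/2)]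
            _ ≤ gr p₁ (f₁ z) c := hBa
            _ ≤ gr p₁ a (f₁ z) := hcase
          · calc _ ≤ (dist p₁ c + dist p₂ b - Dg f₁ f₂ c b)/2 - ε :=
                  by linarith [min_le_right (gr p₁ a c) ((dist p₁ c + dist p₂ b - Dg f₁ f₂ c b)/2)]
            _ ≤ gr p₂ b (f₂ z) := by linarith
        have := le_trans k1 hstar
        rw [hgrLL]
        linarith
    · -- z = jr c
      apply le_of_forall_pos_le_add
      intro ε hε
      show min (gr P (jl f₁ f₂ a) (jr f₁ f₂ c)) (gr P (jr f₁ f₂ b) (jr f₁ f₂ c))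
        ≤ gr P (jl f₁ f₂ a) (jr f₁ f₂ b) + ε
      rw [hgrA a c, hgrRR b c]
      obtain ⟨z, hz⟩ := exists_Dg_lt f₁ f₂ a c
        (lt_add_of_pos_right _ (by linarith : (0:ℝ) < 2*ε))
      have hAe : (dist p₁ a + dist p₂ c - Dg f₁ f₂ a c)/2 - ε
          ≤ gr p₁ a (f₁ z) + gr p₂ c (f₂ z) - dist p₀ z := by
        rw [hSa]
        linarith
      have ha1 : gr p₁ a (f₁ z) ≤ dist p₀ z := by
        rw [← hp₁z z]; exact gr_le_right _ _ _
      have ha2 : gr p₂ c (f₂ z) ≤ dist p₀ z := by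
        rw [← hp₂z z]; exact gr_le_right _ _ _
      have hstar := hLstar a b z
      have hgb := hgr2 p₂ b (f₂ z) c
      rcases min_le_iff.mp hgb with hcase | hcase
      · have k1 : min ((dist p₁ a + dist p₂ c - Dg f₁ f₂ a c)/2) (gr p₂ b c) - ε
            ≤ min (gr p₁ a (f₁ z)) (gr p₂ b (f₂ z)) := by
          apply le_min
          · calc _ ≤ (dist p₁ a + dist p₂ c - Dg f₁ f₂ a c)/2 - ε :=
                  by linarith [min_le_left ((dist p₁ a + dist p₂ c - Dg f₁ f₂ a c)/2) (gr p₂ b c)]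
            _ ≤ gr p₁ a (f₁ z) := by linarith
          · calc _ ≤ gr p₂ b c - 0 := by
                  linarith [min_le_right ((dist p₁ a + dist p₂ c - Dg f₁ f₂ a c)/2) (gr p₂ b c), hε.le]
            _ ≤ gr p₂ b (f₂ z) := by linarith
        have := le_trans k1 hstar
        linarith
      · -- gr p₂ (f₂ z) c ≤ gr p₂ b (f₂ z)
        have hca : (dist p₁ a + dist p₂ c - Dg f₁ f₂ a c)/2 - ε ≤ gr p₂ (f₂ z) c := by
          have := gr_comm p₂ c (f₂ z)
          linarith
        have k1 : min ((dist p₁ a + dist p₂ c - Dg f₁ f₂ a c)/2) (gr p₂ b c) - ε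
            ≤ min (gr p₁ a (f₁ z)) (gr p₂ b (f₂ z)) := by
          apply le_min
          · calc _ ≤ (dist p₁ a + dist p₂ c - Dg f₁ f₂ a c)/2 - ε :=
                  by linarith [min_le_left ((dist p₁ a + dist p₂ c - Dg f₁ f₂ a c)/2) (gr p₂ b c)]
            _ ≤ gr p₁ a (f₁ z) := by linarith
          · calc _ ≤ (dist p₁ a + dist p₂ c - Dg f₁ f₂ a c)/2 - ε :=
                  by linarith [min_le_left ((dist p₁ a + dist p₂ c - Dg f₁ f₂ a c)/2) (gr p₂ b c)]
            _ ≤ gr p₂ (f₂ z) c := hca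
            _ ≤ gr p₂ b (f₂ z) := hcase
        have := le_trans k1 hstar
        linarith
  have caseLL : ∀ (a b : M₁) (z : GlueT f₁ f₂),
      min (gr P (jl f₁ f₂ a) z) (gr P (jl f₁ f₂ b) z) ≤ gr P (jl f₁ f₂ a) (jl f₁ f₂ b) := by
    rintro a b ⟨c | c⟩
    · exact hgr1 p₁ a b c
    · apply le_of_forall_pos_le_add
      intro ε hε
      show min (gr P (jl f₁ f₂ a) (jr f₁ f₂ c)) (gr P (jl f₁ f₂ b) (jr f₁ f₂ c))
        ≤ gr P (jl f₁ f₂ a) (jl f₁ f₂ b) + ε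
      rw [hgrA a c, hgrA b c, hgrLL a b]
      obtain ⟨z, hz⟩ := exists_Dg_lt f₁ f₂ a c
        (lt_add_of_pos_right _ (by linarith : (0:ℝ) < 2*ε))
      obtain ⟨z', hz'⟩ := exists_Dg_lt f₁ f₂ b c
        (lt_add_of_pos_right _ (by linarith : (0:ℝ) < 2*ε))
      have bz1 : gr p₁ a (f₁ z) ≤ dist p₀ z := by rw [← hp₁z z]; exact gr_le_right _ _ _
      have bz2 : gr p₂ c (f₂ z) ≤ dist p₀ z := by rw [← hp₂z z]; exact gr_le_right _ _ _
      have bz3 : gr p₁ b (f₁ z') ≤ dist p₀ z' := by rw [← hp₁z z']; exact gr_le_right _ _ _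
      have bz4 : gr p₂ c (f₂ z') ≤ dist p₀ z' := by rw [← hp₂z z']; exact gr_le_right _ _ _
      have hA1 : (dist p₁ a + dist p₂ c - Dg f₁ f₂ a c)/2 - ε ≤ gr p₁ a (f₁ z) := by
        linarith [hSa a c z]
      have hA2 : (dist p₁ a + dist p₂ c - Dg f₁ f₂ a c)/2 - ε ≤ gr p₂ c (f₂ z) := by
        linarith [hSa a c z]
      have hB1 : (dist p₁ b + dist p₂ c - Dg f₁ f₂ b c)/2 - ε ≤ gr p₁ b (f₁ z') := by
        linarith [hSa b c z']
      have hB2 : (dist p₁ b + dist p₂ c - Dg f₁ f₂ b c)/2 - ε ≤ gr p₂ c (f₂ z') := by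
        linarith [hSa b c z']
      obtain ⟨m, hmdef⟩ : ∃ m : ℝ, m = min ((dist p₁ a + dist p₂ c - Dg f₁ f₂ a c)/2)
        ((dist p₁ b + dist p₂ c - Dg f₁ f₂ b c)/2) - ε := ⟨_, rfl⟩
      have hm1 : m ≤ gr p₁ a (f₁ z) := by
        have := min_le_left ((dist p₁ a + dist p₂ c - Dg f₁ f₂ a c)/2)
          ((dist p₁ b + dist p₂ c - Dg f₁ f₂ b c)/2)
        linarith
      have hm2 : m ≤ gr p₂ (f₂ z) c := by
        have := min_le_left ((dist p₁ a + dist p₂ c - Dg f₁ f₂ a c)/2)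
          ((dist p₁ b + dist p₂ c - Dg f₁ f₂ b c)/2)
        linarith [gr_comm p₂ c (f₂ z)]
      have hm3 : m ≤ gr p₂ (f₂ z') c := by
        have := min_le_right ((dist p₁ a + dist p₂ c - Dg f₁ f₂ a c)/2)
          ((dist p₁ b + dist p₂ c - Dg f₁ f₂ b c)/2)
        linarith [gr_comm p₂ c (f₂ z')]
      have hm4 : m ≤ gr p₁ b (f₁ z') := by
        have := min_le_right ((dist p₁ a + dist p₂ c - Dg f₁ f₂ a c)/2)
          ((dist p₁ b + dist p₂ c - Dg f₁ f₂ b c)/2)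
        linarith
      have s3 : m ≤ gr p₂ (f₂ z) (f₂ z') :=
        le_trans (le_min hm2 hm3) (hgr2 p₂ (f₂ z) (f₂ z') c)
      have s3' : m ≤ gr p₁ (f₁ z) (f₁ z') := by rw [hgrfz]; exact s3
      have s2 : m ≤ gr p₁ b (f₁ z) :=
        le_trans (le_min hm4 s3') (hgr1 p₁ b (f₁ z) (f₁ z'))
      have s1 : m ≤ gr p₁ a b :=
        le_trans (le_min hm1 s2) (hgr1 p₁ a b (f₁ z))
      rw [hmdef] at s1
      linarith
  have caseRR : ∀ (a b : M₂) (z : GlueT f₁ f₂),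
      min (gr P (jr f₁ f₂ a) z) (gr P (jr f₁ f₂ b) z) ≤ gr P (jr f₁ f₂ a) (jr f₁ f₂ b) := by
    rintro a b ⟨c | c⟩
    · apply le_of_forall_pos_le_add
      intro ε hε
      show min (gr P (jr f₁ f₂ a) (jl f₁ f₂ c)) (gr P (jr f₁ f₂ b) (jl f₁ f₂ c))
        ≤ gr P (jr f₁ f₂ a) (jr f₁ f₂ b) + ε
      rw [gr_comm P (jr f₁ f₂ a) (jl f₁ f₂ c), gr_comm P (jr f₁ f₂ b) (jl f₁ f₂ c),
        hgrA c a, hgrA c b, hgrRR a b]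
      obtain ⟨z, hz⟩ := exists_Dg_lt f₁ f₂ c a
        (lt_add_of_pos_right _ (by linarith : (0:ℝ) < 2*ε))
      obtain ⟨z', hz'⟩ := exists_Dg_lt f₁ f₂ c b
        (lt_add_of_pos_right _ (by linarith : (0:ℝ) < 2*ε))
      have bz1 : gr p₁ c (f₁ z) ≤ dist p₀ z := by rw [← hp₁z z]; exact gr_le_right _ _ _
      have bz2 : gr p₂ a (f₂ z) ≤ dist p₀ z := by rw [← hp₂z z]; exact gr_le_right _ _ _
      have bz3 : gr p₁ c (f₁ z') ≤ dist p₀ z' := by rw [← hp₁z z']; exact gr_le_right _ _ _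
      have bz4 : gr p₂ b (f₂ z') ≤ dist p₀ z' := by rw [← hp₂z z']; exact gr_le_right _ _ _
      have hA1 : (dist p₁ c + dist p₂ a - Dg f₁ f₂ c a)/2 - ε ≤ gr p₁ c (f₁ z) := by
        linarith [hSa c a z]
      have hA2 : (dist p₁ c + dist p₂ a - Dg f₁ f₂ c a)/2 - ε ≤ gr p₂ a (f₂ z) := by
        linarith [hSa c a z]
      have hB1 : (dist p₁ c + dist p₂ b - Dg f₁ f₂ c b)/2 - ε ≤ gr p₁ c (f₁ z') := by
        linarith [hSa c b z']
      have hB2 : (dist p₁ c + dist p₂ b - Dg f₁ f₂ c b)/2 - ε ≤ gr p₂ b (f₂ z') := by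
        linarith [hSa c b z']
      obtain ⟨m, hmdef⟩ : ∃ m : ℝ, m = min ((dist p₁ c + dist p₂ a - Dg f₁ f₂ c a)/2)
        ((dist p₁ c + dist p₂ b - Dg f₁ f₂ c b)/2) - ε := ⟨_, rfl⟩
      have hm1 : m ≤ gr p₂ a (f₂ z) := by
        have := min_le_left ((dist p₁ c + dist p₂ a - Dg f₁ f₂ c a)/2)
          ((dist p₁ c + dist p₂ b - Dg f₁ f₂ c b)/2)
        linarith
      have hm2 : m ≤ gr p₁ (f₁ z) c := by
        have := min_le_left ((dist p₁ c + dist p₂ a - Dg f₁ f₂ c a)/2)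
          ((dist p₁ c + dist p₂ b - Dg f₁ f₂ c b)/2)
        linarith [gr_comm p₁ c (f₁ z)]
      have hm3 : m ≤ gr p₁ (f₁ z') c := by
        have := min_le_right ((dist p₁ c + dist p₂ a - Dg f₁ f₂ c a)/2)
          ((dist p₁ c + dist p₂ b - Dg f₁ f₂ c b)/2)
        linarith [gr_comm p₁ c (f₁ z')]
      have hm4 : m ≤ gr p₂ b (f₂ z') := by
        have := min_le_right ((dist p₁ c + dist p₂ a - Dg f₁ f₂ c a)/2)
          ((dist p₁ c + dist p₂ b - Dg f₁ f₂ c b)/2)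
        linarith
      have s3 : m ≤ gr p₁ (f₁ z) (f₁ z') :=
        le_trans (le_min hm2 hm3) (hgr1 p₁ (f₁ z) (f₁ z') c)
      have s3' : m ≤ gr p₂ (f₂ z) (f₂ z') := by rw [← hgrfz]; exact s3
      have s2 : m ≤ gr p₂ b (f₂ z) :=
        le_trans (le_min hm4 s3') (hgr2 p₂ b (f₂ z) (f₂ z'))
      have s1 : m ≤ gr p₂ a b :=
        le_trans (le_min hm1 s2) (hgr2 p₂ a b (f₂ z))
      rw [hmdef] at s1
      linarith
    · show min (gr P (jr f₁ f₂ a) (jr f₁ f₂ c)) (gr P (jr f₁ f₂ b) (jr f₁ f₂ c))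
        ≤ gr P (jr f₁ f₂ a) (jr f₁ f₂ b)
      rw [hgrRR a c, hgrRR b c, hgrRR a b]
      exact hgr2 p₂ a b c
  apply fourPt_of_gromov_at P
  rintro ⟨x | x⟩ ⟨y | y⟩ z
  · exact caseLL x y z
  · exact caseLR x y z
  · show min (gr P (jr f₁ f₂ x) z) (gr P (jl f₁ f₂ y) z) ≤ gr P (jr f₁ f₂ x) (jl f₁ f₂ y)
    rw [min_comm, gr_comm P (jr f₁ f₂ x) (jl f₁ f₂ y)]
    exact caseLR y x z
  · exact caseRR x y z

end GlueHyp

section GlueMid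
universe v
variable {M₀ M₁ M₂ : Type v} [MetricSpace M₀] [MetricSpace M₁] [MetricSpace M₂]
variable (f₁ : M₀ → M₁) (f₂ : M₀ → M₂)

/-- Point at a given parameter on the geodesic. -/
theorem tree_point {X : Type*} [MetricSpace X] (h : IsRTree X) (a b : X) {t : ℝ}
    (h0 : 0 ≤ t) (ht : t ≤ dist a b) : ∃ m : X, dist a m = t ∧ dist m b = dist a b - t := by
  obtain ⟨γ, hiso, hγ0, hγL, _⟩ := tree_geo h a b
  exact ⟨γ t, geo_btw hiso hγ0 hγL ⟨h0, ht⟩⟩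

variable [Nonempty M₀]

theorem gdist_comm' (x y : GlueT f₁ f₂) : gdist f₁ f₂ x y = gdist f₁ f₂ y x := by
  rcases x with ⟨x | x⟩ <;> rcases y with ⟨y | y⟩
  · exact dist_comm x y
  · rfl
  · rfl
  · exact dist_comm x y

theorem glue_approx_mid (h₁ : IsRTree M₁) (h₂ : IsRTree M₂)
    (a b : GlueT f₁ f₂) {ε : ℝ} (hε : 0 < ε) :
    ∃ m : GlueT f₁ f₂, gdist f₁ f₂ a m ≤ gdist f₁ f₂ a b / 2 + ε ∧
      gdist f₁ f₂ m b ≤ gdist f₁ f₂ a b / 2 + ε := by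
  have main : ∀ (x : M₁) (y : M₂), ∃ m : GlueT f₁ f₂,
      gdist f₁ f₂ (jl f₁ f₂ x) m ≤ Dg f₁ f₂ x y / 2 + ε ∧
      gdist f₁ f₂ m (jr f₁ f₂ y) ≤ Dg f₁ f₂ x y / 2 + ε := by
    intro x y
    obtain ⟨z, hz⟩ := exists_Dg_lt f₁ f₂ x y (lt_add_of_pos_right _ hε)
    have hD0 := Dg_nonneg f₁ f₂ x y
    have hDle := Dg_le f₁ f₂ x y z
    rcases le_total (Dg f₁ f₂ x y / 2) (dist x (f₁ z)) with hc | hc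
    · obtain ⟨m, hm1, hm2⟩ := tree_point h₁ x (f₁ z) (by linarith) hc
      refine ⟨jl f₁ f₂ m, ?_, ?_⟩
      · show dist x m ≤ Dg f₁ f₂ x y / 2 + ε
        rw [hm1]
        linarith
      · show Dg f₁ f₂ m y ≤ Dg f₁ f₂ x y / 2 + ε
        have := Dg_le f₁ f₂ m y z
        linarith [hm2]
    · have ht2 : Dg f₁ f₂ x y / 2 - dist x (f₁ z) ≤ dist (f₂ z) y := by linarith
      obtain ⟨m, hm1, hm2⟩ := tree_point h₂ (f₂ z) y (by linarith) ht2
      refine ⟨jr f₁ f₂ m, ?_, ?_⟩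
      · show Dg f₁ f₂ x m ≤ Dg f₁ f₂ x y / 2 + ε
        have := Dg_le f₁ f₂ x m z
        linarith [hm1]
      · show dist m y ≤ Dg f₁ f₂ x y / 2 + ε
        rw [hm2]
        linarith
  rcases a with ⟨a | a⟩ <;> rcases b with ⟨b | b⟩
  · obtain ⟨m, hm1, hm2⟩ := tree_point h₁ a b
      (by positivity : (0:ℝ) ≤ dist a b / 2) (by linarith [dist_nonneg (x := a) (y := b)])
    refine ⟨jl f₁ f₂ m, ?_, ?_⟩
    · show dist a m ≤ dist a b / 2 + ε
      rw [hm1]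
      linarith
    · show dist m b ≤ dist a b / 2 + ε
      rw [hm2]
      linarith
  · exact main a b
  · obtain ⟨m, hm1, hm2⟩ := main b a
    refine ⟨m, ?_, ?_⟩
    · rw [gdist_comm' f₁ f₂ ⟨Sum.inr a⟩ m]
      rw [gdist_comm' f₁ f₂ ⟨Sum.inr a⟩ ⟨Sum.inl b⟩]
      exact hm2
    · rw [gdist_comm' f₁ f₂ m ⟨Sum.inl b⟩]
      rw [gdist_comm' f₁ f₂ ⟨Sum.inr a⟩ ⟨Sum.inl b⟩]
      exact hm1
  · obtain ⟨m, hm1, hm2⟩ := tree_point h₂ a b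
      (by positivity : (0:ℝ) ≤ dist a b / 2) (by linarith [dist_nonneg (x := a) (y := b)])
    refine ⟨jr f₁ f₂ m, ?_, ?_⟩
    · show dist a m ≤ dist a b / 2 + ε
      rw [hm1]
      linarith
    · show dist m b ≤ dist a b / 2 + ε
      rw [hm2]
      linarith

theorem Dg_base (p₀ : M₀) (p₁ : M₁) (p₂ : M₂)
    (hf₁ : ∀ x y : M₀, dist (f₁ x) (f₁ y) = dist x y)
    (hf₂ : ∀ x y : M₀, dist (f₂ x) (f₂ y) = dist x y)
    (hb₁ : f₁ p₀ = p₁) (hb₂ : f₂ p₀ = p₂) (y : M₂) : Dg f₁ f₂ p₁ y = dist p₂ y := by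
  apply le_antisymm
  · have h := Dg_le f₁ f₂ p₁ y p₀
    rw [hb₁, hb₂, dist_self] at h
    linarith
  · apply le_Dg
    intro z
    have h1 : dist p₁ (f₁ z) = dist p₀ z := by rw [← hb₁, hf₁]
    have h2 : dist p₂ (f₂ z) = dist p₀ z := by rw [← hb₂, hf₂]
    have := dist_triangle p₂ (f₂ z) y
    rw [h2, ← h1] at this
    exact this

end GlueMid

end S7

/-- Pointed ℝ-trees of radius ≤ r can be amalgamated over a common
pointed subtree, within complete pointed ℝ-trees of radius ≤ r, by basepoint-preserving
isometric embeddings. -/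
theorem statement_7 {M₀ M₁ M₂ : Type u}
    [MetricSpace M₀] [MetricSpace M₁] [MetricSpace M₂]
    (r : ℝ) (hr : 0 < r)
    (h₀ : IsRTree M₀) (h₁ : IsRTree M₁) (h₂ : IsRTree M₂)
    (p₀ : M₀) (p₁ : M₁) (p₂ : M₂)
    (hrad₀ : RadiusLE M₀ p₀ r) (hrad₁ : RadiusLE M₁ p₁ r) (hrad₂ : RadiusLE M₂ p₂ r)
    (f₁ : M₀ → M₁) (f₂ : M₀ → M₂)
    (hf₁ : IsIsometric f₁) (hf₂ : IsIsometric f₂)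
    (hb₁ : f₁ p₀ = p₁) (hb₂ : f₂ p₀ = p₂) :
    ∃ (N : Type u) (mN : MetricSpace N) (q : N) (g₁ : M₁ → N) (g₂ : M₂ → N),
      @IsRTree N mN ∧ @IsCompleteMS N mN ∧ @RadiusLE N mN q r ∧
      @IsIsometric M₁ N _ mN g₁ ∧ @IsIsometric M₂ N _ mN g₂ ∧
      g₁ p₁ = q ∧ g₂ p₂ = q ∧ g₁ ∘ f₁ = g₂ ∘ f₂ := by
  classical
  haveI : Nonempty M₀ := ⟨p₀⟩
  letI glueInst : PseudoMetricSpace (S7.GlueT f₁ f₂) := S7.gluePMS f₁ f₂ hf₁ hf₂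
  have hfpG : S7.FourPt (S7.GlueT f₁ f₂) :=
    S7.glue_fourPt f₁ f₂ p₀ p₁ p₂ h₀ (S7.tree_fourPt h₁) (S7.tree_fourPt h₂) hf₁ hf₂ hb₁ hb₂
  have hdistc : ∀ x y : S7.GlueT f₁ f₂,
      dist (x : UniformSpace.Completion (S7.GlueT f₁ f₂))
        (y : UniformSpace.Completion (S7.GlueT f₁ f₂)) = S7.gdist f₁ f₂ x y :=
    fun x y => UniformSpace.Completion.dist_eq x y
  -- four point condition in the completion, by density
  have hfpN : S7.FourPt (UniformSpace.Completion (S7.GlueT f₁ f₂)) := by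
    set N₀ := UniformSpace.Completion (S7.GlueT f₁ f₂) with hN₀
    set S : Set (N₀ × N₀ × N₀ × N₀) := {x | dist x.1 x.2.1 + dist x.2.2.1 x.2.2.2 ≤
        max (dist x.1 x.2.2.1 + dist x.2.1 x.2.2.2)
          (dist x.1 x.2.2.2 + dist x.2.1 x.2.2.1)} with hSdef
    have hcl : IsClosed S := by
      apply isClosed_le
      · exact ((continuous_fst.dist (continuous_fst.comp continuous_snd)).add
          ((continuous_fst.comp (continuous_snd.comp continuous_snd)).dist
            (continuous_snd.comp (continuous_snd.comp continuous_snd))))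
      · exact Continuous.max
          ((continuous_fst.dist
              (continuous_fst.comp (continuous_snd.comp continuous_snd))).add
            ((continuous_fst.comp continuous_snd).dist
              (continuous_snd.comp (continuous_snd.comp continuous_snd))))
          ((continuous_fst.dist
              (continuous_snd.comp (continuous_snd.comp continuous_snd))).add
            ((continuous_fst.comp continuous_snd).dist
              (continuous_fst.comp (continuous_snd.comp continuous_snd))))
    have hdr : DenseRange (Prod.map ((↑) : S7.GlueT f₁ f₂ → N₀)
        (Prod.map ((↑) : S7.GlueT f₁ f₂ → N₀)
          (Prod.map ((↑) : S7.GlueT f₁ f₂ → N₀) ((↑) : S7.GlueT f₁ f₂ → N₀)))) :=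
      (UniformSpace.Completion.denseRange_coe).prodMap
        ((UniformSpace.Completion.denseRange_coe).prodMap
          ((UniformSpace.Completion.denseRange_coe).prodMap
            UniformSpace.Completion.denseRange_coe))
    have hsub : Set.range (Prod.map ((↑) : S7.GlueT f₁ f₂ → N₀)
        (Prod.map ((↑) : S7.GlueT f₁ f₂ → N₀)
          (Prod.map ((↑) : S7.GlueT f₁ f₂ → N₀) ((↑) : S7.GlueT f₁ f₂ → N₀)))) ⊆ S := by
      rintro _ ⟨⟨a, b, c, d⟩, rfl⟩
      show dist (a : N₀) (b : N₀) + dist (c : N₀) (d : N₀) ≤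
        max (dist (a : N₀) (c : N₀) + dist (b : N₀) (d : N₀))
          (dist (a : N₀) (d : N₀) + dist (b : N₀) (c : N₀))
      rw [hdistc a b, hdistc c d, hdistc a c, hdistc b d, hdistc a d, hdistc b c]
      exact hfpG a b c d
    intro a b c d
    have hmem : (a, b, c, d) ∈ S := by
      apply hcl.closure_subset_iff.mpr hsub
      rw [hdr.closure_eq]
      trivial
    exact hmem
  -- approximate midpoints in the completion
  have hmidN : ∀ a b : UniformSpace.Completion (S7.GlueT f₁ f₂), ∀ ε > (0:ℝ),
      ∃ m, dist a m ≤ dist a b / 2 + ε ∧ dist m b ≤ dist a b / 2 + ε := by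
    intro a b ε hε
    have hε4 : (0:ℝ) < ε/4 := by linarith
    obtain ⟨a', ha'⟩ := Metric.denseRange_iff.mp UniformSpace.Completion.denseRange_coe a (ε/4) hε4
    obtain ⟨b', hb'⟩ := Metric.denseRange_iff.mp UniformSpace.Completion.denseRange_coe b (ε/4) hε4
    obtain ⟨m, hm1, hm2⟩ := S7.glue_approx_mid f₁ f₂ h₁ h₂ a' b' hε4
    have t3 := hdistc a' b'
    have t4 : dist (a' : UniformSpace.Completion (S7.GlueT f₁ f₂)) (b' : _) ≤ dist a b + ε/2 := by
      have h4 := dist_triangle4 (a' : UniformSpace.Completion (S7.GlueT f₁ f₂)) a b (b' : _)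
      linarith [dist_comm a (a' : UniformSpace.Completion (S7.GlueT f₁ f₂)),
        dist_comm b (b' : UniformSpace.Completion (S7.GlueT f₁ f₂)), ha', hb']
    refine ⟨(m : UniformSpace.Completion (S7.GlueT f₁ f₂)), ?_, ?_⟩
    · have t1 := dist_triangle a (a' : UniformSpace.Completion (S7.GlueT f₁ f₂)) (m : _)
      have t2 := hdistc a' m
      linarith [ha']
    · have t1 := dist_triangle (m : UniformSpace.Completion (S7.GlueT f₁ f₂)) (b' : _) b
      have t2 := hdistc m b'
      linarith [hb', dist_comm b (b' : UniformSpace.Completion (S7.GlueT f₁ f₂))]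
  have hmidE : ∀ a b : UniformSpace.Completion (S7.GlueT f₁ f₂),
      ∃ m, dist a m = dist a b / 2 ∧ dist m b = dist a b / 2 :=
    fun a b => S7.exact_midpoints hfpN hmidN a b
  have hgeoN : ∀ a b : UniformSpace.Completion (S7.GlueT f₁ f₂), ∃ γ : ℝ → _,
      (∀ u ∈ Set.Icc (0:ℝ) (dist a b), ∀ v ∈ Set.Icc (0:ℝ) (dist a b),
        dist (γ u) (γ v) = |u - v|) ∧ γ 0 = a ∧ γ (dist a b) = b :=
    fun a b => S7.geo_of_midpoints hfpN hmidE a b (S7.btwS_closed hfpN a b)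
  have hRT : IsRTree (UniformSpace.Completion (S7.GlueT f₁ f₂)) := S7.isRTree_of hfpN hgeoN
  refine ⟨UniformSpace.Completion (S7.GlueT f₁ f₂), inferInstance,
    ((S7.jl f₁ f₂ p₁ : S7.GlueT f₁ f₂) : UniformSpace.Completion (S7.GlueT f₁ f₂)),
    fun x => ((S7.jl f₁ f₂ x : S7.GlueT f₁ f₂) : UniformSpace.Completion (S7.GlueT f₁ f₂)),
    fun y => ((S7.jr f₁ f₂ y : S7.GlueT f₁ f₂) : UniformSpace.Completion (S7.GlueT f₁ f₂)),
    hRT, ?_, ?_, ?_, ?_, ?_, ?_, ?_⟩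
  · exact (inferInstance : CompleteSpace (UniformSpace.Completion (S7.GlueT f₁ f₂)))
  · intro x
    refine UniformSpace.Completion.induction_on x ?_ ?_
    · apply isClosed_le
      · exact continuous_const.dist continuous_id
      · exact continuous_const
    · rintro ⟨a | a⟩
      · have hd := hdistc (S7.jl f₁ f₂ p₁) ⟨Sum.inl a⟩
        rw [hd]
        exact hrad₁ a
      · have hd := hdistc (S7.jl f₁ f₂ p₁) ⟨Sum.inr a⟩
        rw [hd]
        show S7.Dg f₁ f₂ p₁ a ≤ r
        rw [S7.Dg_base f₁ f₂ p₀ p₁ p₂ hf₁ hf₂ hb₁ hb₂ a]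
        exact hrad₂ a
  · intro x y
    rw [hdistc]
    rfl
  · intro x y
    rw [hdistc]
    rfl
  · rfl
  · apply dist_eq_zero.mp
    rw [hdistc]
    show S7.Dg f₁ f₂ p₁ p₂ = 0
    rw [S7.Dg_base f₁ f₂ p₀ p₁ p₂ hf₁ hf₂ hb₁ hb₂ p₂]
    exact dist_self p₂
  · funext z
    show ((S7.jl f₁ f₂ (f₁ z) : S7.GlueT f₁ f₂) : UniformSpace.Completion (S7.GlueT f₁ f₂))
      = ((S7.jr f₁ f₂ (f₂ z) : S7.GlueT f₁ f₂) : UniformSpace.Completion (S7.GlueT f₁ f₂))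
    apply dist_eq_zero.mp
    rw [hdistc]
    show S7.Dg f₁ f₂ (f₁ z) (f₂ z) = 0
    apply le_antisymm
    · have h := S7.Dg_le f₁ f₂ (f₁ z) (f₂ z) z
      rw [dist_self, dist_self] at h
      linarith
    · exact S7.Dg_nonneg f₁ f₂ (f₁ z) (f₂ z)
end

section
/- Let r > 0 and let (M,d,p) be a complete pointed ℝ-tree of radius ≤ r that satisfies the branching condition for radius r. Let a ∈ M and let h ∈ ℝ satisfy 0 < h < r − d(p,a). Then for every ε > 0 there exists b ∈ M with d(a,b) < ε such that M ∖ {b} has at least 3 connected components each of height at least h (i.e., each containing points at distance arbitrarily close to at least h from b). -/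
open Set Metric

/-- The branches at `a`: the connected components of `M ∖ {a}`. -/
def Branches {M : Type*} [MetricSpace M] (a : M) : Set (Set M) :=
  {β : Set M | ∃ x : M, x ≠ a ∧ β = connectedComponentIn (({a} : Set M)ᶜ) x}

/-- The branch `β` at `b` has height at least `h`:
`sup {d(b,x) : x ∈ β} ≥ h`, i.e. `β` contains points at distance arbitrarily
close to (at least) `h` from `b`. -/
def HeightGE {M : Type*} [MetricSpace M] (b : M) (β : Set M) (h : ℝ) : Prop :=
  ∀ h' : ℝ, h' < h → ∃ x ∈ β, h' < dist b x

/-- There are at least 3 branches at `b` of height ≥ `h`. -/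
def ThreeBranchesGE {M : Type*} [MetricSpace M] (b : M) (h : ℝ) : Prop :=
  ∃ β₁ β₂ β₃ : Set M, β₁ ∈ Branches b ∧ β₂ ∈ Branches b ∧ β₃ ∈ Branches b ∧
    β₁ ≠ β₂ ∧ β₁ ≠ β₃ ∧ β₂ ≠ β₃ ∧
    HeightGE b β₁ h ∧ HeightGE b β₂ h ∧ HeightGE b β₃ h

/-- A pointed ℝ-tree of radius ≤ `r` is richly branching if the set of points `b`
having at least 3 branches of height ≥ `r − d(p,b)` is dense. -/
def RichlyBranchingAt {M : Type*} [MetricSpace M] (p : M) (r : ℝ) : Prop :=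
  Dense {b : M | ThreeBranchesGE b (r - dist p b)}

/-- The branching condition for radius `r`: for every `x` and every `ε > 0` there
are `y₁, y₂, y₃` with `|d(x,yᵢ) − (r − d(p,x))| ≤ ε` and
`d(x,yᵢ) + d(x,yⱼ) − d(yᵢ,yⱼ) ≤ ε` for `i < j`. -/
def BranchingCondition {M : Type*} [MetricSpace M] (p : M) (r : ℝ) : Prop :=
  ∀ x : M, ∀ ε : ℝ, 0 < ε → ∃ y₁ y₂ y₃ : M,
    |dist x y₁ - (r - dist p x)| ≤ ε ∧
    |dist x y₂ - (r - dist p x)| ≤ ε ∧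
    |dist x y₃ - (r - dist p x)| ≤ ε ∧
    dist x y₁ + dist x y₂ - dist y₁ y₂ ≤ ε ∧
    dist x y₁ + dist x y₃ - dist y₁ y₃ ≤ ε ∧
    dist x y₂ + dist x y₃ - dist y₂ y₃ ≤ ε

section Statement8Aux

variable {M : Type*} [MetricSpace M]

lemma continuousOn_of_iso {γ : ℝ → M} {D : ℝ}
    (hiso : ∀ u ∈ Icc (0:ℝ) D, ∀ v ∈ Icc (0:ℝ) D, dist (γ u) (γ v) = |u - v|) :
    ContinuousOn γ (Icc 0 D) := by
  rw [Metric.continuousOn_iff]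
  intro u hu ε hε
  refine ⟨ε, hε, fun v hv hd => ?_⟩
  rw [hiso v hv u hu]
  rwa [Real.dist_eq] at hd

lemma isArc_of_geo {s : Set M} {a b : M} (hg : IsGeodesicSegmentFromTo s a b) :
    IsArcFromTo s a b := by
  obtain ⟨ℓ, hℓ, γ, hiso, h0, hl, hs⟩ := hg
  refine ⟨ℓ, hℓ, γ, continuousOn_of_iso hiso, ?_, h0, hl, hs⟩
  intro u hu v hv huv
  have h1 := hiso u hu v hv
  rw [huv, dist_self] at h1
  have := abs_eq_zero.mp h1.symm
  linarith [abs_nonneg (u - v), this, sub_eq_zero.mp this]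

lemma seg_spec (hM : IsRTree M) (a b : M) :
    IsArcFromTo (seg hM a b) a b ∧ IsGeodesicSegmentFromTo (seg hM a b) a b ∧
      ∀ t : Set M, IsArcFromTo t a b → t = seg hM a b :=
  (hM a b).choose_spec

lemma seg_param (hM : IsRTree M) (z w : M) :
    ∃ γ : ℝ → M,
      (∀ u ∈ Icc (0:ℝ) (dist z w), ∀ v ∈ Icc (0:ℝ) (dist z w), dist (γ u) (γ v) = |u - v|) ∧
      γ 0 = z ∧ γ (dist z w) = w ∧ seg hM z w = γ '' Icc 0 (dist z w) := by
  obtain ⟨ℓ, hℓ, γ, hiso, h0, hl, hs⟩ := (seg_spec hM z w).2.1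
  have hlz : ℓ = dist z w := by
    have h1 := hiso 0 ⟨le_refl 0, hℓ⟩ ℓ ⟨hℓ, le_refl ℓ⟩
    rw [h0, hl, abs_of_nonpos (by linarith)] at h1
    linarith
  subst hlz
  exact ⟨γ, hiso, h0, hl, hs⟩

lemma exists_param_of_mem {γ : ℝ → M} {z x : M} {D : ℝ}
    (hiso : ∀ u ∈ Icc (0:ℝ) D, ∀ v ∈ Icc (0:ℝ) D, dist (γ u) (γ v) = |u - v|)
    (h0 : γ 0 = z) (hx : x ∈ γ '' Icc 0 D) :
    γ (dist z x) = x ∧ dist z x ∈ Icc (0:ℝ) D := by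
  obtain ⟨s, hs, rfl⟩ := hx
  have h0D : (0:ℝ) ∈ Icc (0:ℝ) D := ⟨le_refl _, le_trans hs.1 hs.2⟩
  have h1 : dist z (γ s) = s := by
    rw [← h0, hiso 0 h0D s hs, abs_of_nonpos (by linarith [hs.1])]
    ring
  rw [h1]
  exact ⟨rfl, hs⟩

lemma btw_of_mem_seg (hM : IsRTree M) {z w b : M} (hb : b ∈ seg hM z w) :
    dist z b + dist b w = dist z w := by
  obtain ⟨γ, hiso, h0, hl, hs⟩ := seg_param hM z w
  rw [hs] at hb
  obtain ⟨hγ, hmem⟩ := exists_param_of_mem hiso h0 hb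
  have h2 := hiso _ hmem _ ⟨dist_nonneg, le_refl (dist z w)⟩
  rw [hγ, hl, abs_of_nonpos (by linarith [hmem.2])] at h2
  linarith

lemma dist_eq_on_seg (hM : IsRTree M) {z w q m : M} (hq : q ∈ seg hM z w)
    (hm : m ∈ seg hM z w) : dist q m = |dist z q - dist z m| := by
  obtain ⟨γ, hiso, h0, hl, hs⟩ := seg_param hM z w
  rw [hs] at hq hm
  obtain ⟨hγq, hq'⟩ := exists_param_of_mem hiso h0 hq
  obtain ⟨hγm, hm'⟩ := exists_param_of_mem hiso h0 hm
  have h2 := hiso _ hq' _ hm'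
  rw [hγq, hγm] at h2
  exact h2

lemma mem_seg_of_btw (hM : IsRTree M) {z w b : M}
    (h : dist z b + dist b w = dist z w) : b ∈ seg hM z w := by
  obtain ⟨α, hα, hα0, hα1, hsα⟩ := seg_param hM z b
  obtain ⟨β, hβ, hβ0, hβ1, hsβ⟩ := seg_param hM b w
  set ℓ₁ := dist z b with hℓ₁
  set ℓ₂ := dist b w with hℓ₂
  set L := dist z w with hL
  have hLz : L = ℓ₁ + ℓ₂ := h.symm
  set γ : ℝ → M := fun u => if u ≤ ℓ₁ then α u else β (u - ℓ₁) with hγdef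
  have h1n : (0:ℝ) ≤ ℓ₁ := dist_nonneg
  have h2n : (0:ℝ) ≤ ℓ₂ := dist_nonneg
  have key : ∀ u ∈ Icc (0:ℝ) L, ∀ v ∈ Icc (0:ℝ) L, u ≤ v → dist (γ u) (γ v) = v - u := by
    intro u hu v hv huv
    by_cases hv1 : v ≤ ℓ₁
    · have hu1 : u ≤ ℓ₁ := le_trans huv hv1
      simp only [hγdef, if_pos hu1, if_pos hv1]
      rw [hα u ⟨hu.1, hu1⟩ v ⟨hv.1, hv1⟩, abs_of_nonpos (by linarith)]
      ring
    · push_neg at hv1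
      have hv2 : v - ℓ₁ ∈ Icc (0:ℝ) ℓ₂ := ⟨by linarith, by linarith [hv.2]⟩
      by_cases hu1 : u ≤ ℓ₁
      · simp only [hγdef, if_pos hu1, if_neg (not_le.mpr hv1)]
        have hub : dist (α u) b = ℓ₁ - u := by
          have := hα u ⟨hu.1, hu1⟩ ℓ₁ ⟨h1n, le_refl _⟩
          rw [hα1, abs_of_nonpos (by linarith)] at this
          linarith
        have hbv : dist b (β (v - ℓ₁)) = v - ℓ₁ := by
          have := hβ 0 ⟨le_refl _, h2n⟩ _ hv2
          rw [hβ0, abs_of_nonpos (by linarith [hv2.1])] at this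
          linarith
        have hzu : dist z (α u) = u := by
          have := hα 0 ⟨le_refl _, h1n⟩ u ⟨hu.1, hu1⟩
          rw [hα0, abs_of_nonpos (by linarith [hu.1])] at this
          linarith
        have hvw : dist (β (v - ℓ₁)) w = L - v := by
          have := hβ _ hv2 ℓ₂ ⟨h2n, le_refl _⟩
          rw [hβ1, abs_of_nonpos (by linarith [hv2.2])] at this
          rw [this, hLz]; ring
        have hup : dist (α u) (β (v - ℓ₁)) ≤ v - u := by
          have := dist_triangle (α u) b (β (v - ℓ₁))
          rw [hub, hbv] at this; linarith
        have htri : L ≤ dist z (α u) + dist (α u) (β (v - ℓ₁)) + dist (β (v - ℓ₁)) w := by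
          have t1 := dist_triangle z (β (v - ℓ₁)) w
          have t2 := dist_triangle z (α u) (β (v - ℓ₁))
          linarith
        rw [hzu, hvw] at htri
        linarith
      · push_neg at hu1
        have hu2 : u - ℓ₁ ∈ Icc (0:ℝ) ℓ₂ := ⟨by linarith, by linarith [hu.2]⟩
        simp only [hγdef, if_neg (not_le.mpr hv1), if_neg (not_le.mpr hu1)]
        rw [hβ _ hu2 _ hv2, abs_of_nonpos (by linarith)]
        ring
  have hiso : ∀ u ∈ Icc (0:ℝ) L, ∀ v ∈ Icc (0:ℝ) L, dist (γ u) (γ v) = |u - v| := by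
    intro u hu v hv
    rcases le_total u v with hle | hle
    · rw [key u hu v hv hle, abs_of_nonpos (by linarith)]; ring
    · rw [dist_comm, key v hv u hu hle, abs_of_nonneg (by linarith)]
  have hγ0 : γ 0 = z := by
    simp only [hγdef, if_pos h1n]; exact hα0
  have hγL : γ L = w := by
    by_cases hL1 : L ≤ ℓ₁
    · have h2z : ℓ₂ = 0 := by linarith
      have hbw : b = w := by
        rw [hℓ₂] at h2z; exact dist_eq_zero.mp h2z
      have hLe : L = ℓ₁ := by linarith
      simp only [hγdef, if_pos hL1, hLe, hα1]
      simpa using hbw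
    · push_neg at hL1
      simp only [hγdef, if_neg (not_le.mpr hL1)]
      have : L - ℓ₁ = ℓ₂ := by linarith
      rw [this, hβ1]
  have hgeo : IsGeodesicSegmentFromTo (γ '' Icc 0 L) z w :=
    ⟨L, dist_nonneg, γ, hiso, hγ0, hγL, rfl⟩
  have himg := (seg_spec hM z w).2.2 _ (isArc_of_geo hgeo)
  rw [← himg]
  refine ⟨ℓ₁, ⟨h1n, by linarith⟩, ?_⟩
  simp only [hγdef, if_pos (le_refl ℓ₁)]
  exact hα1

lemma median_mem (hM : IsRTree M) (x y z : M) :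
    ∃ m : M, m ∈ seg hM x y ∧ m ∈ seg hM y z ∧ m ∈ seg hM x z := by
  obtain ⟨α, hα, hα0, hα1, hsα⟩ := seg_param hM x y
  obtain ⟨β, hβ, hβ0, hβ1, hsβ⟩ := seg_param hM y z
  set ℓ₁ := dist x y with hℓ₁
  set ℓ₂ := dist y z with hℓ₂
  have h1n : (0:ℝ) ≤ ℓ₁ := dist_nonneg
  have h2n : (0:ℝ) ≤ ℓ₂ := dist_nonneg
  set K : Set ℝ := {s | s ∈ Icc (0:ℝ) ℓ₁ ∧ α s ∈ seg hM y z} with hK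
  have hKne : K.Nonempty := by
    refine ⟨ℓ₁, ⟨h1n, le_refl _⟩, ?_⟩
    rw [hα1, hsβ]
    exact ⟨0, ⟨le_refl _, h2n⟩, hβ0⟩
  have hKbdd : BddBelow K := ⟨0, fun s hs => hs.1.1⟩
  have hsegcl : IsClosed (seg hM y z) := by
    rw [hsβ]
    exact (isCompact_Icc.image_of_continuousOn (continuousOn_of_iso hβ)).isClosed
  have hKclosed : IsClosed K := by
    rw [← isSeqClosed_iff_isClosed]
    intro u s hu hus
    have hsI : s ∈ Icc (0:ℝ) ℓ₁ := isClosed_Icc.isSeqClosed (fun n => (hu n).1) hus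
    refine ⟨hsI, ?_⟩
    have htend : Filter.Tendsto (fun n => α (u n)) Filter.atTop (nhds (α s)) := by
      rw [tendsto_iff_dist_tendsto_zero]
      have heq : ∀ n, dist (α (u n)) (α s) = |u n - s| := fun n => hα _ (hu n).1 _ hsI
      simp only [heq]
      have h1 : Filter.Tendsto (fun n => u n - s) Filter.atTop (nhds (s - s)) :=
        hus.sub_const s
      rw [sub_self] at h1
      simpa using h1.abs
    exact hsegcl.isSeqClosed (fun n => (hu n).2) htend
  set s₀ := sInf K with hs₀
  have hs₀K : s₀ ∈ K := hKclosed.csInf_mem hKne hKbdd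
  have hmin : ∀ s ∈ K, s₀ ≤ s := fun s hs => csInf_le hKbdd hs
  set m := α s₀ with hm
  have hs₀I : s₀ ∈ Icc (0:ℝ) ℓ₁ := hs₀K.1
  have hmβ : m ∈ seg hM y z := hs₀K.2
  obtain ⟨t₀, ht₀, hβt₀⟩ : ∃ t₀ ∈ Icc (0:ℝ) ℓ₂, β t₀ = m := by
    rw [hsβ] at hmβ
    obtain ⟨t, ht, h⟩ := hmβ
    exact ⟨t, ht, h⟩
  set L := s₀ + (ℓ₂ - t₀) with hLdef
  have hLs : s₀ ≤ L := by
    have := ht₀.2; simp only [hLdef]; linarith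
  have hL0 : (0:ℝ) ≤ L := le_trans hs₀I.1 hLs
  set γ : ℝ → M := fun u => if u ≤ s₀ then α u else β (u - s₀ + t₀) with hγdef
  have harg : ∀ v : ℝ, s₀ < v → v ∈ Icc (0:ℝ) L → v - s₀ + t₀ ∈ Icc (0:ℝ) ℓ₂ := by
    intro v hv hvI
    constructor
    · linarith [ht₀.1]
    · have := hvI.2; simp only [hLdef] at this; linarith
  have key : ∀ u ∈ Icc (0:ℝ) L, ∀ v ∈ Icc (0:ℝ) L, u ≤ v → dist (γ u) (γ v) ≤ v - u := by
    intro u hu v hv huv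
    by_cases hv1 : v ≤ s₀
    · have hu1 : u ≤ s₀ := le_trans huv hv1
      simp only [hγdef, if_pos hu1, if_pos hv1]
      rw [hα u ⟨hu.1, le_trans hu1 hs₀I.2⟩ v ⟨hv.1, le_trans hv1 hs₀I.2⟩,
        abs_of_nonpos (by linarith)]
      linarith
    · push_neg at hv1
      have hv2 := harg v hv1 hv
      by_cases hu1 : u ≤ s₀
      · simp only [hγdef, if_pos hu1, if_neg (not_le.mpr hv1)]
        have hum : dist (α u) m = s₀ - u := by
          have := hα u ⟨hu.1, le_trans hu1 hs₀I.2⟩ s₀ hs₀I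
          rw [abs_of_nonpos (by linarith)] at this
          rw [← hm] at this
          linarith
        have hmv : dist m (β (v - s₀ + t₀)) = v - s₀ := by
          have := hβ t₀ ht₀ _ hv2
          rw [hβt₀, abs_of_nonpos (by linarith)] at this
          linarith
        have := dist_triangle (α u) m (β (v - s₀ + t₀))
        rw [hum, hmv] at this
        linarith
      · push_neg at hu1
        have hu2 := harg u hu1 hu
        simp only [hγdef, if_neg (not_le.mpr hv1), if_neg (not_le.mpr hu1)]
        rw [hβ _ hu2 _ hv2, abs_of_nonpos (by linarith)]
        linarith
  have hcont : ContinuousOn γ (Icc 0 L) := by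
    rw [Metric.continuousOn_iff]
    intro u hu ε hε
    refine ⟨ε, hε, fun v hv hd => ?_⟩
    rw [Real.dist_eq] at hd
    rcases le_total v u with h' | h'
    · calc dist (γ v) (γ u) ≤ u - v := key v hv u hu h'
        _ ≤ |v - u| := by rw [abs_of_nonpos (by linarith)]; linarith
        _ < ε := hd
    · calc dist (γ v) (γ u) = dist (γ u) (γ v) := dist_comm _ _
        _ ≤ v - u := key u hu v hv h'
        _ ≤ |v - u| := le_abs_self _
        _ < ε := hd
  have hlt : ∀ u ∈ Icc (0:ℝ) L, ∀ v ∈ Icc (0:ℝ) L, u < v → γ u ≠ γ v := by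
    intro u hu v hv huv heq
    by_cases hv1 : v ≤ s₀
    · have hu1 : u ≤ s₀ := le_of_lt (lt_of_lt_of_le huv hv1)
      simp only [hγdef, if_pos hu1, if_pos hv1] at heq
      have := hα u ⟨hu.1, le_trans hu1 hs₀I.2⟩ v ⟨hv.1, le_trans hv1 hs₀I.2⟩
      rw [heq, dist_self] at this
      have h0 := abs_eq_zero.mp this.symm
      have := sub_eq_zero.mp h0
      linarith
    · push_neg at hv1
      have hv2 := harg v hv1 hv
      by_cases hu1 : u ≤ s₀
      · simp only [hγdef, if_pos hu1, if_neg (not_le.mpr hv1)] at heq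
        have huK : u ∈ K := by
          refine ⟨⟨hu.1, le_trans hu1 hs₀I.2⟩, ?_⟩
          rw [heq, hsβ]
          exact ⟨v - s₀ + t₀, hv2, rfl⟩
        have hus : u = s₀ := le_antisymm hu1 (hmin u huK)
        subst hus
        rw [← hm, ← hβt₀] at heq
        have := hβ t₀ ht₀ _ hv2
        rw [← heq, dist_self] at this
        have h0 := abs_eq_zero.mp this.symm
        have := sub_eq_zero.mp h0
        linarith
      · push_neg at hu1
        have hu2 := harg u hu1 hu
        simp only [hγdef, if_neg (not_le.mpr hv1), if_neg (not_le.mpr hu1)] at heq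
        have := hβ _ hu2 _ hv2
        rw [heq, dist_self] at this
        have h0 := abs_eq_zero.mp this.symm
        have := sub_eq_zero.mp h0
        linarith
  have hinj : InjOn γ (Icc 0 L) := by
    intro u hu v hv heq
    rcases lt_trichotomy u v with h' | h' | h'
    · exact absurd heq (hlt u hu v hv h')
    · exact h'
    · exact absurd heq.symm (hlt v hv u hu h')
  have hγ0 : γ 0 = x := by
    simp only [hγdef, if_pos hs₀I.1]
    exact hα0
  have hγL : γ L = z := by
    by_cases hL1 : L ≤ s₀
    · have ht2 : t₀ = ℓ₂ := by
        have := ht₀.2; simp only [hLdef] at hL1; linarith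
      have hLe : L = s₀ := le_antisymm hL1 hLs
      simp only [hγdef, if_pos hL1, hLe]
      rw [← hm, ← hβt₀, ht2, hβ1]
      simp
    · push_neg at hL1
      simp only [hγdef, if_neg (not_le.mpr hL1)]
      have : L - s₀ + t₀ = ℓ₂ := by simp only [hLdef]; ring
      rw [this, hβ1]
  have harc : IsArcFromTo (γ '' Icc 0 L) x z :=
    ⟨L, hL0, γ, hcont, hinj, hγ0, hγL, rfl⟩
  have himg := (seg_spec hM x z).2.2 _ harc
  refine ⟨m, ?_, hmβ, ?_⟩
  · rw [hsα]; exact ⟨s₀, hs₀I, rfl⟩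
  · rw [← himg]
    refine ⟨s₀, ⟨hs₀I.1, hLs⟩, ?_⟩
    simp only [hγdef, if_pos (le_refl s₀)]
    exact hm.symm

lemma btw_stable (hM : IsRTree M) {z b x x' : M}
    (h : dist z b + dist b x = dist z x) (hx' : dist x x' < dist b x) :
    dist z b + dist b x' = dist z x' := by
  have hbmem : b ∈ seg hM z x := mem_seg_of_btw hM h
  obtain ⟨m, hm1, hm2, hm3⟩ := median_mem hM z x' x
  have hbtw1 := btw_of_mem_seg hM hm1
  have hbtw2 := btw_of_mem_seg hM hm2
  have hbtw3 := btw_of_mem_seg hM hm3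
  rcases le_or_gt (dist z b) (dist z m) with hle | hlt
  · have hbm : dist b m = dist z m - dist z b := by
      rw [dist_eq_on_seg hM hbmem hm3, abs_of_nonpos (by linarith)]
      ring
    have t1 := dist_triangle b m x'
    have t2 := dist_triangle z b x'
    linarith
  · exfalso
    have hcm : dist x' x = dist x x' := dist_comm _ _
    linarith [dist_nonneg (α := M) (x := x') (y := m)]

lemma comp_ne (hM : IsRTree M) {b z w : M} (hz : z ≠ b) (hw : w ≠ b)
    (hbtw : dist z b + dist b w = dist z w) :
    connectedComponentIn (({b} : Set M)ᶜ) z ≠ connectedComponentIn (({b} : Set M)ᶜ) w := by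
  intro heq
  set C := connectedComponentIn (({b} : Set M)ᶜ) z with hC
  have hzC : z ∈ C := mem_connectedComponentIn (by simpa using hz)
  have hwC : w ∈ C := by
    rw [heq]; exact mem_connectedComponentIn (by simpa using hw)
  have hCconn : IsPreconnected C := isPreconnected_connectedComponentIn
  set T : Set M := {x | dist z b + dist b x = dist z x} with hT
  set U : Set M := ⋃ x ∈ {x | x ∈ T ∧ x ≠ b}, ball x (dist b x) with hU
  set V : Set M := ⋃ x ∈ {x | x ∉ T ∧ x ≠ b}, ball x (dist b x / 2) with hV
  have hUopen : IsOpen U := isOpen_biUnion fun _ _ => isOpen_ball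
  have hVopen : IsOpen V := isOpen_biUnion fun _ _ => isOpen_ball
  have hUsub : U ⊆ T := by
    intro x' hx'
    simp only [hU, mem_iUnion, exists_prop] at hx'
    obtain ⟨x, ⟨hxT, _⟩, hball⟩ := hx'
    have : dist x x' < dist b x := by
      rw [dist_comm]; exact mem_ball.mp hball
    exact btw_stable hM hxT this
  have hVdisj : ∀ x' ∈ V, x' ∉ T := by
    intro x' hx' hx'T
    simp only [hV, mem_iUnion, exists_prop] at hx'
    obtain ⟨x, ⟨hxT, hxb⟩, hball⟩ := hx'
    have hbx : 0 < dist b x := dist_pos.mpr fun e => hxb e.symm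
    have hxx' : dist x' x < dist b x / 2 := mem_ball.mp hball
    have h1 : dist b x ≤ dist b x' + dist x' x := dist_triangle _ _ _
    have h2 : dist x' x < dist b x' := by linarith
    exact hxT (btw_stable hM hx'T h2)
  have hcover : C ⊆ U ∪ V := by
    intro x hx
    have hxb : x ≠ b := by
      have := connectedComponentIn_subset (({b} : Set M)ᶜ) z hx
      simpa using this
    have hbx : 0 < dist b x := dist_pos.mpr fun e => hxb e.symm
    by_cases hxT : x ∈ T
    · left
      simp only [hU, mem_iUnion, exists_prop]
      exact ⟨x, ⟨hxT, hxb⟩, mem_ball_self hbx⟩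
    · right
      simp only [hV, mem_iUnion, exists_prop]
      exact ⟨x, ⟨hxT, hxb⟩, mem_ball_self (by linarith)⟩
  have hUne : (C ∩ U).Nonempty := by
    refine ⟨w, hwC, ?_⟩
    simp only [hU, mem_iUnion, exists_prop]
    exact ⟨w, ⟨hbtw, hw⟩, mem_ball_self (dist_pos.mpr fun e => hw e.symm)⟩
  have hVne : (C ∩ V).Nonempty := by
    refine ⟨z, hzC, ?_⟩
    have hzT : z ∉ T := by
      intro hzT
      simp only [hT, mem_setOf_eq, dist_self] at hzT
      have : dist z b = 0 := by
        linarith [dist_nonneg (α := M) (x := b) (y := z), dist_nonneg (α := M) (x := z) (y := b)]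
      exact hz (dist_eq_zero.mp this)
    simp only [hV, mem_iUnion, exists_prop]
    have hbz : 0 < dist b z := dist_pos.mpr fun e => hz e.symm
    exact ⟨z, ⟨hzT, hz⟩, mem_ball_self (by linarith)⟩
  obtain ⟨x, hxC, hxU, hxV⟩ := hCconn U V hUopen hVopen hcover hUne hVne
  exact hVdisj x hxV (hUsub hxU)

end Statement8Aux

/-- In a complete pointed ℝ-tree of radius ≤ `r` satisfying the
branching condition, for `a ∈ M`, `0 < h < r − d(p,a)` and `ε > 0` there is `b`
with `d(a,b) < ε` having at least 3 branches of height at least `h`. -/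
theorem statement_8 {M : Type*} [MetricSpace M] [CompleteSpace M]
    (r : ℝ) (hr : 0 < r) (hM : IsRTree M) (p : M)
    (hrad : ∀ x : M, dist p x ≤ r) (hbc : BranchingCondition p r)
    (a : M) (h : ℝ) (hh : 0 < h) (hh' : h < r - dist p a)
    (ε : ℝ) (hε : 0 < ε) :
    ∃ b : M, dist a b < ε ∧ ThreeBranchesGE b h := by
  set δ := min (ε / 3) ((r - dist p a - h) / 3) with hδdef
  have hδ0 : 0 < δ := lt_min (by linarith) (by linarith)
  have hδε : δ ≤ ε / 3 := min_le_left _ _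
  have hδR : δ ≤ (r - dist p a - h) / 3 := min_le_right _ _
  obtain ⟨y₁, y₂, y₃, h1, h2, h3, h12, h13, h23⟩ := hbc a δ hδ0
  rw [abs_le] at h1 h2 h3
  have g12 : dist y₁ y₂ ≤ dist a y₁ + dist a y₂ := by
    have := dist_triangle y₁ a y₂
    rw [dist_comm y₁ a] at this; linarith
  have g13 : dist y₁ y₃ ≤ dist a y₁ + dist a y₃ := by
    have := dist_triangle y₁ a y₃
    rw [dist_comm y₁ a] at this; linarith
  have g23 : dist y₂ y₃ ≤ dist a y₂ + dist a y₃ := by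
    have := dist_triangle y₂ a y₃
    rw [dist_comm y₂ a] at this; linarith
  obtain ⟨m, hm12, hm23, hm13⟩ := median_mem hM y₁ y₂ y₃
  have b12 := btw_of_mem_seg hM hm12
  have b23 := btw_of_mem_seg hM hm23
  have b13 := btw_of_mem_seg hM hm13
  have c21 : dist y₂ m = dist m y₂ := dist_comm _ _
  have c31 : dist y₃ m = dist m y₃ := dist_comm _ _
  have ha1 : h + δ ≤ dist y₁ m := by linarith
  have ha2 : h + δ ≤ dist m y₂ := by linarith
  have ha3 : h + δ ≤ dist m y₃ := by linarith
  obtain ⟨q, hq1, hq2, hq3⟩ := median_mem hM a y₁ y₂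
  have e1 := btw_of_mem_seg hM hq1
  have e2 := btw_of_mem_seg hM hq2
  have e3 := btw_of_mem_seg hM hq3
  have cq1 : dist q y₁ = dist y₁ q := dist_comm _ _
  have hqm := dist_eq_on_seg hM hq2 hm12
  have hqmle : dist q m ≤ δ / 2 := by
    rw [hqm, abs_le]
    constructor <;> linarith
  have hdam : dist a m < ε := by
    have t := dist_triangle a q m
    linarith
  have hne1 : y₁ ≠ m := by
    intro e; rw [e, dist_self] at ha1; linarith
  have hne2 : y₂ ≠ m := by
    intro e; rw [e] at ha2; rw [dist_self] at ha2; linarith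
  have hne3 : y₃ ≠ m := by
    intro e; rw [e] at ha3; rw [dist_self] at ha3; linarith
  refine ⟨m, hdam,
    connectedComponentIn (({m} : Set M)ᶜ) y₁,
    connectedComponentIn (({m} : Set M)ᶜ) y₂,
    connectedComponentIn (({m} : Set M)ᶜ) y₃,
    ⟨y₁, hne1, rfl⟩, ⟨y₂, hne2, rfl⟩, ⟨y₃, hne3, rfl⟩,
    comp_ne hM hne1 hne2 b12, comp_ne hM hne1 hne3 b13, comp_ne hM hne2 hne3 b23,
    ?_, ?_, ?_⟩
  · intro h' hh'
    refine ⟨y₁, mem_connectedComponentIn (by simpa using hne1), ?_⟩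
    rw [dist_comm]; linarith
  · intro h' hh'
    exact ⟨y₂, mem_connectedComponentIn (by simpa using hne2), by linarith⟩
  · intro h' hh'
    exact ⟨y₃, mem_connectedComponentIn (by simpa using hne3), by linarith⟩
end

section
/- Let r > 0 and let (M,d,p) be a complete pointed ℝ-tree of radius ≤ r that satisfies the branching condition for radius r. Then for every a ∈ M and every branch β at a (i.e., every connected component of M ∖ {a}), there exists a point b ∈ β with d(p,b) = r. -/
open Set Metric

section API
variable {M : Type*} [MetricSpace M] (hM : IsRTree M)

/-- Canonical geodesic parametrization of `seg`. -/
lemma seg_geo (x y : M) : ∃ γ : ℝ → M,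
    (∀ u ∈ Set.Icc (0:ℝ) (dist x y), ∀ v ∈ Set.Icc (0:ℝ) (dist x y),
      dist (γ u) (γ v) = |u - v|) ∧
    γ 0 = x ∧ γ (dist x y) = y ∧ seg hM x y = γ '' Set.Icc 0 (dist x y) := by
  obtain ⟨_, hgeo, _⟩ := (hM x y).choose_spec
  obtain ⟨ℓ, hℓ, γ, hiso, h0, hl, hs⟩ := hgeo
  have hd : dist x y = ℓ := by
    have := hiso 0 ⟨le_refl _, hℓ⟩ ℓ ⟨hℓ, le_refl _⟩
    rw [h0, hl] at this
    rw [this, abs_of_nonpos (by linarith)]; ring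
  exact ⟨γ, by rw [hd]; exact hiso, h0, by rw [hd]; exact hl, by rw [hd]; exact hs⟩

lemma seg_isArc (x y : M) : IsArcFromTo (seg hM x y) x y := (hM x y).choose_spec.1

lemma seg_unique {x y : M} {t : Set M} (ht : IsArcFromTo t x y) : t = seg hM x y :=
  (hM x y).choose_spec.2.2 t ht

lemma left_mem_seg (x y : M) : x ∈ seg hM x y := by
  obtain ⟨γ, hiso, h0, hl, hs⟩ := seg_geo hM x y
  rw [hs]; exact ⟨0, ⟨le_refl _, dist_nonneg⟩, h0⟩

lemma right_mem_seg (x y : M) : y ∈ seg hM x y := by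
  obtain ⟨γ, hiso, h0, hl, hs⟩ := seg_geo hM x y
  rw [hs]; exact ⟨dist x y, ⟨dist_nonneg, le_refl _⟩, hl⟩

lemma seg_dist_left {x y u : M} (hu : u ∈ seg hM x y) :
    dist x u + dist u y = dist x y := by
  obtain ⟨γ, hiso, h0, hl, hs⟩ := seg_geo hM x y
  rw [hs] at hu; obtain ⟨s, hsmem, rfl⟩ := hu
  have h1 : dist x (γ s) = s := by
    have := hiso 0 ⟨le_refl _, dist_nonneg⟩ s hsmem
    rw [h0] at this; rw [this, abs_of_nonpos (by linarith [hsmem.1])]; ring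
  have h2 : dist (γ s) y = dist x y - s := by
    have := hiso s hsmem (dist x y) ⟨dist_nonneg, le_refl _⟩
    rw [hl] at this; rw [this, abs_of_nonpos (by linarith [hsmem.2])]; ring
  rw [h1, h2]; ring

lemma seg_dist_mem {x y u v : M} (hu : u ∈ seg hM x y) (hv : v ∈ seg hM x y) :
    dist u v = |dist x u - dist x v| := by
  obtain ⟨γ, hiso, h0, hl, hs⟩ := seg_geo hM x y
  rw [hs] at hu hv
  obtain ⟨s, hsmem, rfl⟩ := hu; obtain ⟨t, htmem, rfl⟩ := hv
  have h1 : dist x (γ s) = s := by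
    have := hiso 0 ⟨le_refl _, dist_nonneg⟩ s hsmem
    rw [h0] at this; rw [this, abs_of_nonpos (by linarith [hsmem.1])]; ring
  have h2 : dist x (γ t) = t := by
    have := hiso 0 ⟨le_refl _, dist_nonneg⟩ t htmem
    rw [h0] at this; rw [this, abs_of_nonpos (by linarith [htmem.1])]; ring
  rw [h1, h2]; exact hiso s hsmem t htmem

end API

section Concat
variable {M : Type*} [MetricSpace M]

/-- Concatenation of two geodesically-parametrized arcs meeting only at the common
endpoint is an arc. -/
lemma geo_concat {ℓ₁ ℓ₂ : ℝ} (h₁ : 0 ≤ ℓ₁) (h₂ : 0 ≤ ℓ₂) (γ₁ γ₂ : ℝ → M)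
    (hi₁ : ∀ u ∈ Set.Icc (0:ℝ) ℓ₁, ∀ v ∈ Set.Icc (0:ℝ) ℓ₁, dist (γ₁ u) (γ₁ v) = |u - v|)
    (hi₂ : ∀ u ∈ Set.Icc (0:ℝ) ℓ₂, ∀ v ∈ Set.Icc (0:ℝ) ℓ₂, dist (γ₂ u) (γ₂ v) = |u - v|)
    (hm : γ₁ ℓ₁ = γ₂ 0)
    (hint : ∀ w, w ∈ γ₁ '' Set.Icc 0 ℓ₁ → w ∈ γ₂ '' Set.Icc 0 ℓ₂ → w = γ₁ ℓ₁) :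
    IsArcFromTo (γ₁ '' Set.Icc 0 ℓ₁ ∪ γ₂ '' Set.Icc 0 ℓ₂) (γ₁ 0) (γ₂ ℓ₂) := by
  set γ : ℝ → M := fun t => if t ≤ ℓ₁ then γ₁ t else γ₂ (t - ℓ₁) with hγ
  refine ⟨ℓ₁ + ℓ₂, by linarith, γ, ?_, ?_, ?_, ?_, ?_⟩
  · -- continuity via 1-Lipschitz
    have hlip : LipschitzOnWith 1 γ (Set.Icc 0 (ℓ₁ + ℓ₂)) := by
      rw [lipschitzOnWith_iff_dist_le_mul]
      intro u hu v hv
      rw [NNReal.coe_one, one_mul, Real.dist_eq]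
      have key : ∀ s t : ℝ, s ∈ Set.Icc 0 (ℓ₁+ℓ₂) → t ∈ Set.Icc 0 (ℓ₁+ℓ₂) → s ≤ t →
          dist (γ s) (γ t) ≤ t - s := by
        intro s t hs ht hst
        by_cases hsl : s ≤ ℓ₁ <;> by_cases htl : t ≤ ℓ₁
        · simp only [hγ, if_pos hsl, if_pos htl]
          rw [hi₁ s ⟨hs.1, hsl⟩ t ⟨ht.1, htl⟩, abs_of_nonpos (by linarith)]; linarith
        · push_neg at htl
          simp only [hγ, if_pos hsl, if_neg (not_le.mpr htl)]
          calc dist (γ₁ s) (γ₂ (t - ℓ₁))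
              ≤ dist (γ₁ s) (γ₁ ℓ₁) + dist (γ₁ ℓ₁) (γ₂ (t - ℓ₁)) := dist_triangle _ _ _
            _ ≤ (ℓ₁ - s) + (t - ℓ₁) := by
                have e1 := hi₁ s ⟨hs.1, hsl⟩ ℓ₁ ⟨h₁, le_refl _⟩
                have e2 : dist (γ₁ ℓ₁) (γ₂ (t-ℓ₁)) = |0 - (t-ℓ₁)| := by
                  rw [hm]; exact hi₂ 0 ⟨le_refl _, h₂⟩ (t-ℓ₁) ⟨by linarith, by linarith [ht.2]⟩
                rw [e2, e1, abs_of_nonpos (by linarith), abs_of_nonpos (by linarith)]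
                gcongr <;> linarith
            _ = t - s := by ring
        · exact absurd (hst.trans htl) hsl
        · push_neg at hsl
          simp only [hγ, if_neg (not_le.mpr hsl), if_neg (by push_neg at htl; exact not_le.mpr (lt_of_lt_of_le hsl hst))]
          rw [hi₂ (s-ℓ₁) ⟨by linarith, by linarith [hs.2]⟩ (t-ℓ₁) ⟨by linarith [hsl.le], by linarith [ht.2]⟩,
            abs_of_nonpos (by linarith)]
          linarith
      rcases le_total u v with h | h
      · rw [abs_of_nonpos (by linarith)]
        have := key u v hu hv h; linarith
      · rw [abs_of_nonneg (by linarith), dist_comm]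
        have := key v u hv hu h; linarith
    exact hlip.continuousOn
  · -- injectivity
    intro u hu v hv huv
    have mem1 : ∀ s : ℝ, s ∈ Set.Icc 0 (ℓ₁+ℓ₂) → s ≤ ℓ₁ → γ s ∈ γ₁ '' Set.Icc 0 ℓ₁ :=
      fun s hs hsl => ⟨s, ⟨hs.1, hsl⟩, by simp [hγ, if_pos hsl]⟩
    have mem2 : ∀ s : ℝ, s ∈ Set.Icc 0 (ℓ₁+ℓ₂) → ¬ s ≤ ℓ₁ → γ s ∈ γ₂ '' Set.Icc 0 ℓ₂ :=
      fun s hs hsl => ⟨s - ℓ₁, ⟨by push_neg at hsl; linarith, by linarith [hs.2]⟩,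
        by simp [hγ, if_neg hsl]⟩
    by_cases hul : u ≤ ℓ₁ <;> by_cases hvl : v ≤ ℓ₁
    · have : dist (γ₁ u) (γ₁ v) = |u - v| := hi₁ u ⟨hu.1, hul⟩ v ⟨hv.1, hvl⟩
      simp only [hγ, if_pos hul, if_pos hvl] at huv
      rw [huv, dist_self] at this
      have := this.symm
      rwa [abs_eq_zero, sub_eq_zero] at this
    · -- u in first, v in second
      have h1 : γ u ∈ γ₁ '' Set.Icc 0 ℓ₁ := mem1 u hu hul
      have h2 : γ v ∈ γ₂ '' Set.Icc 0 ℓ₂ := mem2 v hv hvl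
      rw [huv] at h1
      have hw : γ v = γ₁ ℓ₁ := hint _ h1 h2
      push_neg at hvl
      have e2 : dist (γ₂ 0) (γ₂ (v - ℓ₁)) = |0 - (v - ℓ₁)| :=
        hi₂ 0 ⟨le_refl _, h₂⟩ (v-ℓ₁) ⟨by linarith, by linarith [hv.2]⟩
      have : γ v = γ₂ (v - ℓ₁) := by simp [hγ, if_neg (not_le.mpr hvl)]
      rw [this, hm] at hw
      rw [← hw, dist_self] at e2
      have : v - ℓ₁ = 0 := by
        have := e2.symm; rw [abs_eq_zero] at this; linarith
      linarith
    · -- symmetric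
      have h1 : γ v ∈ γ₁ '' Set.Icc 0 ℓ₁ := mem1 v hv hvl
      have h2 : γ u ∈ γ₂ '' Set.Icc 0 ℓ₂ := mem2 u hu hul
      rw [← huv] at h1
      have hw : γ u = γ₁ ℓ₁ := hint _ h1 h2
      push_neg at hul
      have e2 : dist (γ₂ 0) (γ₂ (u - ℓ₁)) = |0 - (u - ℓ₁)| :=
        hi₂ 0 ⟨le_refl _, h₂⟩ (u-ℓ₁) ⟨by linarith, by linarith [hu.2]⟩
      have : γ u = γ₂ (u - ℓ₁) := by simp [hγ, if_neg (not_le.mpr hul)]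
      rw [this, hm] at hw
      rw [← hw, dist_self] at e2
      have : u - ℓ₁ = 0 := by
        have := e2.symm; rw [abs_eq_zero] at this; linarith
      linarith
    · push_neg at hul hvl
      simp only [hγ, if_neg (not_le.mpr hul), if_neg (not_le.mpr hvl)] at huv
      have : dist (γ₂ (u-ℓ₁)) (γ₂ (v-ℓ₁)) = |(u-ℓ₁) - (v-ℓ₁)| :=
        hi₂ (u-ℓ₁) ⟨by linarith, by linarith [hu.2]⟩ (v-ℓ₁) ⟨by linarith, by linarith [hv.2]⟩
      rw [huv, dist_self] at this
      have := this.symm; rw [abs_eq_zero] at this; linarith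
  · simp [hγ, if_pos h₁]
  · by_cases h : ℓ₁ + ℓ₂ ≤ ℓ₁
    · have : ℓ₂ = 0 := le_antisymm (by linarith) h₂
      simp [hγ, if_pos h, this, ← hm]
    · simp only [hγ, if_neg h]; ring_nf
  · ext w
    constructor
    · rintro (⟨s, hs, rfl⟩ | ⟨s, hs, rfl⟩)
      · exact ⟨s, ⟨hs.1, by linarith [hs.2]⟩, by simp [hγ, if_pos hs.2]⟩
      · refine ⟨s + ℓ₁, ⟨by linarith [hs.1], by linarith [hs.2]⟩, ?_⟩
        by_cases h : s + ℓ₁ ≤ ℓ₁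
        · have : s = 0 := le_antisymm (by linarith) hs.1
          simp [hγ, if_pos h, this, hm]
        · simp [hγ, if_neg h]
    · rintro ⟨s, hs, rfl⟩
      by_cases h : s ≤ ℓ₁
      · exact Or.inl ⟨s, ⟨hs.1, h⟩, by simp [hγ, if_pos h]⟩
      · refine Or.inr ⟨s - ℓ₁, ⟨by push_neg at h; linarith, by linarith [hs.2]⟩, ?_⟩
        simp [hγ, if_neg h]
end Concat

section Proj
variable {M : Type*} [MetricSpace M] (hM : IsRTree M)

lemma seg_isCompact (x y : M) : IsCompact (seg hM x y) := by
  obtain ⟨γ, hiso, h0, hl, hs⟩ := seg_geo hM x y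
  rw [hs]
  refine isCompact_Icc.image_of_continuousOn ?_
  refine LipschitzOnWith.continuousOn (K := 1) ?_
  rw [lipschitzOnWith_iff_dist_le_mul]
  intro u hu v hv
  rw [hiso u hu v hv, NNReal.coe_one, one_mul, Real.dist_eq]

lemma param_continuousOn : ∀ γ : ℝ → M, ∀ ℓ : ℝ,
    (∀ u ∈ Set.Icc (0:ℝ) ℓ, ∀ v ∈ Set.Icc (0:ℝ) ℓ, dist (γ u) (γ v) = |u - v|) →
    ContinuousOn γ (Set.Icc 0 ℓ) := by
  intro γ ℓ hiso
  refine LipschitzOnWith.continuousOn (K := 1) ?_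
  rw [lipschitzOnWith_iff_dist_le_mul]
  intro u hu v hv
  rw [hiso u hu v hv, NNReal.coe_one, one_mul, Real.dist_eq]

/-- Projection of `y` onto the segment `[z,q]`. -/
lemma exists_proj (z q y : M) :
    ∃ m, m ∈ seg hM z q ∧ dist y m + dist m z = dist y z ∧
      dist y m + dist m q = dist y q := by
  obtain ⟨δ, hδiso, hδ0, hδl, hδs⟩ := seg_geo hM y z
  set ℓ := dist y z with hℓdef
  obtain ⟨σ, hσiso, hσ0, hσl, hσs⟩ := seg_geo hM z q
  set L := dist z q with hLdef
  set S := seg hM z q with hSdef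
  set T : Set ℝ := Set.Icc 0 ℓ ∩ δ ⁻¹' S with hTdef
  have hTne : T.Nonempty := ⟨ℓ, ⟨dist_nonneg, le_refl _⟩, by
    simp only [Set.mem_preimage, hδl]; exact left_mem_seg hM z q⟩
  have hTclosed : IsClosed T := by
    refine ContinuousOn.preimage_isClosed_of_isClosed ?_ isClosed_Icc
      (seg_isCompact hM z q).isClosed
    exact param_continuousOn δ ℓ hδiso
  have hTbdd : BddBelow T := ⟨0, fun t ht => ht.1.1⟩
  set t₀ := sInf T with ht₀def
  have ht₀T : t₀ ∈ T := hTclosed.csInf_mem hTne hTbdd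
  have ht₀mem : t₀ ∈ Set.Icc (0:ℝ) ℓ := ht₀T.1
  set m := δ t₀ with hmdef
  have hmS : m ∈ S := ht₀T.2
  have hym : dist y m = t₀ := by
    have := hδiso 0 ⟨le_refl _, dist_nonneg⟩ t₀ ht₀mem
    rw [hδ0] at this; rw [this, abs_of_nonpos (by linarith [ht₀mem.1])]; ring
  have hmz : dist m z = ℓ - t₀ := by
    have := hδiso t₀ ht₀mem ℓ ⟨dist_nonneg, le_refl _⟩
    rw [hδl] at this; rw [this, abs_of_nonpos (by linarith [ht₀mem.2])]; ring
  refine ⟨m, hmS, by rw [hym, hmz]; ring, ?_⟩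
  -- m = σ s₀ where s₀ = dist z m
  set s₀ := dist z m with hs₀def
  have hσm : σ s₀ = m := by
    rw [hσs] at hmS
    obtain ⟨s, hsmem, hs⟩ := hmS
    have : dist z m = s := by
      rw [← hs, ← hσ0]
      rw [hσiso 0 ⟨le_refl _, dist_nonneg⟩ s hsmem, abs_of_nonpos (by linarith [hsmem.1])]
      ring
    rw [hs₀def, this, hs]
  have hs₀mem : s₀ ∈ Set.Icc (0:ℝ) L := by
    have hzm : dist z m + dist m q = dist z q := seg_dist_left hM hmS
    exact ⟨dist_nonneg, by have := dist_nonneg (x := m) (y := q); rw [hs₀def]; linarith⟩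
  -- build the concatenated arc from y to q
  set γB : ℝ → M := fun t => σ (s₀ + t) with hγB
  have hiB : ∀ u ∈ Set.Icc (0:ℝ) (L - s₀), ∀ v ∈ Set.Icc (0:ℝ) (L - s₀),
      dist (γB u) (γB v) = |u - v| := by
    intro u hu v hv
    have := hσiso (s₀ + u) ⟨by linarith [hs₀mem.1, hu.1], by linarith [hu.2]⟩
      (s₀ + v) ⟨by linarith [hs₀mem.1, hv.1], by linarith [hv.2]⟩
    rw [this]; congr 1; ring
  have hiA : ∀ u ∈ Set.Icc (0:ℝ) t₀, ∀ v ∈ Set.Icc (0:ℝ) t₀,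
      dist (δ u) (δ v) = |u - v| := by
    intro u hu v hv
    exact hδiso u ⟨hu.1, hu.2.trans ht₀mem.2⟩ v ⟨hv.1, hv.2.trans ht₀mem.2⟩
  have harc : IsArcFromTo (δ '' Set.Icc 0 t₀ ∪ γB '' Set.Icc 0 (L - s₀)) (δ 0) (γB (L - s₀)) := by
    refine geo_concat ht₀mem.1 (by linarith [hs₀mem.2]) δ γB hiA hiB ?_ ?_
    · simp only [hγB, add_zero, hσm, hmdef]
    · rintro w ⟨t, ht, rfl⟩ ⟨u, hu, hw⟩
      have hwS : δ t ∈ S := by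
        rw [hσs, ← hw]
        exact ⟨s₀ + u, ⟨by linarith [hs₀mem.1, hu.1], by linarith [hu.2]⟩, rfl⟩
      have : t ∈ T := ⟨⟨ht.1, ht.2.trans ht₀mem.2⟩, hwS⟩
      have : t₀ ≤ t := csInf_le hTbdd this
      have : t = t₀ := le_antisymm ht.2 this
      rw [this]
  rw [hδ0] at harc
  have hBl : γB (L - s₀) = q := by
    simp only [hγB]; rw [show s₀ + (L - s₀) = L by ring, hσl]
  rw [hBl] at harc
  have hseg : δ '' Set.Icc 0 t₀ ∪ γB '' Set.Icc 0 (L - s₀) = seg hM y q :=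
    seg_unique hM harc
  have hmseg : m ∈ seg hM y q := by
    rw [← hseg]
    exact Or.inl ⟨t₀, ⟨ht₀mem.1, le_refl _⟩, rfl⟩
  exact seg_dist_left hM hmseg
end Proj

section Step
variable {M : Type*} [MetricSpace M]

/-- 0-hyperbolicity of ℝ-trees: Gromov products inequality. -/
lemma gromov (hM : IsRTree M) (z q y₁ y₂ : M) :
    min (dist z y₁ + dist z q - dist y₁ q) (dist z y₂ + dist z q - dist y₂ q) ≤
      dist z y₁ + dist z y₂ - dist y₁ y₂ := by
  obtain ⟨m₁, hm₁S, hm₁a, hm₁b⟩ := exists_proj hM z q y₁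
  obtain ⟨m₂, hm₂S, hm₂a, hm₂b⟩ := exists_proj hM z q y₂
  have e₁ : dist z m₁ + dist m₁ q = dist z q := seg_dist_left hM hm₁S
  have e₂ : dist z m₂ + dist m₂ q = dist z q := seg_dist_left hM hm₂S
  have e₃ : dist m₁ m₂ = |dist z m₁ - dist z m₂| := seg_dist_mem hM hm₁S hm₂S
  have tri : dist y₁ y₂ ≤ dist y₁ m₁ + dist m₁ m₂ + dist m₂ y₂ :=
    (dist_triangle y₁ m₂ y₂).trans (by linarith [dist_triangle y₁ m₁ m₂])
  have d1 : dist z y₁ = dist y₁ m₁ + dist z m₁ := by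
    rw [dist_comm z y₁, dist_comm z m₁] at *; linarith
  have d2 : dist z y₂ = dist y₂ m₂ + dist z m₂ := by
    rw [dist_comm z y₂, dist_comm z m₂] at *; linarith
  have f1 : dist z y₁ + dist z q - dist y₁ q = 2 * dist z m₁ := by
    rw [dist_comm m₂ y₂] at *; linarith
  have f2 : dist z y₂ + dist z q - dist y₂ q = 2 * dist z m₂ := by
    rw [dist_comm m₂ y₂] at *; linarith
  rcases le_total (dist z m₁) (dist z m₂) with h | h
  · rw [e₃, abs_of_nonpos (by linarith)] at tri
    calc min (dist z y₁ + dist z q - dist y₁ q) (dist z y₂ + dist z q - dist y₂ q)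
        ≤ dist z y₁ + dist z q - dist y₁ q := min_le_left _ _
      _ ≤ dist z y₁ + dist z y₂ - dist y₁ y₂ := by
          rw [f1, dist_comm m₂ y₂] at *; linarith
  · rw [e₃, abs_of_nonneg (by linarith)] at tri
    calc min (dist z y₁ + dist z q - dist y₁ q) (dist z y₂ + dist z q - dist y₂ q)
        ≤ dist z y₂ + dist z q - dist y₂ q := min_le_right _ _
      _ ≤ dist z y₁ + dist z y₂ - dist y₁ y₂ := by
          rw [f2, dist_comm m₂ y₂] at *; linarith

/-- One step of the construction: from `z` we can move to a point `y` nearly at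
distance `r` from `p`, within the branch (away from `a`). -/
lemma step (hM : IsRTree M) (p a : M) (r : ℝ) (hrad : ∀ x : M, dist p x ≤ r)
    (hbc : BranchingCondition p r) (z : M) (ε : ℝ) :
    ∃ y : M, 0 < ε → ε < dist a z →
      a ∉ seg hM z y ∧ r - 3*ε ≤ dist p y ∧
      dist z y ≤ r - dist p z + ε ∧ dist a z - 3*ε ≤ dist a y := by
  by_cases hε : 0 < ε ∧ ε < dist a z
  swap
  · exact ⟨z, fun h1 h2 => absurd ⟨h1, h2⟩ hε⟩
  obtain ⟨hε0, hεa⟩ := hε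
  obtain ⟨y₁, y₂, y₃, hb1, hb2, hb3, h12, h13, h23⟩ := hbc z ε hε0
  -- a `good` point has small Gromov products with both p and a at z
  have keyP : ∀ u v : M, dist z u + dist z v - dist u v ≤ ε →
      2*ε < dist z u + dist z p - dist u p → 2*ε < dist z v + dist z p - dist v p →
      False := by
    intro u v huv hu hv
    have := gromov hM z p u v
    rcases min_le_iff.mp this with h | h <;> linarith
  have keyA : ∀ u v : M, dist z u + dist z v - dist u v ≤ ε →
      2*ε < dist z u + dist z a - dist u a → 2*ε < dist z v + dist z a - dist v a →
      False := by
    intro u v huv hu hv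
    have := gromov hM z a u v
    rcases min_le_iff.mp this with h | h <;> linarith
  -- choose a good point y among y₁ y₂ y₃
  have main : ∀ y : M, |dist z y - (r - dist p z)| ≤ ε →
      dist z y + dist z p - dist y p ≤ 2*ε → dist z y + dist z a - dist y a ≤ 2*ε →
      a ∉ seg hM z y ∧ r - 3*ε ≤ dist p y ∧
      dist z y ≤ r - dist p z + ε ∧ dist a z - 3*ε ≤ dist a y := by
    intro y hb hP hA
    rw [abs_le] at hb
    have hPz := hrad z
    have c1 : dist a z = dist z a := dist_comm a z
    have c2 : dist a y = dist y a := dist_comm a y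
    have c3 : dist y p = dist p y := dist_comm y p
    have c4 : dist z p = dist p z := dist_comm z p
    refine ⟨?_, by linarith, by linarith, by linarith⟩
    intro hmem
    have := seg_dist_left hM hmem
    linarith
  by_cases p1 : dist z y₁ + dist z p - dist y₁ p ≤ 2*ε
  · by_cases a1 : dist z y₁ + dist z a - dist y₁ a ≤ 2*ε
    · exact ⟨y₁, fun _ _ => main y₁ hb1 p1 a1⟩
    · push_neg at a1
      have a2 : dist z y₂ + dist z a - dist y₂ a ≤ 2*ε := by
        by_contra h; push_neg at h; exact keyA y₁ y₂ h12 a1 h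
      have a3 : dist z y₃ + dist z a - dist y₃ a ≤ 2*ε := by
        by_contra h; push_neg at h; exact keyA y₁ y₃ h13 a1 h
      by_cases p2 : dist z y₂ + dist z p - dist y₂ p ≤ 2*ε
      · exact ⟨y₂, fun _ _ => main y₂ hb2 p2 a2⟩
      · push_neg at p2
        have p3 : dist z y₃ + dist z p - dist y₃ p ≤ 2*ε := by
          by_contra h; push_neg at h; exact keyP y₂ y₃ h23 p2 h
        exact ⟨y₃, fun _ _ => main y₃ hb3 p3 a3⟩
  · push_neg at p1
    have p2 : dist z y₂ + dist z p - dist y₂ p ≤ 2*ε := by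
      by_contra h; push_neg at h; exact keyP y₁ y₂ h12 p1 h
    have p3 : dist z y₃ + dist z p - dist y₃ p ≤ 2*ε := by
      by_contra h; push_neg at h; exact keyP y₁ y₃ h13 p1 h
    by_cases a2 : dist z y₂ + dist z a - dist y₂ a ≤ 2*ε
    · exact ⟨y₂, fun _ _ => main y₂ hb2 p2 a2⟩
    · push_neg at a2
      have a3 : dist z y₃ + dist z a - dist y₃ a ≤ 2*ε := by
        by_contra h; push_neg at h; exact keyA y₂ y₃ h23 a2 h
      exact ⟨y₃, fun _ _ => main y₃ hb3 p3 a3⟩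

/-- If `a` is not on the segment `[u,v]`, then `v` is in the connected component
of `u` in the complement of `{a}`. -/
lemma mem_component_of_not_mem_seg (hM : IsRTree M) {u v a : M} (h : a ∉ seg hM u v) :
    v ∈ connectedComponentIn (({a} : Set M)ᶜ) u := by
  obtain ⟨γ, hiso, h0, hl, hs⟩ := seg_geo hM u v
  have hconn : IsPreconnected (seg hM u v) := by
    rw [hs]
    exact isPreconnected_Icc.image γ (param_continuousOn γ (dist u v) hiso)
  have hsub : seg hM u v ⊆ (({a} : Set M)ᶜ) := by
    intro w hw
    simp only [Set.mem_compl_iff, Set.mem_singleton_iff]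
    rintro rfl; exact h hw
  exact hconn.subset_connectedComponentIn (left_mem_seg hM u v) hsub (right_mem_seg hM u v)

end Step


/-- In a complete pointed ℝ-tree of radius ≤ `r` satisfying the
branching condition, every branch at every point contains a point at distance
exactly `r` from the basepoint. -/
theorem statement_9 {M : Type*} [MetricSpace M] [CompleteSpace M]
    (r : ℝ) (hr : 0 < r) (hM : IsRTree M) (p : M)
    (hrad : ∀ x : M, dist p x ≤ r) (hbc : BranchingCondition p r)
    (a : M) (β : Set M) (hβ : β ∈ Branches a) :
    ∃ b ∈ β, dist p b = r := by
  obtain ⟨x, hxa, hβeq⟩ := hβ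
  have hδ : 0 < dist a x := dist_pos.mpr (fun h => hxa h.symm)
  set δ := dist a x with hδdef
  set ε₀ := δ/16 with hε₀def
  have hε₀pos : 0 < ε₀ := by positivity
  have hpow : ∀ n : ℕ, 0 < (1/2:ℝ)^n ∧ (1/2:ℝ)^n ≤ 1 := fun n =>
    ⟨pow_pos (by norm_num) n, pow_le_one₀ (by norm_num) (by norm_num)⟩
  have hεn : ∀ n : ℕ, 0 < ε₀ * (1/2:ℝ)^n := fun n => by
    have := (hpow n).1; positivity
  -- the step function
  choose f hf using fun z ε => step hM p a r hrad hbc z ε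
  set Z : ℕ → M := fun n => Nat.rec x (fun n zn => f zn (ε₀ * (1/2:ℝ)^n)) n with hZdef
  have hZ0 : Z 0 = x := rfl
  have hZs : ∀ n, Z (n+1) = f (Z n) (ε₀ * (1/2:ℝ)^n) := fun n => rfl
  -- invariant
  have inv : ∀ n, δ - 6*ε₀*(1-(1/2:ℝ)^n) ≤ dist a (Z n) ∧
      Z n ∈ connectedComponentIn (({a} : Set M)ᶜ) x := by
    intro n
    induction n with
    | zero =>
      refine ⟨by rw [hZ0]; norm_num; exact hδdef.le, ?_⟩
      rw [hZ0]
      exact mem_connectedComponentIn (by simp [hxa])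
    | succ n ih =>
      have hp := hpow n
      have hcond : ε₀ * (1/2:ℝ)^n < dist a (Z n) := by
        have : δ - 6*ε₀*(1-(1/2:ℝ)^n) ≥ δ - 6*ε₀ := by nlinarith [hp.1, hp.2]
        have h2 : ε₀ * (1/2:ℝ)^n ≤ ε₀ := by nlinarith [hp.1, hp.2]
        have h3 : δ - 6*ε₀ = 10*ε₀ := by rw [hε₀def]; ring
        linarith [ih.1]
      obtain ⟨hseg, hdistp, hdz, hda⟩ := hf (Z n) _ (hεn n) hcond
      rw [← hZs n] at hseg hdistp hdz hda
      constructor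
      · have : (1/2:ℝ)^(n+1) = (1/2:ℝ)^n * (1/2) := pow_succ _ _
        nlinarith [ih.1]
      · have h1 : Z (n+1) ∈ connectedComponentIn (({a} : Set M)ᶜ) (Z n) :=
          mem_component_of_not_mem_seg hM hseg
        rwa [connectedComponentIn_eq ih.2]
  have hcond : ∀ n, ε₀ * (1/2:ℝ)^n < dist a (Z n) := by
    intro n
    have hp := hpow n
    have h3 : δ - 6*ε₀ = 10*ε₀ := by rw [hε₀def]; ring
    nlinarith [(inv n).1, hp.1, hp.2]
  have props : ∀ n, a ∉ seg hM (Z n) (Z (n+1)) ∧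
      r - 3*(ε₀ * (1/2:ℝ)^n) ≤ dist p (Z (n+1)) ∧
      dist (Z n) (Z (n+1)) ≤ r - dist p (Z n) + ε₀ * (1/2:ℝ)^n ∧
      dist a (Z n) - 3*(ε₀ * (1/2:ℝ)^n) ≤ dist a (Z (n+1)) := by
    intro n
    have := hf (Z n) _ (hεn n) (hcond n)
    rwa [← hZs n] at this
  -- Cauchy
  have hcauchy : CauchySeq Z := by
    refine cauchySeq_of_le_geometric (1/2) (r + 7*ε₀) (by norm_num) ?_
    intro n
    match n with
    | 0 =>
      have := (props 0).2.2.1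
      have h0 : dist p (Z 0) ≥ 0 := dist_nonneg
      simp only [pow_zero, mul_one] at this ⊢
      nlinarith
    | (n+1) =>
      have h1 := (props (n+1)).2.2.1
      have h2 := (props n).2.1
      have hp := hpow n
      have : (1/2:ℝ)^(n+1) = (1/2:ℝ)^n * (1/2) := pow_succ _ _
      nlinarith [hp.1]
  obtain ⟨b, hb⟩ := cauchySeq_tendsto_of_complete hcauchy
  -- dist p b = r
  have hdistt : Filter.Tendsto (fun n => dist p (Z n)) Filter.atTop (nhds (dist p b)) :=
    Filter.Tendsto.dist tendsto_const_nhds hb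
  have hgeolim : Filter.Tendsto (fun n : ℕ => r - 6*ε₀*(1/2:ℝ)^n) Filter.atTop (nhds r) := by
    have h0 : Filter.Tendsto (fun n : ℕ => (1/2:ℝ)^n) Filter.atTop (nhds 0) :=
      tendsto_pow_atTop_nhds_zero_of_lt_one (by norm_num) (by norm_num)
    have := Filter.Tendsto.sub (tendsto_const_nhds (x := r))
      (h0.const_mul (6*ε₀))
    simpa using this
  have hsqueeze : Filter.Tendsto (fun n => dist p (Z n)) Filter.atTop (nhds r) := by
    refine tendsto_of_tendsto_of_tendsto_of_le_of_le' hgeolim tendsto_const_nhds ?_ ?_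
    · filter_upwards [Filter.eventually_ge_atTop 1] with n hn
      match n, hn with
      | (m+1), _ =>
        have := (props m).2.1
        have : (1/2:ℝ)^(m+1) = (1/2:ℝ)^m * (1/2) := pow_succ _ _
        nlinarith [(props m).2.1]
    · exact Filter.Eventually.of_forall fun n => hrad (Z n)
  have hpb : dist p b = r := tendsto_nhds_unique hdistt hsqueeze
  -- b is in the branch
  obtain ⟨N, hN⟩ := Metric.tendsto_atTop.mp hb (δ/2) (by linarith)
  have h1 : dist (Z N) b < δ/2 := hN N le_rfl
  have h2 : 5*δ/8 ≤ dist a (Z N) := by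
    have hp := hpow N
    have := (inv N).1
    have h3 : δ = 16*ε₀ := by rw [hε₀def]; ring
    nlinarith [hp.1, hp.2]
  have hsegb : a ∉ seg hM (Z N) b := by
    intro hmem
    have hd := seg_dist_left hM hmem
    have c1 : dist (Z N) a = dist a (Z N) := dist_comm _ _
    have c2 : dist a b ≥ 0 := dist_nonneg
    linarith
  have hbcomp : b ∈ connectedComponentIn (({a} : Set M)ᶜ) x := by
    rw [connectedComponentIn_eq (inv N).2]
    exact mem_component_of_not_mem_seg hM hsegb
  exact ⟨b, hβeq ▸ hbcomp, hpb⟩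
end

section
/- Let r > 0 and let (M,d,p) be a complete pointed ℝ-tree of radius ≤ r. Then (M,d,p) satisfies the branching condition for radius r if and only if (M,d,p) is richly branching; moreover, in that case sup{d(p,x) : x ∈ M} = r, i.e., M has radius exactly r. -/
open Set Metric

section Tree
variable {M : Type*} [MetricSpace M]

/-- An isometrically parametrized curve is an arc. -/
lemma isArc_of_isom {γ : ℝ → M} {ℓ : ℝ} (hℓ : 0 ≤ ℓ)
    (hiso : ∀ u ∈ Icc (0:ℝ) ℓ, ∀ v ∈ Icc (0:ℝ) ℓ, dist (γ u) (γ v) = |u - v|) :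
    IsArcFromTo (γ '' Icc 0 ℓ) (γ 0) (γ ℓ) := by
  refine ⟨ℓ, hℓ, γ, ?_, ?_, rfl, rfl, rfl⟩
  · refine LipschitzOnWith.continuousOn (K := 1) ?_
    rw [lipschitzOnWith_iff_dist_le_mul]
    intro x hx y hy
    rw [hiso x hx y hy, Real.dist_eq, NNReal.coe_one, one_mul]
  · intro x hx y hy hxy
    have := hiso x hx y hy
    rw [hxy, dist_self] at this
    have := abs_eq_zero.mp this.symm
    linarith [this]

lemma exists_geo (hM : IsRTree M) (a b : M) :
    ∃ γ : ℝ → M,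
      (∀ u ∈ Icc (0:ℝ) (dist a b), ∀ v ∈ Icc (0:ℝ) (dist a b), dist (γ u) (γ v) = |u - v|) ∧
      γ 0 = a ∧ γ (dist a b) = b ∧
      ∀ t : Set M, IsArcFromTo t a b → t = γ '' Icc 0 (dist a b) := by
  obtain ⟨s, _, hgeo, huniq⟩ := hM a b
  obtain ⟨ℓ, hl, γ, hiso, h0, hend, hs⟩ := hgeo
  have hlen : ℓ = dist a b := by
    have h := hiso 0 ⟨le_refl _, hl⟩ ℓ ⟨hl, le_refl _⟩
    rw [h0, hend] at h
    rw [h, abs_of_nonpos (by linarith)]; ring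
  subst hlen
  refine ⟨γ, hiso, h0, hend, fun t ht => ?_⟩
  rw [huniq t ht, hs]

variable (hM : IsRTree M)
include hM

noncomputable def geo (a b : M) : ℝ → M := (exists_geo hM a b).choose

lemma geo_isom (a b : M) : ∀ u ∈ Icc (0:ℝ) (dist a b), ∀ v ∈ Icc (0:ℝ) (dist a b),
    dist (geo hM a b u) (geo hM a b v) = |u - v| := (exists_geo hM a b).choose_spec.1

lemma geo_zero (a b : M) : geo hM a b 0 = a := (exists_geo hM a b).choose_spec.2.1

lemma geo_last (a b : M) : geo hM a b (dist a b) = b := (exists_geo hM a b).choose_spec.2.2.1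

lemma geo_unique (a b : M) : ∀ t : Set M, IsArcFromTo t a b → t = geo hM a b '' Icc 0 (dist a b) :=
  (exists_geo hM a b).choose_spec.2.2.2

lemma geo_dist_left {a b : M} {t : ℝ} (ht : t ∈ Icc (0:ℝ) (dist a b)) :
    dist a (geo hM a b t) = t := by
  have := geo_isom hM a b 0 ⟨le_refl _, dist_nonneg⟩ t ht
  rw [geo_zero] at this
  rw [this, abs_of_nonpos (by linarith [ht.1])]; ring

lemma geo_dist_right {a b : M} {t : ℝ} (ht : t ∈ Icc (0:ℝ) (dist a b)) :
    dist (geo hM a b t) b = dist a b - t := by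
  have := geo_isom hM a b t ht (dist a b) ⟨dist_nonneg, le_refl _⟩
  rw [geo_last] at this
  rw [this, abs_of_nonpos (by linarith [ht.2])]; ring

lemma geo_mem_dist {a b w : M} (hw : w ∈ geo hM a b '' Icc 0 (dist a b)) :
    w = geo hM a b (dist a w) ∧ dist a w + dist w b = dist a b := by
  obtain ⟨t, ht, rfl⟩ := hw
  rw [geo_dist_left hM ht, geo_dist_right hM ht]
  exact ⟨rfl, by ring⟩


/-- Gluing: if `m` lies metrically between `a` and `b`, it is on the geodesic. -/
lemma between_mem_geo {a b m : M} (h : dist a m + dist m b = dist a b) :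
    geo hM a b (dist a m) = m := by
  set ℓ₁ := dist a m with hℓ₁
  set ℓ₂ := dist m b with hℓ₂
  set D := dist a b with hD
  set δ : ℝ → M := fun t => if t ≤ ℓ₁ then geo hM a m t else geo hM m b (t - ℓ₁) with hδ
  have key : ∀ u ∈ Icc (0:ℝ) D, ∀ v ∈ Icc (0:ℝ) D, u ≤ v → dist (δ u) (δ v) = |u - v|
  · intro u hu v hv huv
    rw [abs_of_nonpos (by linarith)]
    by_cases h1 : u ≤ ℓ₁ <;> by_cases h2 : v ≤ ℓ₁
    · simp only [hδ, if_pos h1, if_pos h2]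
      rw [geo_isom hM a m u ⟨hu.1, h1⟩ v ⟨hv.1, h2⟩, abs_of_nonpos (by linarith)]
    · push_neg at h2
      simp only [hδ, if_pos h1, if_neg (not_le.mpr h2)]
      have hvm : v - ℓ₁ ∈ Icc (0:ℝ) ℓ₂ := ⟨by linarith, by linarith [hv.2]⟩
      have hum : u ∈ Icc (0:ℝ) ℓ₁ := ⟨hu.1, h1⟩
      have e1 : dist (geo hM a m u) m = ℓ₁ - u := geo_dist_right hM hum
      have e2 : dist m (geo hM m b (v - ℓ₁)) = v - ℓ₁ := geo_dist_left hM hvm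
      have e3 : dist a (geo hM a m u) = u := geo_dist_left hM hum
      have e4 : dist (geo hM m b (v - ℓ₁)) b = ℓ₂ - (v - ℓ₁) := geo_dist_right hM hvm
      have hle : dist (geo hM a m u) (geo hM m b (v - ℓ₁)) ≤ v - u := by
        calc dist (geo hM a m u) (geo hM m b (v - ℓ₁))
            ≤ dist (geo hM a m u) m + dist m (geo hM m b (v - ℓ₁)) := dist_triangle _ _ _
          _ = v - u := by rw [e1, e2]; ring
      have hge : v - u ≤ dist (geo hM a m u) (geo hM m b (v - ℓ₁)) := by
        have := dist_triangle4 a (geo hM a m u) (geo hM m b (v - ℓ₁)) b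
        rw [e3, e4, ← hD] at this
        linarith
      linarith
    · push_neg at h1; linarith
    · push_neg at h1
      simp only [hδ, if_neg (not_le.mpr h1), if_neg (by push_neg at h2; exact not_le.mpr h2)]
      push_neg at h2
      rw [geo_isom hM m b (u - ℓ₁) ⟨by linarith, by linarith [hu.2]⟩
          (v - ℓ₁) ⟨by linarith, by linarith [hv.2]⟩, abs_of_nonpos (by linarith)]
      ring
  have key' : ∀ u ∈ Icc (0:ℝ) D, ∀ v ∈ Icc (0:ℝ) D, dist (δ u) (δ v) = |u - v|
  · intro u hu v hv
    rcases le_total u v with h' | h'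
    · exact key u hu v hv h'
    · rw [dist_comm, abs_sub_comm]; exact key v hv u hu h'
  have hδ0 : δ 0 = a := by
    simp only [hδ, if_pos (hℓ₁ ▸ dist_nonneg)]; exact geo_zero hM a m
  have hδD : δ D = b := by
    by_cases hc : D ≤ ℓ₁
    · have h2 : ℓ₂ = 0 := by have := dist_nonneg (x := m) (y := b); linarith
      have hmb : m = b := by rw [← dist_eq_zero]; exact h2
      have hDℓ : D = ℓ₁ := by linarith [dist_nonneg (x := m) (y := b)]
      simp only [hδ, if_pos hc, hDℓ]
      rw [hℓ₁, geo_last hM a m, hmb]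
      simp
    · simp only [hδ, if_neg hc]
      have : D - ℓ₁ = ℓ₂ := by linarith
      rw [this, hℓ₂, geo_last hM m b]
  have harc : IsArcFromTo (δ '' Icc 0 D) a b := by
    rw [← hδ0, ← hδD]
    exact isArc_of_isom dist_nonneg key'
  have himg := geo_unique hM a b _ harc
  have hmem : m ∈ geo hM a b '' Icc 0 D := by
    rw [← himg]
    refine ⟨ℓ₁, ⟨hℓ₁ ▸ dist_nonneg, by linarith [dist_nonneg (x := m) (y := b)]⟩, ?_⟩
    simp only [hδ, if_pos le_rfl]
    rw [hℓ₁]; exact geo_last hM a m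
  exact ((geo_mem_dist hM hmem).1).symm

/-- Two points metrically between `a` and `b`: their distance is the difference
of their distances from `a`. -/
lemma dist_between {a b m₁ m₂ : M}
    (h₁ : dist a m₁ + dist m₁ b = dist a b)
    (h₂ : dist a m₂ + dist m₂ b = dist a b) :
    dist m₁ m₂ = |dist a m₁ - dist a m₂| := by
  have e₁ := between_mem_geo hM h₁
  have e₂ := between_mem_geo hM h₂
  have := geo_isom hM a b (dist a m₁)
      ⟨dist_nonneg, by linarith [dist_nonneg (x := m₁) (y := b)]⟩ (dist a m₂)
      ⟨dist_nonneg, by linarith [dist_nonneg (x := m₂) (y := b)]⟩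
  rw [e₁, e₂] at this
  exact this


/-- Median point of `a, u, v` in an ℝ-tree. -/
lemma median (a u v : M) : ∃ m : M,
    dist a u = dist a m + dist m u ∧
    dist a v = dist a m + dist m v ∧
    dist u v = dist u m + dist m v := by
  set ℓ₁ := dist a u with hℓ₁
  set ℓ₂ := dist a v with hℓ₂
  set γ₁ := geo hM a u with hγ₁
  set γ₂ := geo hM a v with hγ₂
  set T : Set ℝ := {t | t ∈ Icc (0:ℝ) (min ℓ₁ ℓ₂) ∧ γ₁ t = γ₂ t} with hT
  have hT0 : (0:ℝ) ∈ T := by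
    refine ⟨⟨le_refl _, le_min (hℓ₁ ▸ dist_nonneg) (hℓ₂ ▸ dist_nonneg)⟩, ?_⟩
    rw [hγ₁, hγ₂, geo_zero, geo_zero]
  have hTne : T.Nonempty := ⟨0, hT0⟩
  have hTbdd : BddAbove T := ⟨min ℓ₁ ℓ₂, fun t ht => ht.1.2⟩
  set t₀ := sSup T with ht₀
  have ht₀0 : 0 ≤ t₀ := le_csSup hTbdd hT0
  have ht₀le : t₀ ≤ min ℓ₁ ℓ₂ := csSup_le hTne (fun t ht => ht.1.2)
  have ht₀1 : t₀ ∈ Icc (0:ℝ) ℓ₁ := ⟨ht₀0, le_trans ht₀le (min_le_left _ _)⟩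
  have ht₀2 : t₀ ∈ Icc (0:ℝ) ℓ₂ := ⟨ht₀0, le_trans ht₀le (min_le_right _ _)⟩
  have hmeet : γ₁ t₀ = γ₂ t₀ := by
    rw [← dist_eq_zero]
    by_contra hne
    have hpos : 0 < dist (γ₁ t₀) (γ₂ t₀) := lt_of_le_of_ne dist_nonneg (Ne.symm hne)
    obtain ⟨t, htT, hlt⟩ := exists_lt_of_lt_csSup hTne
      (show t₀ - dist (γ₁ t₀) (γ₂ t₀) / 4 < sSup T by rw [← ht₀]; linarith)
    have htle : t ≤ t₀ := le_csSup hTbdd htT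
    have ht1 : t ∈ Icc (0:ℝ) ℓ₁ := ⟨htT.1.1, le_trans htT.1.2 (min_le_left _ _)⟩
    have ht2 : t ∈ Icc (0:ℝ) ℓ₂ := ⟨htT.1.1, le_trans htT.1.2 (min_le_right _ _)⟩
    have d1 : dist (γ₁ t₀) (γ₁ t) = |t₀ - t| := geo_isom hM a u t₀ ht₀1 t ht1
    have d2 : dist (γ₂ t) (γ₂ t₀) = |t - t₀| := geo_isom hM a v t ht2 t₀ ht₀2
    have h4 := dist_triangle4 (γ₁ t₀) (γ₁ t) (γ₂ t) (γ₂ t₀)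
    rw [d1, htT.2, dist_self, d2] at h4
    rw [abs_of_nonneg (by linarith), abs_of_nonpos (by linarith)] at h4
    linarith
  have dam : dist a (γ₁ t₀) = t₀ := geo_dist_left hM ht₀1
  have dmu : dist (γ₁ t₀) u = ℓ₁ - t₀ := geo_dist_right hM ht₀1
  have dmv : dist (γ₁ t₀) v = ℓ₂ - t₀ := by
    rw [hmeet]; exact geo_dist_right hM ht₀2
  refine ⟨γ₁ t₀, by rw [dam, dmu]; ring, by rw [dam, dmv]; ring, ?_⟩
  -- the hard additivity `dist u v = dist u m + dist m v` via arc uniqueness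
  set L := (ℓ₁ - t₀) + (ℓ₂ - t₀) with hL
  set δ : ℝ → M := fun t => if t ≤ ℓ₁ - t₀ then γ₁ (ℓ₁ - t) else γ₂ (t - (ℓ₁ - t₀) + t₀)
    with hδ
  have harg1 : ∀ t, 0 ≤ t → t ≤ ℓ₁ - t₀ → ℓ₁ - t ∈ Icc (0:ℝ) ℓ₁ := by
    intro t h1 h2; exact ⟨by linarith, by linarith⟩
  have harg2 : ∀ t, ℓ₁ - t₀ ≤ t → t ≤ L → t - (ℓ₁ - t₀) + t₀ ∈ Icc (0:ℝ) ℓ₂ := by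
    intro t h1 h2; constructor <;> simp only [hL] at h2 ⊢ <;> linarith
  have hlip : ∀ s ∈ Icc (0:ℝ) L, ∀ t ∈ Icc (0:ℝ) L, s ≤ t → dist (δ s) (δ t) ≤ t - s := by
    intro s hs t ht hst
    by_cases h1 : s ≤ ℓ₁ - t₀ <;> by_cases h2 : t ≤ ℓ₁ - t₀
    · simp only [hδ, if_pos h1, if_pos h2]
      rw [geo_isom hM a u _ (harg1 s hs.1 h1) _ (harg1 t ht.1 h2)]
      rw [abs_of_nonneg (by linarith)]; linarith
    · push_neg at h2
      simp only [hδ, if_pos h1, if_neg (not_le.mpr h2)]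
      have e1 : dist (γ₁ (ℓ₁ - s)) (γ₁ t₀) = |(ℓ₁ - s) - t₀| :=
        geo_isom hM a u _ (harg1 s hs.1 h1) t₀ ht₀1
      have e2 : dist (γ₂ t₀) (γ₂ (t - (ℓ₁ - t₀) + t₀)) = |t₀ - (t - (ℓ₁ - t₀) + t₀)| :=
        geo_isom hM a v t₀ ht₀2 _ (harg2 t (by linarith) ht.2)
      calc dist (γ₁ (ℓ₁ - s)) (γ₂ (t - (ℓ₁ - t₀) + t₀))
          ≤ dist (γ₁ (ℓ₁ - s)) (γ₁ t₀) + dist (γ₁ t₀) (γ₂ (t - (ℓ₁ - t₀) + t₀)) :=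
            dist_triangle _ _ _
        _ = |(ℓ₁ - s) - t₀| + |t₀ - (t - (ℓ₁ - t₀) + t₀)| := by rw [e1, hmeet, e2]
        _ ≤ t - s := by
            rw [abs_of_nonneg (by linarith), abs_of_nonpos (by linarith)]; linarith
    · push_neg at h1; linarith
    · push_neg at h1
      simp only [hδ, if_neg (not_le.mpr h1), if_neg h2]
      push_neg at h2
      rw [geo_isom hM a v _ (harg2 s (le_of_lt h1) hs.2) _ (harg2 t (le_of_lt h2) ht.2)]
      rw [abs_of_nonpos (by linarith)]; linarith
  have hLnn : (0:ℝ) ≤ L := by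
    have := ht₀le
    rw [le_min_iff] at this
    simp only [hL]; linarith [this.1, this.2]
  have hcont : ContinuousOn δ (Icc 0 L) := by
    refine LipschitzOnWith.continuousOn (K := 1) ?_
    rw [lipschitzOnWith_iff_dist_le_mul]
    intro x hx y hy
    rw [NNReal.coe_one, one_mul, Real.dist_eq]
    rcases le_total x y with h | h
    · calc dist (δ x) (δ y) ≤ y - x := hlip x hx y hy h
        _ ≤ |x - y| := by rw [abs_sub_comm, abs_of_nonneg (by linarith)]
    · calc dist (δ x) (δ y) = dist (δ y) (δ x) := dist_comm _ _
        _ ≤ x - y := hlip y hy x hx h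
        _ ≤ |x - y| := le_abs_self _
  have hcross : ∀ s t, 0 ≤ s → s ≤ ℓ₁ - t₀ → ℓ₁ - t₀ < t → t ≤ L →
      γ₁ (ℓ₁ - s) = γ₂ (t - (ℓ₁ - t₀) + t₀) → False := by
    intro s t hs0 hs1 ht1 ht2 heq
    set c := t - (ℓ₁ - t₀) + t₀ with hc
    have hcmem : c ∈ Icc (0:ℝ) ℓ₂ := harg2 t (le_of_lt ht1) ht2
    have d1 : dist a (γ₁ (ℓ₁ - s)) = ℓ₁ - s := geo_dist_left hM (harg1 s hs0 hs1)
    have d2 : dist a (γ₂ c) = c := geo_dist_left hM hcmem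
    have hsc : ℓ₁ - s = c := by rw [← d1, ← d2, heq]
    have hcT : c ∈ T := by
      refine ⟨⟨hcmem.1, le_min (by linarith) hcmem.2⟩, ?_⟩
      have h5 : γ₁ c = γ₁ (ℓ₁ - s) := by rw [hsc]
      rw [h5, heq]
    have : c ≤ t₀ := le_csSup hTbdd hcT
    simp only [hc] at this
    linarith
  have hinj : Set.InjOn δ (Icc (0:ℝ) L) := by
    intro x hx y hy hxy
    by_cases h1 : x ≤ ℓ₁ - t₀ <;> by_cases h2 : y ≤ ℓ₁ - t₀
    · simp only [hδ, if_pos h1, if_pos h2] at hxy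
      have h6 := geo_isom hM a u _ (harg1 x hx.1 h1) _ (harg1 y hy.1 h2)
      rw [← hγ₁, hxy, dist_self] at h6
      have := abs_eq_zero.mp h6.symm
      linarith
    · push_neg at h2
      simp only [hδ, if_pos h1, if_neg (not_le.mpr h2)] at hxy
      exact absurd hxy (fun h => hcross x y hx.1 h1 h2 hy.2 h)
    · push_neg at h1
      simp only [hδ, if_neg (not_le.mpr h1), if_pos h2] at hxy
      exact absurd hxy.symm (fun h => hcross y x hy.1 h2 h1 hx.2 h)
    · push_neg at h1 h2
      simp only [hδ, if_neg (not_le.mpr h1), if_neg (not_le.mpr h2)] at hxy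
      have h6 := geo_isom hM a v _ (harg2 x (le_of_lt h1) hx.2) _ (harg2 y (le_of_lt h2) hy.2)
      rw [← hγ₂, hxy, dist_self] at h6
      have := abs_eq_zero.mp h6.symm
      linarith
  have hδ0 : δ 0 = u := by
    have h1 : ℓ₁ - t₀ ≥ 0 := by linarith [ht₀1.2]
    simp only [hδ, if_pos h1]
    rw [sub_zero, hγ₁, hℓ₁, geo_last]
  have hδL : δ L = v := by
    by_cases hc : L ≤ ℓ₁ - t₀
    · have h2 : ℓ₂ = t₀ := by simp only [hL] at hc; linarith [ht₀2.2]
      simp only [hδ, if_pos hc]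
      have hLv : ℓ₁ - L = t₀ := by simp only [hL]; linarith
      rw [hLv, hmeet, ← h2, hγ₂, hℓ₂, geo_last]
    · simp only [hδ, if_neg hc]
      have h7 : L - (ℓ₁ - t₀) + t₀ = ℓ₂ := by simp only [hL]; ring
      rw [h7, hγ₂, hℓ₂, geo_last]
  have harc : IsArcFromTo (δ '' Icc 0 L) u v :=
    ⟨L, hLnn, δ, hcont, hinj, hδ0, hδL, rfl⟩
  have himg := geo_unique hM u v _ harc
  have hmmem : γ₁ t₀ ∈ geo hM u v '' Icc 0 (dist u v) := by
    rw [← himg]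
    refine ⟨ℓ₁ - t₀, ⟨by linarith [ht₀1.2], by simp only [hL]; linarith [ht₀2.2]⟩, ?_⟩
    simp only [hδ, if_pos le_rfl]
    congr 1
    ring
  exact ((geo_mem_dist hM hmmem).2).symm


/-- helper: one-sided 0-hyperbolicity -/
lemma hyp_aux {b u v w m₁ m₂ : M}
    (h1u : dist b u = dist b m₁ + dist m₁ u) (h1v : dist b v = dist b m₁ + dist m₁ v)
    (h1uv : dist u v = dist u m₁ + dist m₁ v)
    (h2v : dist b v = dist b m₂ + dist m₂ v) (h2w : dist b w = dist b m₂ + dist m₂ w)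
    (hle : dist b m₁ ≤ dist b m₂) :
    dist b u + dist b v - dist u v ≤ dist b u + dist b w - dist u w := by
  have hbet1 : dist b m₁ + dist m₁ v = dist b v := h1v.symm
  have hbet2 : dist b m₂ + dist m₂ v = dist b v := h2v.symm
  have h12 : dist m₁ m₂ = |dist b m₁ - dist b m₂| := dist_between hM hbet1 hbet2
  rw [abs_of_nonpos (by linarith)] at h12
  have htri : dist u w ≤ dist u m₁ + dist m₁ m₂ + dist m₂ w := dist_triangle4 u m₁ m₂ w
  linarith

/-- 0-hyperbolicity: the Gromov product inequality. -/
lemma gromov_hyp (b u v w : M) :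
    min (dist b u + dist b v - dist u v) (dist b v + dist b w - dist v w)
      ≤ dist b u + dist b w - dist u w := by
  obtain ⟨m₁, h1u, h1v, h1uv⟩ := median hM b u v
  obtain ⟨m₂, h2v, h2w, h2vw⟩ := median hM b v w
  rcases le_total (dist b m₁) (dist b m₂) with h | h
  · calc min _ _ ≤ dist b u + dist b v - dist u v := min_le_left _ _
      _ ≤ _ := hyp_aux hM h1u h1v h1uv h2v h2w h
  · have h2wv : dist w v = dist w m₂ + dist m₂ v := by
      rw [dist_comm w v, dist_comm w m₂, dist_comm m₂ v]
      linarith [h2vw]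
    have key : dist b w + dist b v - dist w v ≤ dist b w + dist b u - dist w u :=
      hyp_aux hM h2w h2v h2wv h1v h1u h
    have e1 : dist v w = dist w v := dist_comm v w
    have e2 : dist u w = dist w u := dist_comm u w
    calc min _ _ ≤ dist b v + dist b w - dist v w := min_le_right _ _
      _ ≤ dist b u + dist b w - dist u w := by rw [e1, e2]; linarith

lemma geo_continuousOn (a b : M) : ContinuousOn (geo hM a b) (Icc 0 (dist a b)) := by
  refine LipschitzOnWith.continuousOn (K := 1) ?_
  rw [lipschitzOnWith_iff_dist_le_mul]
  intro x hx y hy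
  rw [geo_isom hM a b x hx y hy, Real.dist_eq, NNReal.coe_one, one_mul]

/-- Points beyond a nontrivial common initial piece are in the same branch. -/
lemma comp_eq_of_between {b m u : M}
    (hb : dist b m + dist m u = dist b u) (hm : m ≠ b) :
    connectedComponentIn ({b} : Set M)ᶜ u = connectedComponentIn ({b} : Set M)ᶜ m := by
  have hbm : 0 < dist b m := dist_pos.mpr (Ne.symm hm)
  have hmu : dist b m ≤ dist b u := by linarith [dist_nonneg (x := m) (y := u)]
  set S : Set M := geo hM b u '' Icc (dist b m) (dist b u) with hS
  have hsub : Icc (dist b m) (dist b u) ⊆ Icc 0 (dist b u) :=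
    Icc_subset_Icc (le_of_lt hbm) le_rfl
  have hSpre : IsPreconnected S :=
    (isPreconnected_Icc).image _ ((geo_continuousOn hM b u).mono hsub)
  have hmS : m ∈ S := ⟨dist b m, ⟨le_rfl, hmu⟩, between_mem_geo hM hb⟩
  have huS : u ∈ S := ⟨dist b u, ⟨hmu, le_rfl⟩, geo_last hM b u⟩
  have hSsub : S ⊆ ({b} : Set M)ᶜ := by
    rintro _ ⟨t, ht, rfl⟩
    have hd : dist b (geo hM b u t) = t := geo_dist_left hM (hsub ht)
    intro hmem
    rw [mem_singleton_iff] at hmem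
    rw [hmem, dist_self] at hd
    linarith [ht.1]
  have := hSpre.subset_connectedComponentIn hmS hSsub
  exact (connectedComponentIn_eq (this huS)).symm

/-- Positive Gromov product: same branch. -/
lemma comp_eq_of_gp_pos {b u v : M} (h : 0 < dist b u + dist b v - dist u v)
    (hu : u ≠ b) (hv : v ≠ b) :
    connectedComponentIn ({b} : Set M)ᶜ u = connectedComponentIn ({b} : Set M)ᶜ v := by
  obtain ⟨m, hmu, hmv, hmuv⟩ := median hM b u v
  have hdm : 0 < dist b m := by
    have hcomm : dist u m = dist m u := dist_comm u m
    linarith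
  have hm : m ≠ b := by
    intro hh
    rw [hh, dist_self] at hdm
    exact lt_irrefl 0 hdm
  rw [comp_eq_of_between hM hmu.symm hm, comp_eq_of_between hM hmv.symm hm]

/-- Gromov products are nonnegative. -/
lemma gp_nonneg (b u v : M) : 0 ≤ dist b u + dist b v - dist u v := by
  have := dist_triangle u b v
  rw [dist_comm u b] at this
  linarith

/-- Exact additivity through `b` separates branches. -/
lemma comp_ne_of_add {b u v : M} (hadd : dist u v = dist b u + dist b v)
    (hu : u ≠ b) (hv : v ≠ b) :
    connectedComponentIn ({b} : Set M)ᶜ u ≠ connectedComponentIn ({b} : Set M)ᶜ v := by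
  intro heq
  have hucompl : u ∈ ({b} : Set M)ᶜ := by simpa using hu
  have hvcompl : v ∈ ({b} : Set M)ᶜ := by simpa using hv
  set C := connectedComponentIn ({b} : Set M)ᶜ v with hC
  have huC : u ∈ C := heq ▸ mem_connectedComponentIn hucompl
  have hvC : v ∈ C := mem_connectedComponentIn hvcompl
  have hCpre : IsPreconnected C := isPreconnected_connectedComponentIn
  have hCsub : C ⊆ ({b} : Set M)ᶜ := connectedComponentIn_subset _ _
  set U₁ : Set M := {w | dist u w < dist b u + dist b w} with hU₁
  set U₂ : Set M := {w | w ≠ b ∧ dist b u + dist b w ≤ dist u w} with hU₂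
  have hU₁open : IsOpen U₁ :=
    isOpen_lt (continuous_const.dist continuous_id)
      (continuous_const.add (continuous_const.dist continuous_id))
  have hU₂open : IsOpen U₂ := by
    rw [Metric.isOpen_iff]
    intro w hw
    refine ⟨dist b w, dist_pos.mpr (fun h => hw.1 h.symm), fun w' hw' => ?_⟩
    rw [mem_ball, dist_comm] at hw'
    have hw'b : w' ≠ b := by
      intro h
      rw [h] at hw'
      rw [dist_comm] at hw'
      linarith
    have hsecond : 0 < dist b w' + dist b w - dist w' w := by
      have h1 := dist_triangle b w' w
      have hcm : dist w' w = dist w w' := dist_comm w' w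
      linarith
    have hyp := gromov_hyp hM b u w' w
    have hle0 : dist b u + dist b w - dist u w ≤ 0 := by linarith [hw.2]
    have hfirst : dist b u + dist b w' - dist u w' ≤ 0 := by
      rcases min_le_iff.mp (le_trans hyp hle0) with h | h
      · exact h
      · linarith
    exact ⟨hw'b, by linarith⟩
  have hcover : C ⊆ U₁ ∪ U₂ := by
    intro w hw
    have hwb : w ≠ b := by simpa using hCsub hw
    rcases lt_or_ge (dist u w) (dist b u + dist b w) with h | h
    · exact Or.inl h
    · exact Or.inr ⟨hwb, h⟩
  have hne := hCpre U₁ U₂ hU₁open hU₂open hcover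
    ⟨u, huC, by
      show dist u u < dist b u + dist b u
      rw [dist_self]
      have : 0 < dist b u := dist_pos.mpr (Ne.symm hu)
      linarith⟩
    ⟨v, hvC, hv, le_of_eq hadd.symm⟩
  obtain ⟨z, _, hz₁, hz₂⟩ := hne
  exact absurd hz₂.2 (not_le.mpr hz₁)


lemma bc_of_rich {p : M} {r : ℝ} (hrad : ∀ x : M, dist p x ≤ r)
    (hrich : Dense {b : M | ThreeBranchesGE b (r - dist p b)}) :
    ∀ x : M, ∀ ε : ℝ, 0 < ε → ∃ y₁ y₂ y₃ : M,
      |dist x y₁ - (r - dist p x)| ≤ ε ∧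
      |dist x y₂ - (r - dist p x)| ≤ ε ∧
      |dist x y₃ - (r - dist p x)| ≤ ε ∧
      dist x y₁ + dist x y₂ - dist y₁ y₂ ≤ ε ∧
      dist x y₁ + dist x y₃ - dist y₁ y₃ ≤ ε ∧
      dist x y₂ + dist x y₃ - dist y₂ y₃ ≤ ε := by
  intro x ε hε
  obtain ⟨b, hball, hbS⟩ := (Metric.dense_iff.mp hrich) x (ε/4) (by linarith)
  rw [mem_ball] at hball
  have hxb : dist x b < ε/4 := by rw [dist_comm]; exact hball
  set H := r - dist p b with hH
  have hH0 : 0 ≤ H := by have := hrad b; linarith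
  obtain ⟨β₁, β₂, β₃, hβ₁, hβ₂, hβ₃, h12, h13, h23, hh₁, hh₂, hh₃⟩ := hbS
  -- pick far points in each branch
  obtain ⟨y₁, hy₁β, hy₁d⟩ := hh₁ (H - ε/4) (by linarith)
  obtain ⟨y₂, hy₂β, hy₂d⟩ := hh₂ (H - ε/4) (by linarith)
  obtain ⟨y₃, hy₃β, hy₃d⟩ := hh₃ (H - ε/4) (by linarith)
  -- truncated points
  set f : M → M := fun y => geo hM b y (min (dist b y) H) with hf
  have hmem : ∀ y : M, min (dist b y) H ∈ Icc 0 (dist b y) := fun y =>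
    ⟨le_min dist_nonneg hH0, min_le_left _ _⟩
  have hdb : ∀ y : M, dist b (f y) = min (dist b y) H := fun y => geo_dist_left hM (hmem y)
  have hdy : ∀ y : M, dist (f y) y = dist b y - min (dist b y) H := fun y =>
    geo_dist_right hM (hmem y)
  -- branch identification for truncated points (when H > 0)
  have hbranch : ∀ (β : Set M) (y : M), β ∈ Branches b → y ∈ β → 0 < H →
      f y ∈ β ∧ connectedComponentIn ({b} : Set M)ᶜ (f y) = β := by
    intro β y hβ hy hHpos
    obtain ⟨x₀, hx₀, rfl⟩ := hβ
    have hyb : y ≠ b := by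
      have := connectedComponentIn_subset (({b} : Set M)ᶜ) x₀ hy
      simpa using this
    have hdby : 0 < dist b y := dist_pos.mpr (Ne.symm hyb)
    have htpos : 0 < min (dist b y) H := lt_min hdby hHpos
    have hfyb : f y ≠ b := by
      rw [← dist_pos, dist_comm, hdb]
      exact htpos
    have hbet : dist b (f y) + dist (f y) y = dist b y := by rw [hdb, hdy]; ring
    have hcomp : connectedComponentIn ({b} : Set M)ᶜ y
        = connectedComponentIn ({b} : Set M)ᶜ (f y) := comp_eq_of_between hM hbet hfyb
    have hβy : connectedComponentIn ({b} : Set M)ᶜ x₀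
        = connectedComponentIn ({b} : Set M)ᶜ y := connectedComponentIn_eq hy
    rw [hβy, hcomp]
    exact ⟨mem_connectedComponentIn (by simpa using hfyb), rfl⟩
  -- the pairwise additivity bound
  have hadd : ∀ (β β' : Set M) (y y' : M), β ∈ Branches b → β' ∈ Branches b → β ≠ β' →
      y ∈ β → y' ∈ β' →
      min (dist b y) H + min (dist b y') H ≤ dist (f y) (f y') := by
    intro β β' y y' hβ hβ' hne hy hy'
    rcases eq_or_lt_of_le hH0 with hH0' | hHpos
    · have e1 : min (dist b y) H = 0 := by rw [← hH0']; exact min_eq_right dist_nonneg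
      have e2 : min (dist b y') H = 0 := by rw [← hH0']; exact min_eq_right dist_nonneg
      rw [e1, e2]
      simpa using dist_nonneg
    · obtain ⟨hfy, hcy⟩ := hbranch β y hβ hy hHpos
      obtain ⟨hfy', hcy'⟩ := hbranch β' y' hβ' hy' hHpos
      have hfyb : f y ≠ b := by
        rw [← dist_pos, dist_comm, hdb]
        refine lt_min (dist_pos.mpr ?_) hHpos
        intro h
        obtain ⟨x₀, hx₀, rfl⟩ := hβ
        have := connectedComponentIn_subset (({b} : Set M)ᶜ) x₀ hy
        rw [← h] at this
        simpa using this
      have hfy'b : f y' ≠ b := by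
        rw [← dist_pos, dist_comm, hdb]
        refine lt_min (dist_pos.mpr ?_) hHpos
        intro h
        obtain ⟨x₀, hx₀, rfl⟩ := hβ'
        have := connectedComponentIn_subset (({b} : Set M)ᶜ) x₀ hy'
        rw [← h] at this
        simpa using this
      by_contra hcon
      push_neg at hcon
      rw [← hdb y, ← hdb y'] at hcon
      have hgp : 0 < dist b (f y) + dist b (f y') - dist (f y) (f y') := by linarith
      have := comp_eq_of_gp_pos hM hgp hfyb hfy'b
      rw [hcy, hcy'] at this
      exact hne this
  -- distance bounds
  have hdistb : ∀ y : M, H - ε/4 < dist b y → |dist x (f y) - (r - dist p x)| ≤ ε := by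
    intro y hy
    have h1 : dist x (f y) ≤ dist x b + dist b (f y) := dist_triangle _ _ _
    have h2 : dist b (f y) ≤ dist x (f y) + dist x b := by
      have := dist_triangle b x (f y)
      rw [dist_comm b x] at this
      linarith
    have h3 : dist b (f y) = min (dist b y) H := hdb y
    have h4 : H - ε/4 ≤ min (dist b y) H := le_min (by linarith) (by linarith)
    have h5 : min (dist b y) H ≤ H := min_le_right _ _
    have h6 : dist p b ≤ dist p x + dist x b := dist_triangle _ _ _
    have h7 : dist p x ≤ dist p b + dist x b := by
      have := dist_triangle p b x
      rw [dist_comm b x] at this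
      linarith
    rw [abs_le]
    constructor <;> simp only [hH] at * <;> linarith
  refine ⟨f y₁, f y₂, f y₃, hdistb y₁ hy₁d, hdistb y₂ hy₂d, hdistb y₃ hy₃d, ?_, ?_, ?_⟩
  · have := hadd β₁ β₂ y₁ y₂ hβ₁ hβ₂ h12 hy₁β hy₂β
    have e1 : dist x (f y₁) ≤ dist x b + min (dist b y₁) H := by
      have := dist_triangle x b (f y₁); rw [hdb] at this; linarith
    have e2 : dist x (f y₂) ≤ dist x b + min (dist b y₂) H := by
      have := dist_triangle x b (f y₂); rw [hdb] at this; linarith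
    linarith
  · have := hadd β₁ β₃ y₁ y₃ hβ₁ hβ₃ h13 hy₁β hy₃β
    have e1 : dist x (f y₁) ≤ dist x b + min (dist b y₁) H := by
      have := dist_triangle x b (f y₁); rw [hdb] at this; linarith
    have e2 : dist x (f y₃) ≤ dist x b + min (dist b y₃) H := by
      have := dist_triangle x b (f y₃); rw [hdb] at this; linarith
    linarith
  · have := hadd β₂ β₃ y₂ y₃ hβ₂ hβ₃ h23 hy₂β hy₃β
    have e1 : dist x (f y₂) ≤ dist x b + min (dist b y₂) H := by
      have := dist_triangle x b (f y₂); rw [hdb] at this; linarith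
    have e2 : dist x (f y₃) ≤ dist x b + min (dist b y₃) H := by
      have := dist_triangle x b (f y₃); rw [hdb] at this; linarith
    linarith


/-- Key step: from the branching condition, every point `b` with `d(p,b) < r` and any
point `y ≠ b` gives full height of the branch of `y` at `b`. -/
lemma height_of_bc {p : M} {r : ℝ}
    (hbc : ∀ x : M, ∀ ε : ℝ, 0 < ε → ∃ y₁ y₂ y₃ : M,
      |dist x y₁ - (r - dist p x)| ≤ ε ∧
      |dist x y₂ - (r - dist p x)| ≤ ε ∧
      |dist x y₃ - (r - dist p x)| ≤ ε ∧
      dist x y₁ + dist x y₂ - dist y₁ y₂ ≤ ε ∧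
      dist x y₁ + dist x y₃ - dist y₁ y₃ ≤ ε ∧
      dist x y₂ + dist x y₃ - dist y₂ y₃ ≤ ε)
    {b y : M} (hby : 0 < dist b y) (hHb : 0 < r - dist p b) :
    HeightGE b (connectedComponentIn (({b} : Set M)ᶜ) y) (r - dist p b) := by
  intro h' hh'
  set Hb := r - dist p b with hHbdef
  set ε₀ := min (min ((Hb - h')/4) (Hb/4)) (dist b y) with hε₀
  have hε₀pos : 0 < ε₀ := by
    refine lt_min (lt_min (by linarith) (by linarith)) hby
  have hε₀1 : ε₀ ≤ (Hb - h')/4 := le_trans (min_le_left _ _) (min_le_left _ _)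
  have hε₀2 : ε₀ ≤ Hb/4 := le_trans (min_le_left _ _) (min_le_right _ _)
  have hε₀3 : ε₀ ≤ dist b y := min_le_right _ _
  obtain ⟨z₁, z₂, z₃, ha₁, ha₂, ha₃, hp12, hp13, hp23⟩ := hbc y ε₀ hε₀pos
  -- choose z with small Gromov product with b at y
  have hchoose : ∃ z : M, |dist y z - (r - dist p y)| ≤ ε₀ ∧
      dist y b + dist y z - dist b z ≤ ε₀ := by
    by_cases hc1 : dist y b + dist y z₁ - dist b z₁ ≤ ε₀
    · exact ⟨z₁, ha₁, hc1⟩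
    · refine ⟨z₂, ha₂, ?_⟩
      by_contra hc2
      push_neg at hc1 hc2
      have hyp := gromov_hyp hM y z₁ b z₂
      have hmin : ε₀ < min (dist y z₁ + dist y b - dist z₁ b)
          (dist y b + dist y z₂ - dist b z₂) := by
        rw [lt_min_iff]
        refine ⟨?_, hc2⟩
        have : dist z₁ b = dist b z₁ := dist_comm _ _
        linarith
      linarith [le_trans hyp hp12, hmin]
  obtain ⟨z, haz, hgz⟩ := hchoose
  have habs := abs_le.mp haz
  have htri : dist p y ≤ dist p b + dist b y := dist_triangle _ _ _
  have hyb : dist y b = dist b y := dist_comm _ _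
  have hdbz : Hb - 2*ε₀ ≤ dist b z := by linarith [habs.1]
  have hzb : z ≠ b := by
    rw [← dist_pos, dist_comm]
    linarith
  have hbney : y ≠ b := by rw [← dist_pos, dist_comm]; exact hby
  have hgp : 0 < dist b y + dist b z - dist y z := by linarith
  have hcomp := comp_eq_of_gp_pos hM hgp hbney hzb
  refine ⟨z, ?_, by linarith⟩
  rw [hcomp]
  exact mem_connectedComponentIn (by simpa using hzb)

lemma rich_of_bc {p : M} {r : ℝ} (hr : 0 < r) (hrad : ∀ x : M, dist p x ≤ r)
    (hbc : ∀ x : M, ∀ ε : ℝ, 0 < ε → ∃ y₁ y₂ y₃ : M,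
      |dist x y₁ - (r - dist p x)| ≤ ε ∧
      |dist x y₂ - (r - dist p x)| ≤ ε ∧
      |dist x y₃ - (r - dist p x)| ≤ ε ∧
      dist x y₁ + dist x y₂ - dist y₁ y₂ ≤ ε ∧
      dist x y₁ + dist x y₃ - dist y₁ y₃ ≤ ε ∧
      dist x y₂ + dist x y₃ - dist y₂ y₃ ≤ ε) :
    Dense {b : M | ThreeBranchesGE b (r - dist p b)} := by
  rw [Metric.dense_iff]
  intro x R hR
  set ρ := min (R/2) (r/2) with hρ
  have hρpos : 0 < ρ := lt_min (by linarith) (by linarith)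
  set t := min (dist p x) ρ with ht
  have htmem : dist p x - t ∈ Icc 0 (dist p x) :=
    ⟨by simp only [ht]; linarith [min_le_left (dist p x) ρ], by
      have : 0 ≤ t := le_min dist_nonneg (le_of_lt hρpos)
      linarith⟩
  set x' := geo hM p x (dist p x - t) with hx'
  have hpx' : dist p x' = dist p x - t := geo_dist_left hM htmem
  have hx'x : dist x' x = t := by
    have := geo_dist_right hM htmem
    rw [← hx'] at this
    rw [this]; ring
  have hH₀ : ρ ≤ r - dist p x' := by
    rw [hpx']
    have h1 : ρ ≤ r/2 := min_le_right _ _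
    rcases min_cases (dist p x) ρ with ⟨he, hle⟩ | ⟨he, hle⟩
    · have h2 : t = dist p x := by rw [ht, he]
      rw [h2]
      linarith
    · have h2 : t = ρ := by rw [ht, he]
      rw [h2]
      linarith [hrad x]
  set ε₁ := ρ/8 with hε₁
  have hε₁pos : 0 < ε₁ := by simp only [hε₁]; linarith
  obtain ⟨y₁, y₂, y₃, ha₁, ha₂, ha₃, hp12, hp13, hp23⟩ := hbc x' ε₁ hε₁pos
  have hb₁ := abs_le.mp ha₁
  have hb₂ := abs_le.mp ha₂
  have hb₃ := abs_le.mp ha₃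
  -- the median of y₁ y₂ y₃
  obtain ⟨b, e12, e13, e23⟩ := median hM y₁ y₂ y₃
  -- the median of x' y₁ y₂
  obtain ⟨m, f1, f2, f12⟩ := median hM x' y₁ y₂
  -- b and m both lie between y₁ and y₂
  have hbm : dist m b = |dist y₁ m - dist y₁ b| := by
    have hmb' : dist y₁ m + dist m y₂ = dist y₁ y₂ := by
      have : dist y₁ m = dist m y₁ := dist_comm _ _
      linarith [f12]
    have hbb' : dist y₁ b + dist b y₂ = dist y₁ y₂ := e12.symm
    exact dist_between hM hmb' hbb'
  have hgp12 : 0 ≤ dist x' y₁ + dist x' y₂ - dist y₁ y₂ := gp_nonneg hM x' y₁ y₂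
  have hgp13 : 0 ≤ dist x' y₁ + dist x' y₃ - dist y₁ y₃ := gp_nonneg hM x' y₁ y₃
  have hgp23 : 0 ≤ dist x' y₂ + dist x' y₃ - dist y₂ y₃ := gp_nonneg hM x' y₂ y₃
  have hcm : dist m y₁ = dist y₁ m := dist_comm _ _
  have hc1b : dist y₁ b = dist b y₁ := dist_comm _ _
  have hc2b : dist y₂ b = dist b y₂ := dist_comm _ _
  have hc3b : dist y₃ b = dist b y₃ := dist_comm _ _
  have hx'b : dist x' b ≤ ε₁ := by
    have h1 : dist x' b ≤ dist x' m + dist m b := dist_triangle _ _ _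
    rcases abs_cases (dist y₁ m - dist y₁ b) with ⟨he, _⟩ | ⟨he, _⟩ <;>
      rw [he] at hbm <;> linarith
  -- basic quantities
  have hpb : dist p b ≤ dist p x' + ε₁ := by
    have := dist_triangle p x' b
    linarith
  have hHb : ρ - ε₁ ≤ r - dist p b := by linarith
  have hHbpos : 0 < r - dist p b := by simp only [hε₁] at *; linarith
  have hd1 : ρ - 2*ε₁ ≤ dist b y₁ := by
    have := dist_triangle x' b y₁
    have h2 : dist x' y₁ ≤ dist x' b + dist b y₁ := this
    linarith
  have hd2 : ρ - 2*ε₁ ≤ dist b y₂ := by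
    have h2 : dist x' y₂ ≤ dist x' b + dist b y₂ := dist_triangle _ _ _
    linarith
  have hd3 : ρ - 2*ε₁ ≤ dist b y₃ := by
    have h2 : dist x' y₃ ≤ dist x' b + dist b y₃ := dist_triangle _ _ _
    linarith
  have hd1pos : 0 < dist b y₁ := by simp only [hε₁] at hd1 ⊢; linarith
  have hd2pos : 0 < dist b y₂ := by simp only [hε₁] at hd2 ⊢; linarith
  have hd3pos : 0 < dist b y₃ := by simp only [hε₁] at hd3 ⊢; linarith
  have hy₁b : y₁ ≠ b := by rw [← dist_pos, dist_comm]; exact hd1pos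
  have hy₂b : y₂ ≠ b := by rw [← dist_pos, dist_comm]; exact hd2pos
  have hy₃b : y₃ ≠ b := by rw [← dist_pos, dist_comm]; exact hd3pos
  -- exact additivity at b
  have hadd12 : dist y₁ y₂ = dist b y₁ + dist b y₂ := by
    have : dist y₁ b = dist b y₁ := dist_comm _ _
    linarith [e12]
  have hadd13 : dist y₁ y₃ = dist b y₁ + dist b y₃ := by
    have : dist y₁ b = dist b y₁ := dist_comm _ _
    linarith [e13]
  have hadd23 : dist y₂ y₃ = dist b y₂ + dist b y₃ := by
    have : dist y₂ b = dist b y₂ := dist_comm _ _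
    linarith [e23]
  refine ⟨b, ?_, ?_⟩
  · rw [mem_ball]
    have : dist b x ≤ dist b x' + dist x' x := dist_triangle _ _ _
    have h2 : dist b x' = dist x' b := dist_comm _ _
    have h3 : t ≤ ρ := min_le_right _ _
    have h4 : ρ ≤ R/2 := min_le_left _ _
    simp only [hε₁] at hx'b
    linarith [hx'x]
  · refine ⟨connectedComponentIn (({b} : Set M)ᶜ) y₁,
      connectedComponentIn (({b} : Set M)ᶜ) y₂,
      connectedComponentIn (({b} : Set M)ᶜ) y₃,
      ⟨y₁, hy₁b, rfl⟩, ⟨y₂, hy₂b, rfl⟩, ⟨y₃, hy₃b, rfl⟩,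
      comp_ne_of_add hM hadd12 hy₁b hy₂b,
      comp_ne_of_add hM hadd13 hy₁b hy₃b,
      comp_ne_of_add hM hadd23 hy₂b hy₃b,
      height_of_bc hM hbc hd1pos hHbpos,
      height_of_bc hM hbc hd2pos hHbpos,
      height_of_bc hM hbc hd3pos hHbpos⟩

end Tree

/-- A complete pointed ℝ-tree of radius ≤ `r` satisfies the
branching condition for radius `r` iff it is richly branching; and in that case
`sup {d(p,x) : x ∈ M} = r`, i.e. the radius is exactly `r`. -/
theorem statement_10 {M : Type*} [MetricSpace M] [CompleteSpace M]
    (r : ℝ) (hr : 0 < r) (hM : IsRTree M) (p : M)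
    (hrad : ∀ x : M, dist p x ≤ r) :
    (BranchingCondition p r ↔ RichlyBranchingAt p r) ∧
      (BranchingCondition p r → IsLUB (Set.range fun x : M => dist p x) r) := by
  refine ⟨⟨fun hbc => rich_of_bc hM hr hrad hbc, fun hrich => bc_of_rich hM hrad hrich⟩,
    fun hbc => ⟨?_, ?_⟩⟩
  · rintro z ⟨x, rfl⟩
    exact hrad x
  · intro c hc
    by_contra hlt
    push_neg at hlt
    obtain ⟨y₁, y₂, y₃, ha₁, -, -, -, -, -⟩ := hbc p ((r - c)/2) (by linarith)
    rw [dist_self] at ha₁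
    have h1 := abs_le.mp ha₁
    have hy : dist p y₁ ≤ c := hc ⟨y₁, rfl⟩
    linarith [h1.1]
end
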